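/- arXiv:2308.01502 — 4 statements merged into one kernel-verified Lean document; each statement's English description precedes it below -/
import Mathlib

section
/- For all r ∈ ℕ ∪ {0} and all s, t ∈ ℕ⁺, there exists Ω = Ω(r,s,t) ∈ ℕ⁺ with the following property. Let G be a graph and let (W,Λ) be an (r,Ω)-web in G. Then one of the following holds: (a) G contains an induced subgraph isomorphic to K_t or to K_{t,t}; or (b) there exists S ⊆ W with |S| = s such that S is a stable set in G, for all three vertices x, y, z ∈ S the vertex x is anticomplete to Λ*_{y,z}, and for all distinct 2-subsets {x,y}, {x',y'} of S the sets Λ*_{x,y} and Λ*_{x',y'} are anticomplete in G. -/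
/-!
Common definitions: anticomplete sets, stable sets, induced paths,
and webs, following the paper's terminology.
-/

variable {V : Type} {α : Type}

/-- Two vertex sets `X` and `Y` are *anticomplete* in `G` if there is no edge of `G`
with an end in `X` and an end in `Y`. -/
def Anticomplete (G : SimpleGraph V) (X Y : Set V) : Prop :=
  ∀ ⦃x⦄, x ∈ X → ∀ ⦃y⦄, y ∈ Y → ¬ G.Adj x y

/-- A *stable set* in `G` is a set of pairwise non-adjacent vertices. -/
def StableSet (G : SimpleGraph V) (S : Set V) : Prop :=
  ∀ ⦃x⦄, x ∈ S → ∀ ⦃y⦄, y ∈ S → ¬ G.Adj x y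

/-- A walk `p` is a *path in `G`* in the sense of the paper: a path which is moreover
an induced subgraph of `G` (no repeated vertices, and every edge of `G` between two
vertices of `p` is an edge of `p`). -/
def IsInducedPath (G : SimpleGraph V) {x y : V} (p : G.Walk x y) : Prop :=
  p.IsPath ∧ ∀ u v, u ∈ p.support → v ∈ p.support → G.Adj u v → s(u, v) ∈ p.edges

/-- The vertex set of a walk. -/
def walkVerts (G : SimpleGraph V) {x y : V} (p : G.Walk x y) : Set V :=
  {v | v ∈ p.support}

/-- The *interior* of a path with ends `x` and `y`: all of its vertices other than
its ends. -/
def walkInterior (G : SimpleGraph V) {x y : V} (p : G.Walk x y) : Set V :=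
  {v | v ∈ p.support} \ {x, y}

/-- `(W, Λ)` is a *web* in `G`: `Λ` assigns to each (ordered, for convenience of
formalization) pair of distinct vertices of `W` a path in `G` between them, the paths
assigned to `(x, y)` and `(y, x)` being reverses of one another (so that `Λ` really
is defined on 2-subsets of `W`), and the paths assigned to distinct 2-subsets
`{x, y}` and `{x', y'}` meet exactly in `{x, y} ∩ {x', y'}`. -/
structure IsWeb (G : SimpleGraph V) (W : Finset V)
    (Λ : ∀ x y : V, x ∈ W → y ∈ W → x ≠ y → G.Walk x y) : Prop where
  path : ∀ x y (hx : x ∈ W) (hy : y ∈ W) (hxy : x ≠ y), IsInducedPath G (Λ x y hx hy hxy)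
  symm : ∀ x y (hx : x ∈ W) (hy : y ∈ W) (hxy : x ≠ y),
    Λ y x hy hx hxy.symm = (Λ x y hx hy hxy).reverse
  inter : ∀ x y x' y' (hx : x ∈ W) (hy : y ∈ W) (hx' : x' ∈ W) (hy' : y' ∈ W)
      (hxy : x ≠ y) (hxy' : x' ≠ y'), ({x, y} : Set V) ≠ {x', y'} →
      walkVerts G (Λ x y hx hy hxy) ∩ walkVerts G (Λ x' y' hx' hy' hxy') =
        ({x, y} : Set V) ∩ {x', y'}

/-! ## Auxiliary definitions -/

section Web

open Classical

variable (G : SimpleGraph V) (W : Finset V)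
  (Λ : ∀ x y : V, x ∈ W → y ∈ W → x ≠ y → G.Walk x y)

/-- The `n`-th vertex on the path from `x` to `y` (junk value if not a pair of `W`). -/
noncomputable def pairVtx (x y : V) (n : ℕ) : V :=
  if h : x ∈ W ∧ y ∈ W ∧ x ≠ y then (Λ x y h.1 h.2.1 h.2.2).support.getD n x else x

/-- The `a`-th interior vertex (0-indexed) of the path between `m i` and `m j`. -/
noncomputable def ivV (m : ℕ → V) (i j a : ℕ) : V :=
  pairVtx G W Λ (m i) (m j) (a+1)

/-- The length of the path from `x` to `y`. -/
noncomputable def pairLen (x y : V) : ℕ :=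
  if h : x ∈ W ∧ y ∈ W ∧ x ≠ y then (Λ x y h.1 h.2.1 h.2.2).length else 0

/-- Descriptors of "slot" vertices relative to a 4-tuple of web vertices. -/
abbrev DescR (r : ℕ) : Type := Fin 4 ⊕ (Fin 4 × Fin 4 × Fin (r+1))

/-- The vertex described by a descriptor, relative to a 4-tuple `v4`. -/
noncomputable def descV (r : ℕ) (v4 : Fin 4 → V) : DescR r → V
  | Sum.inl p => v4 p
  | Sum.inr (p₁, p₂, a) => pairVtx G W Λ (v4 p₁) (v4 p₂) ((a : ℕ) + 1)

/-- The "color" of a 4-tuple: lengths of paths between its members, and the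
adjacency pattern between all the slot vertices. -/
noncomputable def colOf (r : ℕ) (v4 : Fin 4 → V) :
    (Fin 4 → Fin 4 → Fin (r+3)) × (DescR r → DescR r → Bool) :=
  (fun p q => ⟨min (pairLen G W Λ (v4 p) (v4 q)) (r+2),
      Nat.lt_succ_of_le (Nat.min_le_right _ _)⟩,
   fun d d' => if G.Adj (descV G W Λ r v4 d) (descV G W Λ r v4 d')
      then true else false)

variable {G W Λ} (hweb : IsWeb G W Λ)

section Hlem

variable {x y : V} (hx : x ∈ W) (hy : y ∈ W) (hxy : x ≠ y)

lemma pairVtx_eq (n : ℕ) : pairVtx G W Λ x y n = (Λ x y hx hy hxy).support.getD n x := by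
  rw [pairVtx, dif_pos ⟨hx, hy, hxy⟩]

lemma pairLen_eq : pairLen G W Λ x y = (Λ x y hx hy hxy).length := by
  rw [pairLen, dif_pos ⟨hx, hy, hxy⟩]

include hweb hx hy hxy

lemma mem_interior_iff {v : V} :
    v ∈ walkInterior G (Λ x y hx hy hxy) ↔
      ∃ a : ℕ, a + 2 ≤ pairLen G W Λ x y ∧ v = pairVtx G W Λ x y (a+1) := by
  have hnd : (Λ x y hx hy hxy).support.Nodup := (hweb.path x y hx hy hxy).1.support_nodup
  have hlen : (Λ x y hx hy hxy).support.length = (Λ x y hx hy hxy).length + 1 :=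
    SimpleGraph.Walk.length_support _
  have h0 : (Λ x y hx hy hxy).support[0]'(by omega) = x := by
    have := SimpleGraph.Walk.head_support (Λ x y hx hy hxy)
    rwa [List.head_eq_getElem] at this
  have hL : (Λ x y hx hy hxy).support[(Λ x y hx hy hxy).length]'(by omega) = y := by
    have := SimpleGraph.Walk.getLast_support (Λ x y hx hy hxy)
    rw [List.getLast_eq_getElem] at this
    convert this using 2
    omega
  rw [pairLen_eq hx hy hxy]
  simp only [pairVtx_eq hx hy hxy]
  constructor
  · rintro ⟨hv, hnotend⟩
    simp only [Set.mem_setOf_eq] at hv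
    simp only [Set.mem_insert_iff, Set.mem_singleton_iff, not_or] at hnotend
    obtain ⟨n, hn, hvn⟩ := List.mem_iff_getElem.mp hv
    have hnx : n ≠ 0 := by
      rintro rfl
      exact hnotend.1 (by rw [← hvn, h0])
    have hny : n ≠ (Λ x y hx hy hxy).length := by
      rintro rfl
      exact hnotend.2 (by rw [← hvn, hL])
    refine ⟨n - 1, by omega, ?_⟩
    rw [List.getD_eq_getElem _ _ (by omega : n - 1 + 1 < (Λ x y hx hy hxy).support.length)]
    rw [← hvn]
    congr 1
    omega
  · rintro ⟨a, ha, rfl⟩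
    have hlt : a + 1 < (Λ x y hx hy hxy).support.length := by omega
    rw [List.getD_eq_getElem _ _ hlt]
    constructor
    · exact List.getElem_mem _
    · simp only [Set.mem_insert_iff, Set.mem_singleton_iff, not_or]
      constructor
      · intro h
        have : a + 1 = 0 :=
          (hnd.getElem_inj_iff (hi := hlt) (hj := by omega)).mp (by rw [h, h0])
        omega
      · intro h
        have : a + 1 = (Λ x y hx hy hxy).length :=
          (hnd.getElem_inj_iff (hi := hlt) (hj := by omega)).mp (by rw [h, hL])
        omega

lemma interiorFlip :
    walkInterior G (Λ x y hx hy hxy) = walkInterior G (Λ y x hy hx hxy.symm) := by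
  have hsym := hweb.symm x y hx hy hxy
  ext v
  simp only [walkInterior, Set.mem_diff, Set.mem_setOf_eq, hsym,
    SimpleGraph.Walk.support_reverse, List.mem_reverse, Set.mem_insert_iff,
    Set.mem_singleton_iff]
  tauto

lemma wvtx_not_interior {z : V} (hz : z ∈ W) :
    z ∉ walkInterior G (Λ x y hx hy hxy) := by
  intro h
  obtain ⟨hv, hne⟩ := h
  simp only [Set.mem_setOf_eq] at hv
  simp only [Set.mem_insert_iff, Set.mem_singleton_iff, not_or] at hne
  have hzx : z ≠ x := hne.1
  have hzy : z ≠ y := hne.2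
  have hsetne : ({z, x} : Set V) ≠ {x, y} := by
    intro hset
    have : z ∈ ({x, y} : Set V) := hset ▸ Or.inl rfl
    rcases this with h' | h'
    · exact hzx h'
    · exact hzy h'
  have hint := hweb.inter z x x y hz hx hx hy hzx hxy hsetne
  have hzmem : z ∈ walkVerts G (Λ z x hz hx hzx) ∩ walkVerts G (Λ x y hx hy hxy) :=
    ⟨SimpleGraph.Walk.start_mem_support _, hv⟩
  rw [hint] at hzmem
  rcases hzmem.2 with h' | h'
  · exact hzx h'
  · exact hzy h'

lemma interior_disjoint {x' y' : V} (hx' : x' ∈ W) (hy' : y' ∈ W) (hxy' : x' ≠ y')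
    (hne : ({x, y} : Set V) ≠ {x', y'}) {v : V}
    (h1 : v ∈ walkInterior G (Λ x y hx hy hxy))
    (h2 : v ∈ walkInterior G (Λ x' y' hx' hy' hxy')) : False := by
  have hint := hweb.inter x y x' y' hx hy hx' hy' hxy hxy' hne
  have hv : v ∈ walkVerts G (Λ x y hx hy hxy) ∩ walkVerts G (Λ x' y' hx' hy' hxy') :=
    ⟨h1.1, h2.1⟩
  rw [hint] at hv
  exact h1.2 hv.1

end Hlem

end Web


/-- Chain-building step for hypergraph Ramsey. -/
theorem myRamseyAux (k : ℕ) (κ : Type) [Fintype κ]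
    (IH : ∀ mo : ℕ, ∃ N : ℕ, ∀ f : Finset ℕ → κ, ∀ S : Finset ℕ, N ≤ S.card →
      ∃ T, T ⊆ S ∧ mo ≤ T.card ∧ ∃ c₀, ∀ A ⊆ T, A.card = k → f A = c₀) (L : ℕ) :
    ∃ N : ℕ, ∀ f : Finset ℕ → κ, ∀ S : Finset ℕ, N ≤ S.card →
      ∃ T, T ⊆ S ∧ T.card = L ∧ ∃ c : ℕ → κ,
        ∀ A ⊆ T, A.card = k + 1 → ∀ (hA : A.Nonempty), f A = c (A.min' hA) := by
  induction L with
  | zero =>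
      refine ⟨0, fun f S _ => ⟨∅, Finset.empty_subset S, rfl, fun _ => f ∅,
        fun A hA hcard hne => absurd (Finset.subset_empty.mp hA) hne.ne_empty⟩⟩
  | succ L ihL =>
      obtain ⟨NL, hNL⟩ := ihL
      obtain ⟨NO, hNO⟩ := IH NL
      refine ⟨NO + 1, fun f S hS => ?_⟩
      have hSne : S.Nonempty := Finset.card_pos.mp (by omega)
      set a := S.min' hSne with ha
      have haS : a ∈ S := S.min'_mem hSne
      have hcard' : NO ≤ (S.erase a).card := by
        rw [Finset.card_erase_of_mem haS]; omega
      obtain ⟨T₀, hT₀sub, hT₀card, c₀, hc₀⟩ := hNO (fun A => f (insert a A)) (S.erase a) hcard'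
      obtain ⟨T'', hT''sub, hT''card, c', hc'⟩ := hNL f T₀ hT₀card
      have haT'' : a ∉ T'' := fun h => (Finset.ne_of_mem_erase (hT₀sub (hT''sub h))) rfl
      refine ⟨insert a T'', ?_, ?_, fun x => if x = a then c₀ else c' x, ?_⟩
      · intro x hx
        rcases Finset.mem_insert.mp hx with rfl | hx
        · exact haS
        · exact Finset.mem_of_mem_erase (hT₀sub (hT''sub hx))
      · rw [Finset.card_insert_of_notMem haT'', hT''card]
      · intro A hA hAcard hAne
        by_cases haA : a ∈ A
        · have hmin : A.min' hAne = a := by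
            refine le_antisymm (A.min'_le a haA) (Finset.le_min' _ _ _ fun y hy => ?_)
            have : y ∈ S := by
              rcases Finset.mem_insert.mp (hA hy) with rfl | h
              · exact haS
              · exact Finset.mem_of_mem_erase (hT₀sub (hT''sub h))
            exact S.min'_le y this
          have hAer : A.erase a ⊆ T₀ := by
            intro x hx
            have hxA := Finset.mem_of_mem_erase hx
            rcases Finset.mem_insert.mp (hA hxA) with rfl | h
            · exact absurd rfl (Finset.ne_of_mem_erase hx)
            · exact hT''sub h
          have : f (insert a (A.erase a)) = c₀ := by
            apply hc₀ _ hAer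
            rw [Finset.card_erase_of_mem haA, hAcard]
            omega
          rw [Finset.insert_erase haA] at this
          rw [hmin, this]
          simp
        · have hAT'' : A ⊆ T'' := fun x hx => by
            rcases Finset.mem_insert.mp (hA hx) with rfl | h
            · exact absurd hx haA
            · exact h
          have hne : A.min' hAne ≠ a := fun h => haA (h ▸ A.min'_mem hAne)
          rw [hc' A hAT'' hAcard hAne]
          simp [hne]

/-- Hypergraph Ramsey: monochromatic subsets for colorings of `k`-subsets of `ℕ`. -/
theorem myRamsey (k : ℕ) (κ : Type) [Fintype κ] (mo : ℕ) :
    ∃ N : ℕ, ∀ f : Finset ℕ → κ, ∀ S : Finset ℕ, N ≤ S.card →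
      ∃ T, T ⊆ S ∧ mo ≤ T.card ∧ ∃ c₀, ∀ A ⊆ T, A.card = k → f A = c₀ := by
  induction k generalizing mo with
  | zero =>
      refine ⟨mo, fun f S hS => ⟨S, le_refl S, hS, f ∅, fun A hA hcard => ?_⟩⟩
      rw [Finset.card_eq_zero.mp hcard]
  | succ k ihk =>
      obtain ⟨N, hN⟩ := myRamseyAux k κ ihk (Fintype.card κ * mo + 1)
      classical
      refine ⟨N, fun f S hS => ?_⟩
      obtain ⟨T', hT'sub, hT'card, c, hc⟩ := hN f S hS
      haveI : Nonempty κ := ⟨f ∅⟩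
      have hmaps : ∀ x ∈ T', c x ∈ (Finset.univ : Finset κ) := fun x _ => Finset.mem_univ _
      have hlt : (Finset.univ : Finset κ).card * (mo - 1) < T'.card := by
        rw [hT'card, Finset.card_univ]
        calc Fintype.card κ * (mo - 1) ≤ Fintype.card κ * mo := by
              exact Nat.mul_le_mul_left _ (Nat.sub_le _ _)
          _ < Fintype.card κ * mo + 1 := Nat.lt_succ_self _
      obtain ⟨y, _, hy⟩ := Finset.exists_lt_card_fiber_of_mul_lt_card_of_maps_to hmaps hlt
      refine ⟨T'.filter (fun x => c x = y), fun x hx => hT'sub (Finset.mem_filter.mp hx).1,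
        by omega, y, fun A hA hAcard => ?_⟩
      have hAne : A.Nonempty := Finset.card_pos.mp (by omega)
      have h1 : f A = c (A.min' hAne) :=
        hc A (fun x hx => (Finset.mem_filter.mp (hA hx)).1) hAcard hAne
      have h2 : c (A.min' hAne) = y := (Finset.mem_filter.mp (hA (A.min'_mem hAne))).2
      rw [h1, h2]


section Pure

variable {V : Type}

lemma genClique {t : ℕ} (G : SimpleGraph V) (u : Fin t → V)
    (hadj : ∀ k l, k ≠ l → G.Adj (u k) (u l)) :
    Nonempty ((⊤ : SimpleGraph (Fin t)) ↪g G) := by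
  refine ⟨⟨⟨u, fun k l h => ?_⟩, @fun a b => ?_⟩⟩
  · by_contra hne
    exact (G.ne_of_adj (hadj k l hne)) h
  · simp only [SimpleGraph.top_adj]
    constructor
    · intro h hab
      exact G.irrefl (hab ▸ h)
    · exact hadj a b

lemma genBiclique {t : ℕ} (G : SimpleGraph V) (u w : Fin t → V)
    (hcross : ∀ k l, G.Adj (u k) (w l))
    (hu : ∀ k l, ¬ G.Adj (u k) (u l)) (hw : ∀ k l, ¬ G.Adj (w k) (w l))
    (hune : ∀ k l, k ≠ l → u k ≠ u l) (hwne : ∀ k l, k ≠ l → w k ≠ w l) :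
    Nonempty (completeBipartiteGraph (Fin t) (Fin t) ↪g G) := by
  refine ⟨⟨⟨Sum.elim u w, ?_⟩, @fun a b => ?_⟩⟩
  · rintro (k|k) (l|l) h <;> simp only [Sum.elim_inl, Sum.elim_inr] at h
    · by_contra hne
      exact hune k l (fun h' => hne (h' ▸ rfl)) h
    · exact absurd h (G.ne_of_adj (hcross k l))
    · exact absurd h.symm (G.ne_of_adj (hcross l k))
    · by_contra hne
      exact hwne k l (fun h' => hne (h' ▸ rfl)) h
  · rcases a with k | k <;> rcases b with l | l <;>
      simp only [Sum.elim_inl, Sum.elim_inr, completeBipartiteGraph, Sum.isLeft_inl,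
        Sum.isRight_inl, Sum.isLeft_inr, Sum.isRight_inr]
    · constructor
      · intro h; exact absurd h (hu k l)
      · simp
    · constructor
      · intro _; simp
      · intro _; exact hcross k l
    · constructor
      · intro _; simp
      · intro _; exact (hcross l k).symm
    · constructor
      · intro h; exact absurd h (hw k l)
      · simp

end Pure


lemma sortImage {g : Fin 4 → ℕ} (hg : StrictMono g) :
    (Finset.image g Finset.univ).sort (· ≤ ·) = List.ofFn g := by
  have h1 : (List.ofFn g).toFinset = Finset.image g Finset.univ := by
    ext x
    simp only [List.mem_toFinset, List.mem_ofFn, Set.mem_range, Finset.mem_image,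
      Finset.mem_univ, true_and]
  rw [← h1]
  exact (List.toFinset_sort (· ≤ ·) (List.nodup_ofFn.mpr hg.injective)).mpr
    (List.sortedLE_ofFn_iff.mpr hg.monotone).pairwise

def mk4 {α : Type*} (a b c d : α) : Fin 4 → α := ![a, b, c, d]

@[simp] lemma mk4_zero {α : Type*} (a b c d : α) : mk4 a b c d 0 = a := rfl
@[simp] lemma mk4_one {α : Type*} (a b c d : α) : mk4 a b c d 1 = b := rfl
@[simp] lemma mk4_two {α : Type*} (a b c d : α) : mk4 a b c d 2 = c := rfl
@[simp] lemma mk4_three {α : Type*} (a b c d : α) : mk4 a b c d 3 = d := rfl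

lemma bnd4 {X a b c d : ℕ} (h1 : a ≤ X) (h2 : b ≤ X) (h3 : c ≤ X) (h4 : d ≤ X) :
    ∀ p : Fin 4, mk4 a b c d p ≤ X := by
  intro p
  fin_cases p <;> simpa [mk4]

lemma sm4 {α : Type*} [Preorder α] {a b c d : α} (h1 : a < b) (h2 : b < c) (h3 : c < d) :
    StrictMono (mk4 a b c d) := by
  intro i j hij
  fin_cases i <;> fin_cases j <;>
    first
      | exact absurd hij (by decide)
      | simpa [mk4] using h1
      | simpa [mk4] using h2
      | simpa [mk4] using h3
      | simpa [mk4] using h1.trans h2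
      | simpa [mk4] using h2.trans h3
      | simpa [mk4] using (h1.trans h2).trans h3

section Aux

open Classical

variable {V : Type}

lemma auxMain (r s t : ℕ) (hs : 0 < s) (ht : 0 < t)
    (G : SimpleGraph V) (W : Finset V)
    (Λ : ∀ x y : V, x ∈ W → y ∈ W → x ≠ y → G.Walk x y)
    (hweb : IsWeb G W Λ)
    (hr : ∀ x y (hx : x ∈ W) (hy : y ∈ W) (hxy : x ≠ y), (Λ x y hx hy hxy).length ≤ r + 1)
    (m : ℕ → V)
    (hmW : ∀ i, i ≤ s+4*t+5 → m i ∈ W)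
    (hminj : ∀ i j, i ≤ s+4*t+5 → j ≤ s+4*t+5 → m i = m j → i = j)
    (hinv : ∀ q q' : Fin 4 → ℕ, StrictMono q → StrictMono q' →
      (∀ z, q z ≤ s+4*t+5) → (∀ z, q' z ≤ s+4*t+5) →
      colOf G W Λ r (m ∘ q) = colOf G W Λ r (m ∘ q')) :
    (Nonempty ((⊤ : SimpleGraph (Fin t)) ↪g G) ∨
      Nonempty (completeBipartiteGraph (Fin t) (Fin t) ↪g G)) ∨
    ∃ S : Finset V, S ⊆ W ∧ S.card = s ∧
      StableSet G ↑S ∧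
      (∀ x ∈ S, ∀ y ∈ S, ∀ z ∈ S, x ≠ y → x ≠ z →
        ∀ (hy : y ∈ W) (hz : z ∈ W) (hyz : y ≠ z),
          Anticomplete G {x} (walkInterior G (Λ y z hy hz hyz))) ∧
      (∀ x ∈ S, ∀ y ∈ S, ∀ x' ∈ S, ∀ y' ∈ S,
        ∀ (hx : x ∈ W) (hy : y ∈ W) (hx' : x' ∈ W) (hy' : y' ∈ W)
          (hxy : x ≠ y) (hxy' : x' ≠ y'), ({x, y} : Set V) ≠ {x', y'} →
          Anticomplete G (walkInterior G (Λ x y hx hy hxy))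
            (walkInterior G (Λ x' y' hx' hy' hxy'))) := by
  -- basic facts
  have mne : ∀ i j, i ≠ j → i ≤ s+4*t+5 → j ≤ s+4*t+5 → m i ≠ m j := by
    intro i j hij hi hj h
    exact hij (hminj i j hi hj h)
  have pairlen_le : ∀ i j, i ≠ j → i ≤ s+4*t+5 → j ≤ s+4*t+5 →
      pairLen G W Λ (m i) (m j) ≤ r + 1 := by
    intro i j hij hi hj
    rw [pairLen_eq (hmW i hi) (hmW j hj) (mne i j hij hi hj)]
    exact hr _ _ _ _ _
  have pairlen_pos : ∀ i j, i ≠ j → i ≤ s+4*t+5 → j ≤ s+4*t+5 →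
      1 ≤ pairLen G W Λ (m i) (m j) := by
    intro i j hij hi hj
    rw [pairLen_eq (hmW i hi) (hmW j hj) (mne i j hij hi hj)]
    by_contra h
    have h0 : (Λ (m i) (m j) (hmW i hi) (hmW j hj) (mne i j hij hi hj)).length = 0 := by omega
    have := SimpleGraph.Walk.eq_of_length_eq_zero h0
    exact mne i j hij hi hj this
  -- the common length
  set ℓ := pairLen G W Λ (m 0) (m 1) with hℓdef
  have hℓr : ℓ ≤ r + 1 := pairlen_le 0 1 (by omega) (by omega) (by omega)
  have hℓ1 : 1 ≤ ℓ := pairlen_pos 0 1 (by omega) (by omega) (by omega)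
  have hlen : ∀ i j, i < j → j ≤ s+4*t+3 → pairLen G W Λ (m i) (m j) = ℓ := by
    intro i j hij hj
    have h := hinv (mk4 i j (s+4*t+4) (s+4*t+5)) (mk4 0 1 (s+4*t+4) (s+4*t+5))
      (sm4 hij (by omega) (by omega)) (sm4 (by omega) (by omega) (by omega))
      (bnd4 (by omega) (by omega) (by omega) (by omega))
      (bnd4 (by omega) (by omega) (by omega) (by omega))
    have hc := congrFun (congrFun (congrArg Prod.fst h) 0) 1
    simp only [colOf] at hc
    have hv := congrArg Fin.val hc
    simp only [Function.comp, mk4_zero, mk4_one] at hv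
    have h1 := pairlen_le i j (by omega) (by omega) (by omega)
    have h2 := hℓr
    rw [hℓdef]
    omega
  -- adjacency invariance
  have hadj : ∀ (q q' : Fin 4 → ℕ), StrictMono q → StrictMono q' →
      (∀ z, q z ≤ s+4*t+5) → (∀ z, q' z ≤ s+4*t+5) → ∀ d d' : DescR r,
      (G.Adj (descV G W Λ r (m ∘ q) d) (descV G W Λ r (m ∘ q) d') ↔
        G.Adj (descV G W Λ r (m ∘ q') d) (descV G W Λ r (m ∘ q') d')) := by
    intro q q' hq hq' hqb hq'b d d'
    have hc := congrFun (congrFun (congrArg Prod.snd (hinv q q' hq hq' hqb hq'b)) d) d'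
    simp only [colOf] at hc
    constructor
    · intro h
      by_contra h2
      rw [if_pos h, if_neg h2] at hc
      exact Bool.noConfusion hc
    · intro h
      by_contra h2
      rw [if_neg h2, if_pos h] at hc
      exact Bool.noConfusion hc
  -- transfers
  have T0 : ∀ (p p' : Fin 4) (q q' : Fin 4 → ℕ), StrictMono q → StrictMono q' →
      (∀ z, q z ≤ s+4*t+5) → (∀ z, q' z ≤ s+4*t+5) →
      G.Adj (m (q p)) (m (q p')) → G.Adj (m (q' p)) (m (q' p')) := by
    intro p p' q q' hq hq' hqb hq'b hA
    exact (hadj q q' hq hq' hqb hq'b (Sum.inl p) (Sum.inl p')).mp hA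
  have T2 : ∀ (a : ℕ), a ≤ r → ∀ (p p₁ p₂ : Fin 4) (q q' : Fin 4 → ℕ),
      StrictMono q → StrictMono q' →
      (∀ z, q z ≤ s+4*t+5) → (∀ z, q' z ≤ s+4*t+5) →
      G.Adj (m (q p)) (ivV G W Λ m (q p₁) (q p₂) a) →
      G.Adj (m (q' p)) (ivV G W Λ m (q' p₁) (q' p₂) a) := by
    intro a ha p p₁ p₂ q q' hq hq' hqb hq'b hA
    exact (hadj q q' hq hq' hqb hq'b (Sum.inl p) (Sum.inr (p₁, p₂, ⟨a, by omega⟩))).mp hA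
  have T3 : ∀ (a b : ℕ), a ≤ r → b ≤ r → ∀ (p₁ p₂ p₃ p₄ : Fin 4) (q q' : Fin 4 → ℕ),
      StrictMono q → StrictMono q' →
      (∀ z, q z ≤ s+4*t+5) → (∀ z, q' z ≤ s+4*t+5) →
      G.Adj (ivV G W Λ m (q p₁) (q p₂) a) (ivV G W Λ m (q p₃) (q p₄) b) →
      G.Adj (ivV G W Λ m (q' p₁) (q' p₂) a) (ivV G W Λ m (q' p₃) (q' p₄) b) := by
    intro a b ha hb p₁ p₂ p₃ p₄ q q' hq hq' hqb hq'b hA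
    exact (hadj q q' hq hq' hqb hq'b (Sum.inr (p₁, p₂, ⟨a, by omega⟩))
      (Sum.inr (p₃, p₄, ⟨b, by omega⟩))).mp hA

  -- wrapped transfers through mk4 tuples
  have TT : ∀ (a b : ℕ), a+2 ≤ ℓ → b+2 ≤ ℓ → ∀ (p₁ p₂ p₃ p₄ : Fin 4)
      (i1 i2 i3 i4 j1 j2 j3 j4 : ℕ),
      i1 < i2 → i2 < i3 → i3 < i4 → i4 ≤ s+4*t+5 →
      j1 < j2 → j2 < j3 → j3 < j4 → j4 ≤ s+4*t+5 →
      G.Adj (ivV G W Λ m (mk4 i1 i2 i3 i4 p₁) (mk4 i1 i2 i3 i4 p₂) a)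
        (ivV G W Λ m (mk4 i1 i2 i3 i4 p₃) (mk4 i1 i2 i3 i4 p₄) b) →
      G.Adj (ivV G W Λ m (mk4 j1 j2 j3 j4 p₁) (mk4 j1 j2 j3 j4 p₂) a)
        (ivV G W Λ m (mk4 j1 j2 j3 j4 p₃) (mk4 j1 j2 j3 j4 p₄) b) := by
    intro a b ha hb p₁ p₂ p₃ p₄ i1 i2 i3 i4 j1 j2 j3 j4 h1 h2 h3 h4 g1 g2 g3 g4 hA
    exact T3 a b (by omega) (by omega) p₁ p₂ p₃ p₄ _ _ (sm4 h1 h2 h3) (sm4 g1 g2 g3)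
      (bnd4 (by omega) (by omega) (by omega) (by omega))
      (bnd4 (by omega) (by omega) (by omega) (by omega)) hA
  have TV : ∀ (a : ℕ), a+2 ≤ ℓ → ∀ (p p₁ p₂ : Fin 4) (i1 i2 i3 i4 j1 j2 j3 j4 : ℕ),
      i1 < i2 → i2 < i3 → i3 < i4 → i4 ≤ s+4*t+5 →
      j1 < j2 → j2 < j3 → j3 < j4 → j4 ≤ s+4*t+5 →
      G.Adj (m (mk4 i1 i2 i3 i4 p))
        (ivV G W Λ m (mk4 i1 i2 i3 i4 p₁) (mk4 i1 i2 i3 i4 p₂) a) →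
      G.Adj (m (mk4 j1 j2 j3 j4 p))
        (ivV G W Λ m (mk4 j1 j2 j3 j4 p₁) (mk4 j1 j2 j3 j4 p₂) a) := by
    intro a ha p p₁ p₂ i1 i2 i3 i4 j1 j2 j3 j4 h1 h2 h3 h4 g1 g2 g3 g4 hA
    exact T2 a (by omega) p p₁ p₂ _ _ (sm4 h1 h2 h3) (sm4 g1 g2 g3)
      (bnd4 (by omega) (by omega) (by omega) (by omega))
      (bnd4 (by omega) (by omega) (by omega) (by omega)) hA
  have TP : ∀ (p p' : Fin 4) (i1 i2 i3 i4 j1 j2 j3 j4 : ℕ),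
      i1 < i2 → i2 < i3 → i3 < i4 → i4 ≤ s+4*t+5 →
      j1 < j2 → j2 < j3 → j3 < j4 → j4 ≤ s+4*t+5 →
      G.Adj (m (mk4 i1 i2 i3 i4 p)) (m (mk4 i1 i2 i3 i4 p')) →
      G.Adj (m (mk4 j1 j2 j3 j4 p)) (m (mk4 j1 j2 j3 j4 p')) := by
    intro p p' i1 i2 i3 i4 j1 j2 j3 j4 h1 h2 h3 h4 g1 g2 g3 g4 hA
    exact T0 p p' _ _ (sm4 h1 h2 h3) (sm4 g1 g2 g3)
      (bnd4 (by omega) (by omega) (by omega) (by omega))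
      (bnd4 (by omega) (by omega) (by omega) (by omega)) hA
  -- membership and distinctness
  have ivmem : ∀ (i j a : ℕ) (hij : i < j) (hj : j ≤ s+4*t+3), a+2 ≤ ℓ →
      ivV G W Λ m i j a ∈ walkInterior G (Λ (m i) (m j) (hmW i (by omega)) (hmW j (by omega))
        (mne i j (by omega) (by omega) (by omega))) := by
    intro i j a hij hj ha
    refine (mem_interior_iff hweb _ _ _).mpr ⟨a, ?_, rfl⟩
    rw [hlen i j hij hj]
    exact ha
  have pairSetNe : ∀ (i j k l : ℕ), i < j → k < l → j ≤ s+4*t+5 → l ≤ s+4*t+5 →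
      (i ≠ k ∨ j ≠ l) → ({m i, m j} : Set V) ≠ {m k, m l} := by
    intro i j k l hij hkl hj hl hne hset
    rcases Set.pair_eq_pair_iff.mp hset with ⟨h1, h2⟩ | ⟨h1, h2⟩
    · have e1 := hminj i k (by omega) (by omega) h1
      have e2 := hminj j l (by omega) (by omega) h2
      rcases hne with h | h <;> omega
    · have e1 := hminj i l (by omega) (by omega) h1
      have e2 := hminj j k (by omega) (by omega) h2
      omega
  have ivNe : ∀ (i j k l a b : ℕ), i < j → k < l → j ≤ s+4*t+3 → l ≤ s+4*t+3 →
      (i ≠ k ∨ j ≠ l) → a+2 ≤ ℓ → b+2 ≤ ℓ →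
      ivV G W Λ m i j a ≠ ivV G W Λ m k l b := by
    intro i j k l a b hij hkl hj hl hne ha hb heq
    exact interior_disjoint hweb (hmW i (by omega)) (hmW j (by omega))
      (mne i j (by omega) (by omega) (by omega)) (hmW k (by omega)) (hmW l (by omega))
      (mne k l (by omega) (by omega) (by omega))
      (pairSetNe i j k l hij hkl (by omega) (by omega) hne)
      (ivmem i j a hij hj ha) (by rw [heq]; exact ivmem k l b hkl hl hb)
  have mNe : ∀ (p i j a : ℕ), p ≤ s+4*t+5 → i < j → j ≤ s+4*t+3 → a+2 ≤ ℓ →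
      m p ≠ ivV G W Λ m i j a := by
    intro p i j a hp hij hj ha heq
    exact wvtx_not_interior hweb (hmW i (by omega)) (hmW j (by omega))
      (mne i j (by omega) (by omega) (by omega)) (hmW p hp)
      (by rw [heq]; exact ivmem i j a hij hj ha)
  -- clique/biclique builders
  have mkClique : ∀ (U : Fin t → V), (∀ k l : Fin t, k < l → G.Adj (U k) (U l)) →
      Nonempty ((⊤ : SimpleGraph (Fin t)) ↪g G) := by
    intro U h
    refine genClique G U (fun k l hne => ?_)
    rcases lt_or_gt_of_ne hne with h' | h'
    · exact h k l h'
    · exact (h l k h').symm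
  have mkBi : ∀ (u w : Fin t → V), (∀ k l, G.Adj (u k) (w l)) →
      (∀ k l : Fin t, k < l → ¬ G.Adj (u k) (u l)) →
      (∀ k l : Fin t, k < l → ¬ G.Adj (w k) (w l)) →
      (∀ k l : Fin t, k < l → u k ≠ u l) → (∀ k l : Fin t, k < l → w k ≠ w l) →
      Nonempty (completeBipartiteGraph (Fin t) (Fin t) ↪g G) := by
    intro u w hc hu hw hun hwn
    refine genBiclique G u w hc ?_ ?_ ?_ ?_
    · intro k l hA
      rcases lt_trichotomy k l with h' | rfl | h'
      · exact hu k l h' hA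
      · exact G.irrefl hA
      · exact hu l k h' hA.symm
    · intro k l hA
      rcases lt_trichotomy k l with h' | rfl | h'
      · exact hw k l h' hA
      · exact G.irrefl hA
      · exact hw l k h' hA.symm
    · intro k l hne
      rcases lt_or_gt_of_ne hne with h' | h'
      · exact hun k l h'
      · exact (hun l k h').symm
    · intro k l hne
      rcases lt_or_gt_of_ne hne with h' | h'
      · exact hwn k l h'
      · exact (hwn l k h').symm
  have Kepp : G.Adj (m 0) (m 1) → Nonempty ((⊤ : SimpleGraph (Fin t)) ↪g G) := by
    intro hA
    refine mkClique (fun k => m (k : ℕ)) (fun k l hkl => ?_)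
    have hk := k.isLt; have hl := l.isLt
    have hkl' : (k:ℕ) < (l:ℕ) := hkl
    exact TP 0 1 0 1 (s+4*t+4) (s+4*t+5) (k:ℕ) (l:ℕ) (s+4*t+4) (s+4*t+5)
      (by omega) (by omega) (by omega) (by omega)
        (by omega) (by omega) (by omega) (by omega) hA
  have Kseq : ∀ a : ℕ, a+2 ≤ ℓ → G.Adj (ivV G W Λ m 0 1 a) (ivV G W Λ m 2 3 a) →
      Nonempty ((⊤ : SimpleGraph (Fin t)) ↪g G) := by
    intro a ha hA
    refine mkClique (fun k => ivV G W Λ m (2*(k:ℕ)) (2*(k:ℕ)+1) a) (fun k l hkl => ?_)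
    have hk := k.isLt; have hl := l.isLt
    have hkl' : (k:ℕ) < (l:ℕ) := hkl
    exact TT a a ha ha 0 1 2 3 0 1 2 3 (2*(k:ℕ)) (2*(k:ℕ)+1) (2*(l:ℕ)) (2*(l:ℕ)+1)
      (by omega) (by omega) (by omega) (by omega)
        (by omega) (by omega) (by omega) (by omega) hA
  have Knest : ∀ a : ℕ, a+2 ≤ ℓ → G.Adj (ivV G W Λ m 0 3 a) (ivV G W Λ m 1 2 a) →
      Nonempty ((⊤ : SimpleGraph (Fin t)) ↪g G) := by
    intro a ha hA
    refine mkClique (fun k => ivV G W Λ m (k:ℕ) (4*t-(k:ℕ)) a) (fun k l hkl => ?_)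
    have hk := k.isLt; have hl := l.isLt
    have hkl' : (k:ℕ) < (l:ℕ) := hkl
    exact TT a a ha ha 0 3 1 2 0 1 2 3 (k:ℕ) (l:ℕ) (4*t-(l:ℕ)) (4*t-(k:ℕ))
      (by omega) (by omega) (by omega) (by omega)
        (by omega) (by omega) (by omega) (by omega) hA
  have Kcross : ∀ a : ℕ, a+2 ≤ ℓ → G.Adj (ivV G W Λ m 0 2 a) (ivV G W Λ m 1 3 a) →
      Nonempty ((⊤ : SimpleGraph (Fin t)) ↪g G) := by
    intro a ha hA
    refine mkClique (fun k => ivV G W Λ m (k:ℕ) (2*t+(k:ℕ)) a) (fun k l hkl => ?_)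
    have hk := k.isLt; have hl := l.isLt
    have hkl' : (k:ℕ) < (l:ℕ) := hkl
    exact TT a a ha ha 0 2 1 3 0 1 2 3 (k:ℕ) (l:ℕ) (2*t+(k:ℕ)) (2*t+(l:ℕ))
      (by omega) (by omega) (by omega) (by omega)
        (by omega) (by omega) (by omega) (by omega) hA
  have KshLow : ∀ a : ℕ, a+2 ≤ ℓ → G.Adj (ivV G W Λ m 0 1 a) (ivV G W Λ m 0 2 a) →
      Nonempty ((⊤ : SimpleGraph (Fin t)) ↪g G) := by
    intro a ha hA
    refine mkClique (fun k => ivV G W Λ m 0 ((k:ℕ)+1) a) (fun k l hkl => ?_)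
    have hk := k.isLt; have hl := l.isLt
    have hkl' : (k:ℕ) < (l:ℕ) := hkl
    exact TT a a ha ha 0 1 0 2 0 1 2 3 0 ((k:ℕ)+1) ((l:ℕ)+1) (s+4*t+4)
      (by omega) (by omega) (by omega) (by omega)
        (by omega) (by omega) (by omega) (by omega) hA
  have KshHigh : ∀ a : ℕ, a+2 ≤ ℓ → G.Adj (ivV G W Λ m 0 2 a) (ivV G W Λ m 1 2 a) →
      Nonempty ((⊤ : SimpleGraph (Fin t)) ↪g G) := by
    intro a ha hA
    refine mkClique (fun k => ivV G W Λ m (k:ℕ) t a) (fun k l hkl => ?_)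
    have hk := k.isLt; have hl := l.isLt
    have hkl' : (k:ℕ) < (l:ℕ) := hkl
    exact TT a a ha ha 0 2 1 2 0 1 2 3 (k:ℕ) (l:ℕ) t (s+4*t+4)
      (by omega) (by omega) (by omega) (by omega)
        (by omega) (by omega) (by omega) (by omega) hA
  by_cases hE0 : G.Adj (m 0) (m 1)
  · exact Or.inl (Or.inl (Kepp hE0))
  by_cases hD1 : ∃ a, a+2 ≤ ℓ ∧ G.Adj (ivV G W Λ m 0 1 a) (ivV G W Λ m 2 3 a)
  · obtain ⟨a, ha, hA⟩ := hD1
    exact Or.inl (Or.inl (Kseq a ha hA))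
  by_cases hD2 : ∃ a, a+2 ≤ ℓ ∧ G.Adj (ivV G W Λ m 0 3 a) (ivV G W Λ m 1 2 a)
  · obtain ⟨a, ha, hA⟩ := hD2
    exact Or.inl (Or.inl (Knest a ha hA))
  by_cases hD3 : ∃ a, a+2 ≤ ℓ ∧ G.Adj (ivV G W Λ m 0 2 a) (ivV G W Λ m 1 3 a)
  · obtain ⟨a, ha, hA⟩ := hD3
    exact Or.inl (Or.inl (Kcross a ha hA))
  by_cases hD4 : ∃ a, a+2 ≤ ℓ ∧ G.Adj (ivV G W Λ m 0 1 a) (ivV G W Λ m 0 2 a)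
  · obtain ⟨a, ha, hA⟩ := hD4
    exact Or.inl (Or.inl (KshLow a ha hA))
  by_cases hD5 : ∃ a, a+2 ≤ ℓ ∧ G.Adj (ivV G W Λ m 0 2 a) (ivV G W Λ m 1 2 a)
  · obtain ⟨a, ha, hA⟩ := hD5
    exact Or.inl (Or.inl (KshHigh a ha hA))
  push_neg at hD1 hD2 hD3 hD4 hD5
  by_cases hG1 : ∃ a b, a+2 ≤ ℓ ∧ b+2 ≤ ℓ ∧ G.Adj (ivV G W Λ m 0 1 a) (ivV G W Λ m 2 3 b)
  · obtain ⟨a, b, ha, hb, hA⟩ := hG1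
    refine Or.inl (Or.inr (mkBi (fun k => ivV G W Λ m (2*(k:ℕ)) (2*(k:ℕ)+1) a)
      (fun l => ivV G W Λ m (2*t+2*(l:ℕ)) (2*t+2*(l:ℕ)+1) b) ?_ ?_ ?_ ?_ ?_))
    · intro k l
      have hk := k.isLt; have hl := l.isLt
      exact TT a b ha hb 0 1 2 3 0 1 2 3 (2*(k:ℕ)) (2*(k:ℕ)+1) (2*t+2*(l:ℕ)) (2*t+2*(l:ℕ)+1)
        (by omega) (by omega) (by omega) (by omega)
        (by omega) (by omega) (by omega) (by omega) hA
    · intro k l hkl hA2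
      have hk := k.isLt; have hl := l.isLt
      have hkl' : (k:ℕ) < (l:ℕ) := hkl
      exact hD1 a ha (TT a a ha ha 0 1 2 3 (2*(k:ℕ)) (2*(k:ℕ)+1) (2*(l:ℕ)) (2*(l:ℕ)+1) 0 1 2 3
        (by omega) (by omega) (by omega) (by omega)
        (by omega) (by omega) (by omega) (by omega) hA2)
    · intro k l hkl hA2
      have hk := k.isLt; have hl := l.isLt
      have hkl' : (k:ℕ) < (l:ℕ) := hkl
      exact hD1 b hb (TT b b hb hb 0 1 2 3 (2*t+2*(k:ℕ)) (2*t+2*(k:ℕ)+1) (2*t+2*(l:ℕ)) (2*t+2*(l:ℕ)+1) 0 1 2 3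
        (by omega) (by omega) (by omega) (by omega)
        (by omega) (by omega) (by omega) (by omega) hA2)
    · intro k l hkl
      have hk := k.isLt; have hl := l.isLt
      have hkl' : (k:ℕ) < (l:ℕ) := hkl
      exact ivNe (2*(k:ℕ)) (2*(k:ℕ)+1) (2*(l:ℕ)) (2*(l:ℕ)+1) a a (by omega) (by omega) (by omega) (by omega) (Or.inl (by omega)) ha ha
    · intro k l hkl
      have hk := k.isLt; have hl := l.isLt
      have hkl' : (k:ℕ) < (l:ℕ) := hkl
      exact ivNe (2*t+2*(k:ℕ)) (2*t+2*(k:ℕ)+1) (2*t+2*(l:ℕ)) (2*t+2*(l:ℕ)+1) b b (by omega) (by omega) (by omega) (by omega) (Or.inl (by omega)) hb hb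
  by_cases hG2 : ∃ a b, a+2 ≤ ℓ ∧ b+2 ≤ ℓ ∧ G.Adj (ivV G W Λ m 0 2 a) (ivV G W Λ m 1 3 b)
  · obtain ⟨a, b, ha, hb, hA⟩ := hG2
    refine Or.inl (Or.inr (mkBi (fun k => ivV G W Λ m (k:ℕ) (2*t+(k:ℕ)) a)
      (fun l => ivV G W Λ m (t+(l:ℕ)) (3*t+(l:ℕ)) b) ?_ ?_ ?_ ?_ ?_))
    · intro k l
      have hk := k.isLt; have hl := l.isLt
      exact TT a b ha hb 0 2 1 3 0 1 2 3 (k:ℕ) (t+(l:ℕ)) (2*t+(k:ℕ)) (3*t+(l:ℕ))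
        (by omega) (by omega) (by omega) (by omega)
        (by omega) (by omega) (by omega) (by omega) hA
    · intro k l hkl hA2
      have hk := k.isLt; have hl := l.isLt
      have hkl' : (k:ℕ) < (l:ℕ) := hkl
      exact hD3 a ha (TT a a ha ha 0 2 1 3 (k:ℕ) (l:ℕ) (2*t+(k:ℕ)) (2*t+(l:ℕ)) 0 1 2 3
        (by omega) (by omega) (by omega) (by omega)
        (by omega) (by omega) (by omega) (by omega) hA2)
    · intro k l hkl hA2
      have hk := k.isLt; have hl := l.isLt
      have hkl' : (k:ℕ) < (l:ℕ) := hkl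
      exact hD3 b hb (TT b b hb hb 0 2 1 3 (t+(k:ℕ)) (t+(l:ℕ)) (3*t+(k:ℕ)) (3*t+(l:ℕ)) 0 1 2 3
        (by omega) (by omega) (by omega) (by omega)
        (by omega) (by omega) (by omega) (by omega) hA2)
    · intro k l hkl
      have hk := k.isLt; have hl := l.isLt
      have hkl' : (k:ℕ) < (l:ℕ) := hkl
      exact ivNe (k:ℕ) (2*t+(k:ℕ)) (l:ℕ) (2*t+(l:ℕ)) a a (by omega) (by omega) (by omega) (by omega) (Or.inl (by omega)) ha ha
    · intro k l hkl
      have hk := k.isLt; have hl := l.isLt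
      have hkl' : (k:ℕ) < (l:ℕ) := hkl
      exact ivNe (t+(k:ℕ)) (3*t+(k:ℕ)) (t+(l:ℕ)) (3*t+(l:ℕ)) b b (by omega) (by omega) (by omega) (by omega) (Or.inl (by omega)) hb hb
  by_cases hG3 : ∃ a b, a+2 ≤ ℓ ∧ b+2 ≤ ℓ ∧ G.Adj (ivV G W Λ m 0 3 a) (ivV G W Λ m 1 2 b)
  · obtain ⟨a, b, ha, hb, hA⟩ := hG3
    refine Or.inl (Or.inr (mkBi (fun k => ivV G W Λ m (k:ℕ) (4*t-(k:ℕ)) a)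
      (fun l => ivV G W Λ m (t+2*(l:ℕ)) (t+2*(l:ℕ)+1) b) ?_ ?_ ?_ ?_ ?_))
    · intro k l
      have hk := k.isLt; have hl := l.isLt
      exact TT a b ha hb 0 3 1 2 0 1 2 3 (k:ℕ) (t+2*(l:ℕ)) (t+2*(l:ℕ)+1) (4*t-(k:ℕ))
        (by omega) (by omega) (by omega) (by omega)
        (by omega) (by omega) (by omega) (by omega) hA
    · intro k l hkl hA2
      have hk := k.isLt; have hl := l.isLt
      have hkl' : (k:ℕ) < (l:ℕ) := hkl
      exact hD2 a ha (TT a a ha ha 0 3 1 2 (k:ℕ) (l:ℕ) (4*t-(l:ℕ)) (4*t-(k:ℕ)) 0 1 2 3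
        (by omega) (by omega) (by omega) (by omega)
        (by omega) (by omega) (by omega) (by omega) hA2)
    · intro k l hkl hA2
      have hk := k.isLt; have hl := l.isLt
      have hkl' : (k:ℕ) < (l:ℕ) := hkl
      exact hD1 b hb (TT b b hb hb 0 1 2 3 (t+2*(k:ℕ)) (t+2*(k:ℕ)+1) (t+2*(l:ℕ)) (t+2*(l:ℕ)+1) 0 1 2 3
        (by omega) (by omega) (by omega) (by omega)
        (by omega) (by omega) (by omega) (by omega) hA2)
    · intro k l hkl
      have hk := k.isLt; have hl := l.isLt
      have hkl' : (k:ℕ) < (l:ℕ) := hkl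
      exact ivNe (k:ℕ) (4*t-(k:ℕ)) (l:ℕ) (4*t-(l:ℕ)) a a (by omega) (by omega) (by omega) (by omega) (Or.inl (by omega)) ha ha
    · intro k l hkl
      have hk := k.isLt; have hl := l.isLt
      have hkl' : (k:ℕ) < (l:ℕ) := hkl
      exact ivNe (t+2*(k:ℕ)) (t+2*(k:ℕ)+1) (t+2*(l:ℕ)) (t+2*(l:ℕ)+1) b b (by omega) (by omega) (by omega) (by omega) (Or.inl (by omega)) hb hb
  by_cases hG4 : ∃ a b, a+2 ≤ ℓ ∧ b+2 ≤ ℓ ∧ G.Adj (ivV G W Λ m 0 1 a) (ivV G W Λ m 0 2 b)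
  · obtain ⟨a, b, ha, hb, hA⟩ := hG4
    refine Or.inl (Or.inr (mkBi (fun k => ivV G W Λ m 0 ((k:ℕ)+1) a)
      (fun l => ivV G W Λ m 0 (t+1+(l:ℕ)) b) ?_ ?_ ?_ ?_ ?_))
    · intro k l
      have hk := k.isLt; have hl := l.isLt
      exact TT a b ha hb 0 1 0 2 0 1 2 3 0 ((k:ℕ)+1) (t+1+(l:ℕ)) (s+4*t+4)
        (by omega) (by omega) (by omega) (by omega)
        (by omega) (by omega) (by omega) (by omega) hA
    · intro k l hkl hA2
      have hk := k.isLt; have hl := l.isLt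
      have hkl' : (k:ℕ) < (l:ℕ) := hkl
      exact hD4 a ha (TT a a ha ha 0 1 0 2 0 ((k:ℕ)+1) ((l:ℕ)+1) (s+4*t+4) 0 1 2 3
        (by omega) (by omega) (by omega) (by omega)
        (by omega) (by omega) (by omega) (by omega) hA2)
    · intro k l hkl hA2
      have hk := k.isLt; have hl := l.isLt
      have hkl' : (k:ℕ) < (l:ℕ) := hkl
      exact hD4 b hb (TT b b hb hb 0 1 0 2 0 (t+1+(k:ℕ)) (t+1+(l:ℕ)) (s+4*t+4) 0 1 2 3
        (by omega) (by omega) (by omega) (by omega)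
        (by omega) (by omega) (by omega) (by omega) hA2)
    · intro k l hkl
      have hk := k.isLt; have hl := l.isLt
      have hkl' : (k:ℕ) < (l:ℕ) := hkl
      exact ivNe 0 ((k:ℕ)+1) 0 ((l:ℕ)+1) a a (by omega) (by omega) (by omega) (by omega) (Or.inr (by omega)) ha ha
    · intro k l hkl
      have hk := k.isLt; have hl := l.isLt
      have hkl' : (k:ℕ) < (l:ℕ) := hkl
      exact ivNe 0 (t+1+(k:ℕ)) 0 (t+1+(l:ℕ)) b b (by omega) (by omega) (by omega) (by omega) (Or.inr (by omega)) hb hb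
  by_cases hG5 : ∃ a b, a+2 ≤ ℓ ∧ b+2 ≤ ℓ ∧ G.Adj (ivV G W Λ m 0 1 a) (ivV G W Λ m 1 2 b)
  · obtain ⟨a, b, ha, hb, hA⟩ := hG5
    refine Or.inl (Or.inr (mkBi (fun k => ivV G W Λ m (k:ℕ) t a)
      (fun l => ivV G W Λ m t (t+1+(l:ℕ)) b) ?_ ?_ ?_ ?_ ?_))
    · intro k l
      have hk := k.isLt; have hl := l.isLt
      exact TT a b ha hb 0 1 1 2 0 1 2 3 (k:ℕ) t (t+1+(l:ℕ)) (s+4*t+4)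
        (by omega) (by omega) (by omega) (by omega)
        (by omega) (by omega) (by omega) (by omega) hA
    · intro k l hkl hA2
      have hk := k.isLt; have hl := l.isLt
      have hkl' : (k:ℕ) < (l:ℕ) := hkl
      exact hD5 a ha (TT a a ha ha 0 2 1 2 (k:ℕ) (l:ℕ) t (s+4*t+4) 0 1 2 3
        (by omega) (by omega) (by omega) (by omega)
        (by omega) (by omega) (by omega) (by omega) hA2)
    · intro k l hkl hA2
      have hk := k.isLt; have hl := l.isLt
      have hkl' : (k:ℕ) < (l:ℕ) := hkl
      exact hD4 b hb (TT b b hb hb 0 1 0 2 t (t+1+(k:ℕ)) (t+1+(l:ℕ)) (s+4*t+4) 0 1 2 3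
        (by omega) (by omega) (by omega) (by omega)
        (by omega) (by omega) (by omega) (by omega) hA2)
    · intro k l hkl
      have hk := k.isLt; have hl := l.isLt
      have hkl' : (k:ℕ) < (l:ℕ) := hkl
      exact ivNe (k:ℕ) t (l:ℕ) t a a (by omega) (by omega) (by omega) (by omega) (Or.inl (by omega)) ha ha
    · intro k l hkl
      have hk := k.isLt; have hl := l.isLt
      have hkl' : (k:ℕ) < (l:ℕ) := hkl
      exact ivNe t (t+1+(k:ℕ)) t (t+1+(l:ℕ)) b b (by omega) (by omega) (by omega) (by omega) (Or.inr (by omega)) hb hb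
  by_cases hG6 : ∃ a b, a+2 ≤ ℓ ∧ b+2 ≤ ℓ ∧ G.Adj (ivV G W Λ m 0 2 a) (ivV G W Λ m 1 2 b)
  · obtain ⟨a, b, ha, hb, hA⟩ := hG6
    refine Or.inl (Or.inr (mkBi (fun k => ivV G W Λ m (k:ℕ) (2*t) a)
      (fun l => ivV G W Λ m (t+(l:ℕ)) (2*t) b) ?_ ?_ ?_ ?_ ?_))
    · intro k l
      have hk := k.isLt; have hl := l.isLt
      exact TT a b ha hb 0 2 1 2 0 1 2 3 (k:ℕ) (t+(l:ℕ)) (2*t) (s+4*t+4)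
        (by omega) (by omega) (by omega) (by omega)
        (by omega) (by omega) (by omega) (by omega) hA
    · intro k l hkl hA2
      have hk := k.isLt; have hl := l.isLt
      have hkl' : (k:ℕ) < (l:ℕ) := hkl
      exact hD5 a ha (TT a a ha ha 0 2 1 2 (k:ℕ) (l:ℕ) (2*t) (s+4*t+4) 0 1 2 3
        (by omega) (by omega) (by omega) (by omega)
        (by omega) (by omega) (by omega) (by omega) hA2)
    · intro k l hkl hA2
      have hk := k.isLt; have hl := l.isLt
      have hkl' : (k:ℕ) < (l:ℕ) := hkl
      exact hD5 b hb (TT b b hb hb 0 2 1 2 (t+(k:ℕ)) (t+(l:ℕ)) (2*t) (s+4*t+4) 0 1 2 3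
        (by omega) (by omega) (by omega) (by omega)
        (by omega) (by omega) (by omega) (by omega) hA2)
    · intro k l hkl
      have hk := k.isLt; have hl := l.isLt
      have hkl' : (k:ℕ) < (l:ℕ) := hkl
      exact ivNe (k:ℕ) (2*t) (l:ℕ) (2*t) a a (by omega) (by omega) (by omega) (by omega) (Or.inl (by omega)) ha ha
    · intro k l hkl
      have hk := k.isLt; have hl := l.isLt
      have hkl' : (k:ℕ) < (l:ℕ) := hkl
      exact ivNe (t+(k:ℕ)) (2*t) (t+(l:ℕ)) (2*t) b b (by omega) (by omega) (by omega) (by omega) (Or.inl (by omega)) hb hb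
  by_cases hG7 : ∃ a, a+2 ≤ ℓ ∧ G.Adj (m 0) (ivV G W Λ m 1 2 a)
  · obtain ⟨a, ha, hA⟩ := hG7
    refine Or.inl (Or.inr (mkBi (fun k => m ((k:ℕ) : ℕ))
      (fun l => ivV G W Λ m (t+2*(l:ℕ)) (t+2*(l:ℕ)+1) a) ?_ ?_ ?_ ?_ ?_))
    · intro k l
      have hk := k.isLt; have hl := l.isLt
      exact TV a ha 0 1 2 0 1 2 3 (k:ℕ) (t+2*(l:ℕ)) (t+2*(l:ℕ)+1) (s+4*t+4)
        (by omega) (by omega) (by omega) (by omega)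
        (by omega) (by omega) (by omega) (by omega) hA
    · intro k l hkl hA2
      have hk := k.isLt; have hl := l.isLt
      have hkl' : (k:ℕ) < (l:ℕ) := hkl
      exact hE0 (TP 0 1 ((k:ℕ)) ((l:ℕ)) (s+4*t+4) (s+4*t+5) 0 1 (s+4*t+4) (s+4*t+5)
        (by omega) (by omega) (by omega) (by omega)
        (by omega) (by omega) (by omega) (by omega) hA2)
    · intro k l hkl hA2
      have hk := k.isLt; have hl := l.isLt
      have hkl' : (k:ℕ) < (l:ℕ) := hkl
      exact hD1 a ha (TT a a ha ha 0 1 2 3 (t+2*(k:ℕ)) (t+2*(k:ℕ)+1) (t+2*(l:ℕ)) (t+2*(l:ℕ)+1) 0 1 2 3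
        (by omega) (by omega) (by omega) (by omega)
        (by omega) (by omega) (by omega) (by omega) hA2)
    · intro k l hkl
      have hk := k.isLt; have hl := l.isLt
      have hkl' : (k:ℕ) < (l:ℕ) := hkl
      intro heq
      have := hminj ((k:ℕ)) ((l:ℕ)) (by omega) (by omega) heq
      omega
    · intro k l hkl
      have hk := k.isLt; have hl := l.isLt
      have hkl' : (k:ℕ) < (l:ℕ) := hkl
      exact ivNe (t+2*(k:ℕ)) (t+2*(k:ℕ)+1) (t+2*(l:ℕ)) (t+2*(l:ℕ)+1) a a (by omega) (by omega) (by omega) (by omega) (Or.inl (by omega)) ha ha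
  by_cases hG8 : ∃ a, a+2 ≤ ℓ ∧ G.Adj (m 1) (ivV G W Λ m 0 2 a)
  · obtain ⟨a, ha, hA⟩ := hG8
    refine Or.inl (Or.inr (mkBi (fun k => m ((t+(k:ℕ)) : ℕ))
      (fun l => ivV G W Λ m (l:ℕ) (4*t-(l:ℕ)) a) ?_ ?_ ?_ ?_ ?_))
    · intro k l
      have hk := k.isLt; have hl := l.isLt
      exact TV a ha 1 0 2 0 1 2 3 (l:ℕ) (t+(k:ℕ)) (4*t-(l:ℕ)) (s+4*t+4)
        (by omega) (by omega) (by omega) (by omega)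
        (by omega) (by omega) (by omega) (by omega) hA
    · intro k l hkl hA2
      have hk := k.isLt; have hl := l.isLt
      have hkl' : (k:ℕ) < (l:ℕ) := hkl
      exact hE0 (TP 0 1 ((t+(k:ℕ))) ((t+(l:ℕ))) (s+4*t+4) (s+4*t+5) 0 1 (s+4*t+4) (s+4*t+5)
        (by omega) (by omega) (by omega) (by omega)
        (by omega) (by omega) (by omega) (by omega) hA2)
    · intro k l hkl hA2
      have hk := k.isLt; have hl := l.isLt
      have hkl' : (k:ℕ) < (l:ℕ) := hkl
      exact hD2 a ha (TT a a ha ha 0 3 1 2 (k:ℕ) (l:ℕ) (4*t-(l:ℕ)) (4*t-(k:ℕ)) 0 1 2 3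
        (by omega) (by omega) (by omega) (by omega)
        (by omega) (by omega) (by omega) (by omega) hA2)
    · intro k l hkl
      have hk := k.isLt; have hl := l.isLt
      have hkl' : (k:ℕ) < (l:ℕ) := hkl
      intro heq
      have := hminj ((t+(k:ℕ))) ((t+(l:ℕ))) (by omega) (by omega) heq
      omega
    · intro k l hkl
      have hk := k.isLt; have hl := l.isLt
      have hkl' : (k:ℕ) < (l:ℕ) := hkl
      exact ivNe (k:ℕ) (4*t-(k:ℕ)) (l:ℕ) (4*t-(l:ℕ)) a a (by omega) (by omega) (by omega) (by omega) (Or.inl (by omega)) ha ha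
  by_cases hG9 : ∃ a, a+2 ≤ ℓ ∧ G.Adj (m 2) (ivV G W Λ m 0 1 a)
  · obtain ⟨a, ha, hA⟩ := hG9
    refine Or.inl (Or.inr (mkBi (fun k => m ((2*t+(k:ℕ)) : ℕ))
      (fun l => ivV G W Λ m (2*(l:ℕ)) (2*(l:ℕ)+1) a) ?_ ?_ ?_ ?_ ?_))
    · intro k l
      have hk := k.isLt; have hl := l.isLt
      exact TV a ha 2 0 1 0 1 2 3 (2*(l:ℕ)) (2*(l:ℕ)+1) (2*t+(k:ℕ)) (s+4*t+4)
        (by omega) (by omega) (by omega) (by omega)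
        (by omega) (by omega) (by omega) (by omega) hA
    · intro k l hkl hA2
      have hk := k.isLt; have hl := l.isLt
      have hkl' : (k:ℕ) < (l:ℕ) := hkl
      exact hE0 (TP 0 1 ((2*t+(k:ℕ))) ((2*t+(l:ℕ))) (s+4*t+4) (s+4*t+5) 0 1 (s+4*t+4) (s+4*t+5)
        (by omega) (by omega) (by omega) (by omega)
        (by omega) (by omega) (by omega) (by omega) hA2)
    · intro k l hkl hA2
      have hk := k.isLt; have hl := l.isLt
      have hkl' : (k:ℕ) < (l:ℕ) := hkl
      exact hD1 a ha (TT a a ha ha 0 1 2 3 (2*(k:ℕ)) (2*(k:ℕ)+1) (2*(l:ℕ)) (2*(l:ℕ)+1) 0 1 2 3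
        (by omega) (by omega) (by omega) (by omega)
        (by omega) (by omega) (by omega) (by omega) hA2)
    · intro k l hkl
      have hk := k.isLt; have hl := l.isLt
      have hkl' : (k:ℕ) < (l:ℕ) := hkl
      intro heq
      have := hminj ((2*t+(k:ℕ))) ((2*t+(l:ℕ))) (by omega) (by omega) heq
      omega
    · intro k l hkl
      have hk := k.isLt; have hl := l.isLt
      have hkl' : (k:ℕ) < (l:ℕ) := hkl
      exact ivNe (2*(k:ℕ)) (2*(k:ℕ)+1) (2*(l:ℕ)) (2*(l:ℕ)+1) a a (by omega) (by omega) (by omega) (by omega) (Or.inl (by omega)) ha ha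
  push_neg at hG1 hG2 hG3 hG4 hG5 hG6 hG7 hG8 hG9
  -- general negative facts
  have stab : ∀ i j, i < j → j ≤ s+4*t+3 → ¬ G.Adj (m i) (m j) := by
    intro i j hij hj hA
    exact hE0 (TP 0 1 i j (s+4*t+4) (s+4*t+5) 0 1 (s+4*t+4) (s+4*t+5)
      (by omega) (by omega) (by omega) (by omega)
        (by omega) (by omega) (by omega) (by omega) hA)
  have vertInt : ∀ (p i j a : ℕ), p ≤ s+4*t+3 → i < j → j ≤ s+4*t+3 → p ≠ i → p ≠ j →
      a+2 ≤ ℓ → ¬ G.Adj (m p) (ivV G W Λ m i j a) := by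
    intro p i j a hp hij hj hpi hpj ha hA
    rcases Nat.lt_trichotomy p i with h1 | h1 | h1
    · exact hG7 a ha (TV a ha 0 1 2 p i j (s+4*t+4) 0 1 2 3
        (by omega) (by omega) (by omega) (by omega)
        (by omega) (by omega) (by omega) (by omega) hA)
    · omega
    · rcases Nat.lt_trichotomy p j with h2 | h2 | h2
      · exact hG8 a ha (TV a ha 1 0 2 i p j (s+4*t+4) 0 1 2 3
          (by omega) (by omega) (by omega) (by omega)
        (by omega) (by omega) (by omega) (by omega) hA)
      · omega
      · exact hG9 a ha (TV a ha 2 0 1 i j p (s+4*t+4) 0 1 2 3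
          (by omega) (by omega) (by omega) (by omega)
        (by omega) (by omega) (by omega) (by omega) hA)
  have core0 : ∀ (i j k l : ℕ), i ≤ k → i < j → k < l → j ≤ s+4*t+3 → l ≤ s+4*t+3 →
      (i ≠ k ∨ j ≠ l) → ∀ a b, a+2 ≤ ℓ → b+2 ≤ ℓ →
      ¬ G.Adj (ivV G W Λ m i j a) (ivV G W Λ m k l b) := by
    intro i j k l hik hij hkl hj hl hne a b ha hb hA
    by_cases h0 : i = k
    · subst h0
      rcases Nat.lt_trichotomy j l with h1 | h1 | h1
      · exact hG4 a b ha hb (TT a b ha hb 0 1 0 2 i j l (s+4*t+4) 0 1 2 3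
          (by omega) (by omega) (by omega) (by omega)
        (by omega) (by omega) (by omega) (by omega) hA)
      · rcases hne with h | h <;> omega
      · exact hG4 b a hb ha (TT b a hb ha 0 1 0 2 i l j (s+4*t+4) 0 1 2 3
          (by omega) (by omega) (by omega) (by omega)
        (by omega) (by omega) (by omega) (by omega) hA.symm)
    · have h0' : i < k := by omega
      rcases Nat.lt_trichotomy j k with h1 | h1 | h1
      · exact hG1 a b ha hb (TT a b ha hb 0 1 2 3 i j k l 0 1 2 3
          (by omega) (by omega) (by omega) (by omega)
        (by omega) (by omega) (by omega) (by omega) hA)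
      · subst h1
        exact hG5 a b ha hb (TT a b ha hb 0 1 1 2 i j l (s+4*t+4) 0 1 2 3
          (by omega) (by omega) (by omega) (by omega)
        (by omega) (by omega) (by omega) (by omega) hA)
      · rcases Nat.lt_trichotomy j l with h2 | h2 | h2
        · exact hG2 a b ha hb (TT a b ha hb 0 2 1 3 i k j l 0 1 2 3
            (by omega) (by omega) (by omega) (by omega)
        (by omega) (by omega) (by omega) (by omega) hA)
        · subst h2
          exact hG6 a b ha hb (TT a b ha hb 0 2 1 2 i k j (s+4*t+4) 0 1 2 3
            (by omega) (by omega) (by omega) (by omega)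
        (by omega) (by omega) (by omega) (by omega) hA)
        · exact hG3 a b ha hb (TT a b ha hb 0 3 1 2 i k l j 0 1 2 3
            (by omega) (by omega) (by omega) (by omega)
        (by omega) (by omega) (by omega) (by omega) hA)
  have core : ∀ (i j k l : ℕ), i < j → k < l → j ≤ s+4*t+3 → l ≤ s+4*t+3 →
      (i ≠ k ∨ j ≠ l) → ∀ a b, a+2 ≤ ℓ → b+2 ≤ ℓ →
      ¬ G.Adj (ivV G W Λ m i j a) (ivV G W Λ m k l b) := by
    intro i j k l hij hkl hj hl hne a b ha hb hA
    rcases Nat.le_total i k with h | h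
    · exact core0 i j k l h hij hkl hj hl hne a b ha hb hA
    · refine core0 k l i j h hkl hij hl hj ?_ b a hb ha hA.symm
      rcases hne with h' | h'
      · exact Or.inl h'.symm
      · exact Or.inr h'.symm
  -- the stable web subset
  refine Or.inr ⟨Finset.image (fun k : Fin s => m (k:ℕ)) Finset.univ, ?_, ?_, ?_, ?_, ?_⟩
  · intro x hx
    obtain ⟨k, -, rfl⟩ := Finset.mem_image.mp hx
    have := k.isLt
    exact hmW _ (by omega)
  · rw [Finset.card_image_of_injOn, Finset.card_univ, Fintype.card_fin]
    intro k _ l _ h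
    have hk := k.isLt; have hl := l.isLt
    exact Fin.ext (hminj _ _ (by omega) (by omega) h)
  · intro x hx y hy hA
    obtain ⟨k, -, rfl⟩ := Finset.mem_image.mp (Finset.mem_coe.mp hx)
    obtain ⟨l, -, rfl⟩ := Finset.mem_image.mp (Finset.mem_coe.mp hy)
    have hk := k.isLt; have hl := l.isLt
    rcases Nat.lt_trichotomy (k:ℕ) (l:ℕ) with h | h | h
    · exact stab _ _ h (by omega) hA
    · rw [show ((k:ℕ)) = ((l:ℕ)) from h] at hA
      exact G.irrefl hA
    · exact stab _ _ h (by omega) hA.symm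
  · intro x hxS y hyS z hzS hxy hxz hyW hzW hyz
    obtain ⟨k0, -, rfl⟩ := Finset.mem_image.mp hxS
    obtain ⟨k1, -, hk1⟩ := Finset.mem_image.mp hyS
    obtain ⟨k2, -, hk2⟩ := Finset.mem_image.mp hzS
    subst hk1
    subst hk2
    have hk0 := k0.isLt; have hk1' := k1.isLt; have hk2' := k2.isLt
    intro x' hx' v hv
    have hx'e : x' = m (k0:ℕ) := Set.mem_singleton_iff.mp hx'
    subst hx'e
    have hne12 : (k1:ℕ) ≠ (k2:ℕ) := fun h => hyz (congrArg m h)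
    have hne01 : (k0:ℕ) ≠ (k1:ℕ) := fun h => hxy (congrArg m h)
    have hne02 : (k0:ℕ) ≠ (k2:ℕ) := fun h => hxz (congrArg m h)
    rcases Nat.lt_trichotomy (k1:ℕ) (k2:ℕ) with h | h | h
    · obtain ⟨a, ha, hveq⟩ := (mem_interior_iff hweb hyW hzW hyz).mp hv
      rw [hlen _ _ h (by omega)] at ha
      rw [hveq]
      exact vertInt (k0:ℕ) (k1:ℕ) (k2:ℕ) a (by omega) h (by omega) hne01 hne02 ha
    · omega
    · rw [interiorFlip hweb hyW hzW hyz] at hv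
      obtain ⟨a, ha, hveq⟩ := (mem_interior_iff hweb hzW hyW hyz.symm).mp hv
      rw [hlen _ _ h (by omega)] at ha
      rw [hveq]
      exact vertInt (k0:ℕ) (k2:ℕ) (k1:ℕ) a (by omega) h (by omega) hne02 hne01 ha
  · intro x hxS y hyS x' hx'S y' hy'S hxW hyW hx'W hy'W hxy hxy' hsetne
    obtain ⟨k0, -, rfl⟩ := Finset.mem_image.mp hxS
    obtain ⟨k1, -, hk1⟩ := Finset.mem_image.mp hyS
    obtain ⟨k2, -, hk2⟩ := Finset.mem_image.mp hx'S
    obtain ⟨k3, -, hk3⟩ := Finset.mem_image.mp hy'S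
    subst hk1
    subst hk2
    subst hk3
    have hk0 := k0.isLt; have hk1' := k1.isLt
    have hk2' := k2.isLt; have hk3' := k3.isLt
    have hne01 : (k0:ℕ) ≠ (k1:ℕ) := fun h => hxy (congrArg m h)
    have hne23 : (k2:ℕ) ≠ (k3:ℕ) := fun h => hxy' (congrArg m h)
    have main : ∀ (i j k l : ℕ), i < j → k < l → j ≤ s+4*t+3 → l ≤ s+4*t+3 →
        ({m i, m j} : Set V) ≠ {m k, m l} →
        ∀ (hWi : m i ∈ W) (hWj : m j ∈ W) (hWk : m k ∈ W) (hWl : m l ∈ W)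
          (hijne : m i ≠ m j) (hklne : m k ≠ m l) (v v' : V),
        v ∈ walkInterior G (Λ (m i) (m j) hWi hWj hijne) →
        v' ∈ walkInterior G (Λ (m k) (m l) hWk hWl hklne) → ¬ G.Adj v v' := by
      intro i j k l hij hkl hj hl hsne hWi hWj hWk hWl hijne hklne v v' hv hv'
      obtain ⟨a, ha, hveq⟩ := (mem_interior_iff hweb hWi hWj hijne).mp hv
      obtain ⟨b, hb, hveq'⟩ := (mem_interior_iff hweb hWk hWl hklne).mp hv'
      rw [hlen _ _ hij hj] at ha
      rw [hlen _ _ hkl hl] at hb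
      rw [hveq, hveq']
      have hidxne : i ≠ k ∨ j ≠ l := by
        by_contra hc
        push_neg at hc
        exact hsne (by rw [hc.1, hc.2])
      exact core i j k l hij hkl hj hl hidxne a b ha hb
    intro v hv v' hv'
    rcases Nat.lt_trichotomy (k0:ℕ) (k1:ℕ) with h01 | h01 | h01
    · rcases Nat.lt_trichotomy (k2:ℕ) (k3:ℕ) with h23 | h23 | h23
      · exact main _ _ _ _ h01 h23 (by omega) (by omega) hsetne hxW hyW hx'W hy'W hxy hxy'
          v v' hv hv'
      · omega
      · rw [interiorFlip hweb hx'W hy'W hxy'] at hv'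
        refine main _ _ _ _ h01 h23 (by omega) (by omega) ?_ hxW hyW hy'W hx'W hxy hxy'.symm
          v v' hv hv'
        rw [Set.pair_comm (m (k3:ℕ)) (m (k2:ℕ))]
        exact hsetne
    · omega
    · rw [interiorFlip hweb hxW hyW hxy] at hv
      rcases Nat.lt_trichotomy (k2:ℕ) (k3:ℕ) with h23 | h23 | h23
      · refine main _ _ _ _ h01 h23 (by omega) (by omega) ?_ hyW hxW hx'W hy'W hxy.symm hxy'
          v v' hv hv'
        rw [Set.pair_comm (m (k1:ℕ)) (m (k0:ℕ))]
        exact hsetne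
      · omega
      · rw [interiorFlip hweb hx'W hy'W hxy'] at hv'
        refine main _ _ _ _ h01 h23 (by omega) (by omega) ?_ hyW hxW hy'W hx'W hxy.symm hxy'.symm
          v v' hv hv'
        rw [Set.pair_comm (m (k1:ℕ)) (m (k0:ℕ)), Set.pair_comm (m (k3:ℕ)) (m (k2:ℕ))]
        exact hsetne

/-- **Theorem 1.3 (main theorem).** For all `r ∈ ℕ ∪ {0}` and `s, t ∈ ℕ⁺` there is
`Ω = Ω(r,s,t) ∈ ℕ⁺` such that for every graph `G` and every `(r, Ω)`-web `(W, Λ)` in `G`,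
either `G` contains `K_t` or `K_{t,t}` as an induced subgraph, or there is an `s`-subset
`S ⊆ W` which is stable, with every `x ∈ S` anticomplete to the interior `Λ*_{y,z}` for all
three vertices `x, y, z ∈ S`, and with the interiors `Λ*_{x,y}`, `Λ*_{x',y'}` anticomplete
for all distinct 2-subsets `{x,y}, {x',y'}` of `S`. -/
theorem statement_0 (r s t : ℕ) (hs : 0 < s) (ht : 0 < t) :
    ∃ Ω : ℕ, 0 < Ω ∧
      ∀ (V : Type) [Fintype V] [DecidableEq V] (G : SimpleGraph V) (W : Finset V)
        (Λ : ∀ x y : V, x ∈ W → y ∈ W → x ≠ y → G.Walk x y),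
        IsWeb G W Λ → W.card = Ω →
        (∀ x y (hx : x ∈ W) (hy : y ∈ W) (hxy : x ≠ y), (Λ x y hx hy hxy).length ≤ r + 1) →
        (Nonempty ((⊤ : SimpleGraph (Fin t)) ↪g G) ∨
          Nonempty (completeBipartiteGraph (Fin t) (Fin t) ↪g G)) ∨
        ∃ S : Finset V, S ⊆ W ∧ S.card = s ∧
          StableSet G ↑S ∧
          (∀ x ∈ S, ∀ y ∈ S, ∀ z ∈ S, x ≠ y → x ≠ z →
            ∀ (hy : y ∈ W) (hz : z ∈ W) (hyz : y ≠ z),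
              Anticomplete G {x} (walkInterior G (Λ y z hy hz hyz))) ∧
          (∀ x ∈ S, ∀ y ∈ S, ∀ x' ∈ S, ∀ y' ∈ S,
            ∀ (hx : x ∈ W) (hy : y ∈ W) (hx' : x' ∈ W) (hy' : y' ∈ W)
              (hxy : x ≠ y) (hxy' : x' ≠ y'), ({x, y} : Set V) ≠ {x', y'} →
              Anticomplete G (walkInterior G (Λ x y hx hy hxy))
                (walkInterior G (Λ x' y' hx' hy' hxy'))) := by
  classical
  obtain ⟨N, hN⟩ := myRamsey 4
    ((Fin 4 → Fin 4 → Fin (r+3)) × (DescR r → DescR r → Bool)) (s+4*t+6)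
  refine ⟨N + (s+4*t+6), by omega, ?_⟩
  intro V _ _ G W Λ hweb hcard hr
  haveI hVne : Nonempty V := by
    have hW : W.Nonempty := Finset.card_pos.mp (by omega)
    exact ⟨hW.choose⟩
  set code : V → ℕ := fun v => ((Fintype.equivFin V) v : ℕ) with hcodedef
  have hcode_inj : Function.Injective code := fun a b h =>
    (Fintype.equivFin V).injective (Fin.ext h)
  set dec : ℕ → V := Function.invFun code with hdecdef
  have hdec : ∀ v, dec (code v) = v := Function.leftInverse_invFun hcode_inj
  have hS₀ : N ≤ (W.image code).card := by
    rw [Finset.card_image_of_injective _ hcode_inj, hcard]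
    omega
  obtain ⟨T, hTsub, hTcard, c₀, hc₀⟩ := hN
    (fun A => colOf G W Λ r (fun p => dec ((A.sort (· ≤ ·)).getD (p:ℕ) 0)))
    (W.image code) hS₀
  obtain ⟨T', hT'sub, hT'card⟩ := Finset.exists_subset_card_eq hTcard
  set L : List ℕ := T'.sort (· ≤ ·) with hLdef
  have hLlen : L.length = s+4*t+6 := by rw [hLdef, Finset.length_sort, hT'card]
  have hLnd : L.Nodup := by rw [hLdef]; exact Finset.sort_nodup _ _
  have hLsorted : List.Pairwise (· < ·) L := by rw [hLdef]; exact (Finset.sortedLT_sort _).pairwise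
  have hLmemT' : ∀ x ∈ L, x ∈ T' := by
    intro x hx
    exact (Finset.mem_sort _).mp (by rwa [hLdef] at hx)
  have hLmem : ∀ x ∈ L, x ∈ W.image code := fun x hx => hTsub (hT'sub (hLmemT' x hx))
  set m : ℕ → V := fun i => dec (L.getD i 0) with hmdef
  have hgetW : ∀ i, i < L.length → ∃ w ∈ W, code w = L.getD i 0 := by
    intro i hilt
    exact Finset.mem_image.mp (hLmem _ (by
      rw [List.getD_eq_getElem _ _ hilt]
      exact List.getElem_mem _))
  have hmcode : ∀ i, i < L.length → code (m i) = L.getD i 0 := by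
    intro i hilt
    obtain ⟨w, hw, hwe⟩ := hgetW i hilt
    rw [hmdef]
    simp only
    rw [← hwe, hdec]
  have hmW : ∀ i, i ≤ s+4*t+5 → m i ∈ W := by
    intro i hi
    have hilt : i < L.length := by omega
    obtain ⟨w, hw, hwe⟩ := hgetW i hilt
    rw [hmdef]
    simp only
    rw [← hwe, hdec]
    exact hw
  have hminj : ∀ i j, i ≤ s+4*t+5 → j ≤ s+4*t+5 → m i = m j → i = j := by
    intro i j hi hj h
    have hilt : i < L.length := by omega
    have hjlt : j < L.length := by omega
    have e : L.getD i 0 = L.getD j 0 := by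
      rw [← hmcode i hilt, ← hmcode j hjlt, h]
    rw [List.getD_eq_getElem _ _ hilt, List.getD_eq_getElem _ _ hjlt] at e
    exact (hLnd.getElem_inj_iff).mp e
  have hinv : ∀ q q' : Fin 4 → ℕ, StrictMono q → StrictMono q' →
      (∀ z, q z ≤ s+4*t+5) → (∀ z, q' z ≤ s+4*t+5) →
      colOf G W Λ r (m ∘ q) = colOf G W Λ r (m ∘ q') := by
    have key : ∀ q : Fin 4 → ℕ, StrictMono q → (∀ z, q z ≤ s+4*t+5) →
        colOf G W Λ r (m ∘ q) = c₀ := by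
      intro q hq hqb
      set g : Fin 4 → ℕ := fun p => L.getD (q p) 0 with hgdef
      have hglt : ∀ p, q p < L.length := fun p => by have := hqb p; omega
      have hg : StrictMono g := by
        intro p p' hpp
        rw [hgdef]
        simp only
        rw [List.getD_eq_getElem _ _ (hglt p), List.getD_eq_getElem _ _ (hglt p')]
        exact List.pairwise_iff_getElem.mp hLsorted _ _ _ _ (hq hpp)
      have hsub : Finset.image g Finset.univ ⊆ T := by
        intro x hx
        obtain ⟨p, -, rfl⟩ := Finset.mem_image.mp hx
        have hgL : g p ∈ L := by
          rw [hgdef]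
          simp only
          rw [List.getD_eq_getElem _ _ (hglt p)]
          exact List.getElem_mem _
        exact hT'sub (hLmemT' _ hgL)
      have hcardA : (Finset.image g Finset.univ).card = 4 := by
        rw [Finset.card_image_of_injective _ hg.injective, Finset.card_univ,
          Fintype.card_fin]
      have hf := hc₀ _ hsub hcardA
      rw [← hf]
      have hsort : (Finset.image g Finset.univ).sort (· ≤ ·) = List.ofFn g := sortImage hg
      congr 1
      funext p
      rw [hsort]
      have hp4 : (p:ℕ) < (List.ofFn g).length := by
        rw [List.length_ofFn]
        exact p.isLt
      rw [List.getD_eq_getElem _ _ hp4, List.getElem_ofFn]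
      simp [hmdef, hgdef]
    intro q q' hq hq' hqb hq'b
    rw [key q hq hqb, key q' hq' hq'b]
  exact auxMain r s t hs ht G W Λ hweb hr m hmW hminj hinv
end Aux
end

section
/- For all a, b, c, s ∈ ℕ⁺, there exists θ = θ(a,b,c,s) ∈ ℕ⁺ with the following property. Let G be a graph and let (W,Λ) be a θ-web in G. Then one of the following holds: (a) there exist A ⊆ W with |A| = a and a collection 𝓑 of pairwise disjoint 2-subsets of W \ A with |𝓑| = b such that for every x ∈ A and every {y,z} ∈ 𝓑, x has a neighbor in Λ_{y,z}; or (b) there exist disjoint subsets 𝓒 and 𝓒' of the set of 2-subsets of W, with |𝓒| = |𝓒'| = c, such that for every {x,y} ∈ 𝓒 and every {x',y'} ∈ 𝓒', the sets Λ*_{x,y} and Λ*_{x',y'} are not anticomplete in G; or (c) there exists S ⊆ W with |S| = s such that S is a stable set in G, for all three vertices x, y, z ∈ S the vertex x is anticomplete to Λ*_{y,z}, and for all distinct 2-subsets {x,y}, {x',y'} of S the sets Λ*_{x,y} and Λ*_{x',y'} are anticomplete in G. -/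
/-!
Common definitions: anticomplete sets, stable sets, induced paths,
and webs, following the paper's terminology.
-/

variable {V : Type} {α : Type}

open Finset in
theorem myRamsey_s1 (α : Type) [Fintype α] [DecidableEq α] [Nonempty α] :
    ∀ (r n : ℕ), ∃ N : ℕ, ∀ (f : Finset ℕ → α) (T : Finset ℕ), N ≤ T.card →
      ∃ M : Finset ℕ, M ⊆ T ∧ M.card = n ∧
        ∀ A : Finset ℕ, A ⊆ M → A.card = r → ∀ B : Finset ℕ, B ⊆ M → B.card = r →
          f A = f B := by
  intro r
  induction r with
  | zero =>
    intro n
    refine ⟨n, fun f T hT => ?_⟩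
    obtain ⟨M, hMT, hMcard⟩ := Finset.exists_subset_card_eq (s := T) (n := n) hT
    refine ⟨M, hMT, hMcard, fun A _ hA B _ hB => ?_⟩
    rw [Finset.card_eq_zero] at hA hB; rw [hA, hB]
  | succ r IH =>
    -- pre-homogeneous lemma
    have pre : ∀ m : ℕ, ∃ N : ℕ, ∀ (f : Finset ℕ → α) (T : Finset ℕ), N ≤ T.card →
        ∃ (P : Finset ℕ) (c : ℕ → α), P ⊆ T ∧ P.card = m ∧
          ∀ A : Finset ℕ, A ⊆ P → A.card = r + 1 →
            ∀ x ∈ A, (∀ y ∈ A, x ≤ y) → f A = c x := by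
      intro m
      induction m with
      | zero =>
        refine ⟨0, fun f T _ => ⟨∅, fun _ => Classical.arbitrary α, Finset.empty_subset T,
          Finset.card_empty, fun A hA hAcard x hx _ => ?_⟩⟩
        have : A = ∅ := Finset.subset_empty.mp hA
        simp [this] at hAcard
      | succ m IHm =>
        obtain ⟨Nm, hNm⟩ := IHm
        obtain ⟨R, hR⟩ := IH (Nm + r)
        refine ⟨R + 1, fun f T hT => ?_⟩
        have hTne : T.Nonempty := Finset.card_pos.mp (by omega)
        set a := T.min' hTne with ha
        have haT : a ∈ T := T.min'_mem hTne
        set T' := T.erase a with hT'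
        have hT'card : R ≤ T'.card := by
          rw [hT', Finset.card_erase_of_mem haT]; omega
        obtain ⟨M, hMT', hMcard, hMhom⟩ := hR (fun B => f (insert a B)) T' hT'card
        obtain ⟨B₀, hB₀M, hB₀card⟩ := Finset.exists_subset_card_eq (s := M) (n := r) (by omega)
        set v := f (insert a B₀) with hv
        obtain ⟨P', c', hP'M, hP'card, hP'⟩ := hNm f M (by omega)
        have haP' : a ∉ P' := fun h => Finset.notMem_erase a T (hMT' (hP'M h))
        refine ⟨insert a P', fun x => if x = a then v else c' x, ?_, ?_, ?_⟩
        · intro x hx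
          rcases Finset.mem_insert.mp hx with h | h
          · rw [h]; exact haT
          · exact Finset.erase_subset a T (hMT' (hP'M h))
        · rw [Finset.card_insert_of_notMem haP', hP'card]
        · intro A hA hAcard x hx hmin
          by_cases hxa : x = a
          · subst hxa
            have hxA : a ∈ A := hx
            have hAe : A.erase a ⊆ P' := by
              intro y hy
              have := hA (Finset.erase_subset a A hy)
              rcases Finset.mem_insert.mp this with h | h
              · exact absurd h (Finset.ne_of_mem_erase hy)
              · exact h
            have hAecard : (A.erase a).card = r := by
              rw [Finset.card_erase_of_mem hxA, hAcard]; omega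
            have h5 : f (insert a (A.erase a)) = f (insert a B₀) :=
              hMhom _ (hAe.trans hP'M) hAecard _ hB₀M hB₀card
            rw [Finset.insert_erase hxA] at h5
            rw [h5]; simp [hv]
          · have haA : a ∉ A := by
              intro haA
              have h1 : x ≤ a := hmin a haA
              have h2 : a ≤ x := T.min'_le x (by
                rcases Finset.mem_insert.mp (hA hx) with h | h
                · exact absurd h hxa
                · exact Finset.erase_subset a T (hMT' (hP'M h)))
              exact hxa (le_antisymm h1 h2)
            have hAP' : A ⊆ P' := by
              intro y hy
              rcases Finset.mem_insert.mp (hA hy) with h | h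
              · exact absurd (h ▸ hy) haA
              · exact h
            show f A = if x = a then v else c' x
            rw [if_neg hxa]
            exact hP' A hAP' hAcard x hx hmin
    intro n
    obtain ⟨N, hN⟩ := pre (Fintype.card α * n)
    refine ⟨N, fun f T hT => ?_⟩
    obtain ⟨P, c, hPT, hPcard, hP⟩ := hN f T hT
    obtain ⟨w, -, hw⟩ := Finset.exists_le_card_fiber_of_mul_le_card_of_maps_to
      (f := c) (s := P) (t := Finset.univ) (fun x _ => Finset.mem_univ (c x))
      Finset.univ_nonempty (by rw [hPcard, Finset.card_univ])
    obtain ⟨M, hMfil, hMcard⟩ := Finset.exists_subset_card_eq (n := n) hw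
    have hMP : M ⊆ P := hMfil.trans (Finset.filter_subset _ _)
    refine ⟨M, hMP.trans hPT, hMcard, fun A hA hAcard B hB hBcard => ?_⟩
    have key : ∀ C : Finset ℕ, C ⊆ M → C.card = r + 1 → f C = w := by
      intro C hC hCcard
      have hCne : C.Nonempty := Finset.card_pos.mp (by omega)
      have h1 := hP C (hC.trans hMP) hCcard (C.min' hCne) (C.min'_mem hCne)
        (fun y hy => C.min'_le y hy)
      have h2 : c (C.min' hCne) = w :=
        (Finset.mem_filter.mp (hMfil (hC (C.min'_mem hCne)))).2
      rw [h1, h2]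
    rw [key A hA hAcard, key B hB hBcard]

/- ### helper layer -/

section Helpers

variable {V : Type} (G : SimpleGraph V) (W : Finset V)
  (Λ : ∀ x y : V, x ∈ W → y ∈ W → x ≠ y → G.Walk x y)

open Classical in
noncomputable def pathSet (y z : V) : Set V :=
  if h : y ∈ W ∧ z ∈ W ∧ y ≠ z then walkVerts G (Λ y z h.1 h.2.1 h.2.2) else ∅

open Classical in
noncomputable def intSet (y z : V) : Set V :=
  if h : y ∈ W ∧ z ∈ W ∧ y ≠ z then walkInterior G (Λ y z h.1 h.2.1 h.2.2) else ∅

theorem pathSet_eq {y z : V} (hy : y ∈ W) (hz : z ∈ W) (hyz : y ≠ z) :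
    pathSet G W Λ y z = walkVerts G (Λ y z hy hz hyz) := dif_pos ⟨hy, hz, hyz⟩

theorem intSet_eq {y z : V} (hy : y ∈ W) (hz : z ∈ W) (hyz : y ≠ z) :
    intSet G W Λ y z = walkInterior G (Λ y z hy hz hyz) := dif_pos ⟨hy, hz, hyz⟩

theorem walkVerts_reverse {x y : V} (p : G.Walk x y) :
    walkVerts G p.reverse = walkVerts G p := by
  ext v; simp [walkVerts]

theorem walkInterior_reverse {x y : V} (p : G.Walk x y) :
    walkInterior G p.reverse = walkInterior G p := by
  ext v; simp [walkInterior, Set.pair_comm x y, and_comm]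

variable (hweb : IsWeb G W Λ)
include hweb

theorem pathSet_symm (y z : V) : pathSet G W Λ y z = pathSet G W Λ z y := by
  unfold pathSet
  by_cases h : y ∈ W ∧ z ∈ W ∧ y ≠ z
  · rw [dif_pos h, dif_pos ⟨h.2.1, h.1, h.2.2.symm⟩]
    rw [hweb.symm y z h.1 h.2.1 h.2.2, walkVerts_reverse]
  · rw [dif_neg h, dif_neg (by tauto)]

theorem intSet_symm (y z : V) : intSet G W Λ y z = intSet G W Λ z y := by
  unfold intSet
  by_cases h : y ∈ W ∧ z ∈ W ∧ y ≠ z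
  · rw [dif_pos h, dif_pos ⟨h.2.1, h.1, h.2.2.symm⟩]
    rw [hweb.symm y z h.1 h.2.1 h.2.2, walkInterior_reverse]
  · rw [dif_neg h, dif_neg (by tauto)]

omit hweb

/-- attachment relation -/
noncomputable def att (x y z : V) : Prop := ∃ v ∈ pathSet G W Λ y z, G.Adj x v

/-- conflict relation -/
noncomputable def cnf (p q r t : V) : Prop :=
  ¬ Anticomplete G (intSet G W Λ p q) (intSet G W Λ r t)

include hweb
theorem att_symm (x y z : V) : att G W Λ x y z ↔ att G W Λ x z y := by
  unfold att; rw [pathSet_symm G W Λ hweb]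

theorem cnf_swap₁ (p q r t : V) : cnf G W Λ p q r t ↔ cnf G W Λ q p r t := by
  unfold cnf; rw [intSet_symm G W Λ hweb]

theorem cnf_swap₂ (p q r t : V) : cnf G W Λ p q r t ↔ cnf G W Λ p q t r := by
  unfold cnf; rw [intSet_symm G W Λ hweb r t]
omit hweb

theorem anticomplete_comm {X Y : Set V} (h : Anticomplete G X Y) : Anticomplete G Y X :=
  fun y hy x hx hadj => h hx hy hadj.symm

theorem cnf_comm (p q r t : V) : cnf G W Λ p q r t ↔ cnf G W Λ r t p q := by
  unfold cnf
  constructor <;> exact fun h h' => h (anticomplete_comm G h')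

theorem cnf_def (p q r t : V) : cnf G W Λ p q r t ↔
    ¬ Anticomplete G (intSet G W Λ p q) (intSet G W Λ r t) := Iff.rfl

theorem att_def (x y z : V) :
    att G W Λ x y z ↔ ∃ v ∈ pathSet G W Λ y z, G.Adj x v := Iff.rfl

theorem mem_pathSet_left {y z : V} (hy : y ∈ W) (hz : z ∈ W) (hyz : y ≠ z) :
    y ∈ pathSet G W Λ y z := by
  rw [pathSet_eq G W Λ hy hz hyz]
  exact SimpleGraph.Walk.start_mem_support _

theorem intSet_subset (y z : V) : intSet G W Λ y z ⊆ pathSet G W Λ y z := by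
  unfold intSet pathSet
  by_cases h : y ∈ W ∧ z ∈ W ∧ y ≠ z
  · rw [dif_pos h, dif_pos h]; exact Set.diff_subset
  · rw [dif_neg h, dif_neg h]

abbrev WebColor := Bool × Bool × Bool × Bool × Bool × Bool × Bool × Bool × Bool × Bool

open Classical in
noncomputable def colorOf (v1 v2 v3 v4 : V) : WebColor :=
  (decide (G.Adj v1 v2),
   decide (att G W Λ v1 v2 v3), decide (att G W Λ v2 v1 v3), decide (att G W Λ v3 v1 v2),
   decide (cnf G W Λ v1 v2 v3 v4), decide (cnf G W Λ v1 v3 v2 v4),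
   decide (cnf G W Λ v1 v4 v2 v3),
   decide (cnf G W Λ v1 v2 v1 v3), decide (cnf G W Λ v1 v2 v2 v3),
   decide (cnf G W Λ v1 v3 v2 v3))

noncomputable def chi (ι : ℕ → V) : Finset ℕ → WebColor := fun A =>
  match A.sort (· ≤ ·) with
  | [i, j, k, l] => colorOf G W Λ (ι i) (ι j) (ι k) (ι l)
  | _ => default

theorem sort4 {a b c d : ℕ} (hab : a < b) (hbc : b < c) (hcd : c < d) :
    ({a, b, c, d} : Finset ℕ).sort (· ≤ ·) = [a, b, c, d] := by
  rw [Finset.sort_insert _ (by intro x hx; simp at hx; omega) (by simp; omega),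
    Finset.sort_insert _ (by intro x hx; simp at hx; omega) (by simp; omega),
    Finset.sort_insert _ (by intro x hx; simp at hx; omega) (by simp; omega),
    Finset.sort_singleton]

theorem chi_quad (ι : ℕ → V) {a b c d : ℕ} (hab : a < b) (hbc : b < c) (hcd : c < d) :
    chi G W Λ ι {a, b, c, d} = colorOf G W Λ (ι a) (ι b) (ι c) (ι d) := by
  unfold chi; rw [sort4 hab hbc hcd]

theorem pairEq {α : Type} [DecidableEq α] {x y u v : α} (hxy : x ≠ y)
    (h : ({x, y} : Finset α) = {u, v}) : (x = u ∧ y = v) ∨ (x = v ∧ y = u) := by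
  have hx : x ∈ ({u, v} : Finset α) := h ▸ Finset.mem_insert_self x {y}
  have hy : y ∈ ({u, v} : Finset α) := h ▸ Finset.mem_insert_of_mem (Finset.mem_singleton_self y)
  have hu : u ∈ ({x, y} : Finset α) := h ▸ Finset.mem_insert_self u {v}
  have hv : v ∈ ({x, y} : Finset α) := h ▸ Finset.mem_insert_of_mem (Finset.mem_singleton_self v)
  simp only [Finset.mem_insert, Finset.mem_singleton] at hx hy hu hv
  rcases hx with h1 | h1 <;> rcases hy with h2 | h2 <;> [skip; tauto; tauto; skip] <;>
    · subst h1; subst h2; tauto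

end Helpers


/-- **Theorem 2.4.** For all `a, b, c, s ∈ ℕ⁺` there is `θ = θ(a,b,c,s) ∈ ℕ⁺` such that
for every graph `G` and every `θ`-web `(W, Λ)` in `G`, one of the following holds:
(a) there are `A ⊆ W` with `|A| = a` and a collection `𝓑` of `b` pairwise disjoint
2-subsets of `W \ A` such that every `x ∈ A` has a neighbor in `Λ_{y,z}` for every
`{y,z} ∈ 𝓑`; (b) there are disjoint collections `𝓒, 𝓒'` of 2-subsets of `W`, each of
size `c`, such that `Λ*_{x,y}` and `Λ*_{x',y'}` are not anticomplete for every
`{x,y} ∈ 𝓒` and `{x',y'} ∈ 𝓒'`; (c) there is an `s`-subset `S ⊆ W` which is stable,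
with every `x ∈ S` anticomplete to `Λ*_{y,z}` for all three vertices `x, y, z ∈ S`, and
with `Λ*_{x,y}`, `Λ*_{x',y'}` anticomplete for all distinct 2-subsets `{x,y}, {x',y'}`
of `S`. -/
theorem statement_1 (a b c s : ℕ) (ha : 0 < a) (hb : 0 < b) (hc : 0 < c) (hs : 0 < s) :
    ∃ θ : ℕ, 0 < θ ∧
      ∀ (V : Type) [Fintype V] [DecidableEq V] (G : SimpleGraph V) (W : Finset V)
        (Λ : ∀ x y : V, x ∈ W → y ∈ W → x ≠ y → G.Walk x y),
        IsWeb G W Λ → W.card = θ →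
        -- (a)
        (∃ A : Finset V, A ⊆ W ∧ A.card = a ∧
          ∃ 𝓑 : Finset (Finset V), 𝓑.card = b ∧
            (∀ B ∈ 𝓑, B.card = 2 ∧ B ⊆ W \ A) ∧
            (∀ B ∈ 𝓑, ∀ B' ∈ 𝓑, B ≠ B' → Disjoint B B') ∧
            (∀ x ∈ A, ∀ B ∈ 𝓑, ∀ y z (hy : y ∈ W) (hz : z ∈ W) (hyz : y ≠ z),
              B = {y, z} → ∃ v ∈ walkVerts G (Λ y z hy hz hyz), G.Adj x v)) ∨
        -- (b)
        (∃ 𝓒 𝓒' : Finset (Finset V), Disjoint 𝓒 𝓒' ∧ 𝓒.card = c ∧ 𝓒'.card = c ∧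
          (∀ C ∈ 𝓒 ∪ 𝓒', C.card = 2 ∧ C ⊆ W) ∧
          (∀ C ∈ 𝓒, ∀ C' ∈ 𝓒',
            ∀ x y x' y' (hx : x ∈ W) (hy : y ∈ W) (hx' : x' ∈ W) (hy' : y' ∈ W)
              (hxy : x ≠ y) (hxy' : x' ≠ y'), C = {x, y} → C' = {x', y'} →
              ¬ Anticomplete G (walkInterior G (Λ x y hx hy hxy))
                  (walkInterior G (Λ x' y' hx' hy' hxy')))) ∨
        -- (c)
        (∃ S : Finset V, S ⊆ W ∧ S.card = s ∧
          StableSet G ↑S ∧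
          (∀ x ∈ S, ∀ y ∈ S, ∀ z ∈ S, x ≠ y → x ≠ z →
            ∀ (hy : y ∈ W) (hz : z ∈ W) (hyz : y ≠ z),
              Anticomplete G {x} (walkInterior G (Λ y z hy hz hyz))) ∧
          (∀ x ∈ S, ∀ y ∈ S, ∀ x' ∈ S, ∀ y' ∈ S,
            ∀ (hx : x ∈ W) (hy : y ∈ W) (hx' : x' ∈ W) (hy' : y' ∈ W)
              (hxy : x ≠ y) (hxy' : x' ≠ y'), ({x, y} : Set V) ≠ {x', y'} →
              Anticomplete G (walkInterior G (Λ x y hx hy hxy))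
                (walkInterior G (Λ x' y' hx' hy' hxy')))) := by
  classical
  obtain ⟨N, hN⟩ := myRamsey_s1 WebColor 4 (a + 2*b + 6*c + s + 5 + 2)
  refine ⟨max N 1, lt_of_lt_of_le one_pos (le_max_right N 1), ?_⟩
  intro V _ _ G W Λ hweb hcard
  set n := a + 2*b + 6*c + s + 5 with hn
  set θ := max N 1 with hθ
  have hθpos : 0 < θ := lt_of_lt_of_le one_pos (le_max_right N 1)
  have hWne : W.Nonempty := Finset.card_pos.mp (by omega)
  obtain ⟨v₀, hv₀⟩ := hWne
  obtain ⟨M, hMsub, hMcard, hom⟩ := hN (chi G W Λ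
      (fun i => if h : i < θ then ((W.equivFin.trans (finCongr hcard)).symm ⟨i, h⟩ : V) else v₀))
    (Finset.range θ) (by rw [Finset.card_range]; exact le_max_left N 1)
  have card4 : ∀ {p q r t : ℕ}, p < q → q < r → r < t →
      ({p, q, r, t} : Finset ℕ).card = 4 := by
    intro p q r t h1 h2 h3
    rw [← Finset.length_sort (α := ℕ) (· ≤ ·), sort4 h1 h2 h3]
    rfl
  obtain ⟨u, umem, uinj, KEY⟩ : ∃ u : ℕ → V,
      (∀ t, t < n + 2 → u t ∈ W) ∧
      (∀ t t', t < n + 2 → t' < n + 2 → u t = u t' → t = t') ∧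
      (∀ p q r t, p < q → q < r → r < t → t < n + 2 →
        colorOf G W Λ (u p) (u q) (u r) (u t) = colorOf G W Λ (u 0) (u 1) (u 2) (u 3)) := by
    set e := (W.equivFin.trans (finCongr hcard)).symm with he
    set ι : ℕ → V :=
      (fun i => if h : i < θ then ((W.equivFin.trans (finCongr hcard)).symm ⟨i, h⟩ : V) else v₀)
      with hι
    set m := M.orderEmbOfFin hMcard with hm
    have mlt : ∀ i : Fin (n+2), (m i : ℕ) < θ := fun i =>
      Finset.mem_range.mp (hMsub (Finset.orderEmbOfFin_mem M hMcard i))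
    have ιmem : ∀ i, ∀ h : i < θ, ι i ∈ W := by
      intro i h; rw [hι]; simp only [dif_pos h]; exact (e ⟨i, h⟩).2
    have ιinj : ∀ i j, i < θ → j < θ → ι i = ι j → i = j := by
      intro i j hi hj hij
      rw [hι] at hij; simp only [dif_pos hi, dif_pos hj] at hij
      have : e ⟨i, hi⟩ = e ⟨j, hj⟩ := Subtype.coe_injective hij
      have := e.injective this
      exact congrArg Fin.val this
    have minj : ∀ p q : Fin (n+2), m p = m q → p = q := fun p q h =>
      (M.orderEmbOfFin hMcard).injective h
    refine ⟨fun t => if h : t < n + 2 then ι (m ⟨t, h⟩) else v₀, ?_, ?_, ?_⟩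
    · intro t ht; simp only [dif_pos ht]; exact ιmem _ (mlt _)
    · intro t t' ht ht' h
      simp only [dif_pos ht, dif_pos ht'] at h
      have h2 := ιinj _ _ (mlt _) (mlt _) h
      exact congrArg Fin.val (minj _ _ h2)
    · intro p q r t h1 h2 h3 h4
      have hp : p < n + 2 := by omega
      have hq : q < n + 2 := by omega
      have hr : r < n + 2 := by omega
      have h0 : (0:ℕ) < n + 2 := by omega
      have h1' : (1:ℕ) < n + 2 := by omega
      have h2' : (2:ℕ) < n + 2 := by omega
      have h3' : (3:ℕ) < n + 2 := by omega
      simp only [dif_pos hp, dif_pos hq, dif_pos hr, dif_pos h4,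
        dif_pos h0, dif_pos h1', dif_pos h2', dif_pos h3']
      have hmono := (M.orderEmbOfFin hMcard).strictMono
      have e1 : m ⟨p, hp⟩ < m ⟨q, hq⟩ := hmono (Fin.mk_lt_mk.mpr h1)
      have e2 : m ⟨q, hq⟩ < m ⟨r, hr⟩ := hmono (Fin.mk_lt_mk.mpr h2)
      have e3 : m ⟨r, hr⟩ < m ⟨t, h4⟩ := hmono (Fin.mk_lt_mk.mpr h3)
      have f1 : m ⟨0, h0⟩ < m ⟨1, h1'⟩ := hmono (Fin.mk_lt_mk.mpr Nat.zero_lt_one)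
      have f2 : m ⟨1, h1'⟩ < m ⟨2, h2'⟩ := hmono (Fin.mk_lt_mk.mpr Nat.one_lt_two)
      have f3 : m ⟨2, h2'⟩ < m ⟨3, h3'⟩ := hmono (Fin.mk_lt_mk.mpr (by omega))
      have hA : ({m ⟨p, hp⟩, m ⟨q, hq⟩, m ⟨r, hr⟩, m ⟨t, h4⟩} : Finset ℕ) ⊆ M := by
        intro x hx
        simp only [Finset.mem_insert, Finset.mem_singleton] at hx
        rcases hx with h|h|h|h <;> (subst h; exact Finset.orderEmbOfFin_mem M hMcard _)
      have hB : ({m ⟨0, h0⟩, m ⟨1, h1'⟩, m ⟨2, h2'⟩, m ⟨3, h3'⟩} : Finset ℕ) ⊆ M := by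
        intro x hx
        simp only [Finset.mem_insert, Finset.mem_singleton] at hx
        rcases hx with h|h|h|h <;> (subst h; exact Finset.orderEmbOfFin_mem M hMcard _)
      have := hom _ hA (card4 e1 e2 e3) _ hB (card4 f1 f2 f3)
      rwa [chi_quad G W Λ _ e1 e2 e3, chi_quad G W Λ _ f1 f2 f3] at this
  -- uniformity lemmas
  have extract : ∀ {p q r t p' q' r' t' : ℕ}, p < q → q < r → r < t → t < n + 2 →
      p' < q' → q' < r' → r' < t' → t' < n + 2 →
      colorOf G W Λ (u p) (u q) (u r) (u t) = colorOf G W Λ (u p') (u q') (u r') (u t') := by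
    intro p q r t p' q' r' t' h1 h2 h3 h4 h1' h2' h3' h4'
    rw [KEY p q r t h1 h2 h3 h4, KEY p' q' r' t' h1' h2' h3' h4']
  have Uadj : ∀ p q, p < q → q < n → (G.Adj (u p) (u q) ↔ G.Adj (u 0) (u 1)) := by
    intro p q h1 h2
    have h := extract (r := n) (t := n+1) (p' := 0) (q' := 1) (r' := 2) (t' := 3)
      h1 (by omega) (by omega) (by omega) (by omega) (by omega) (by omega) (by omega)
    simp only [colorOf, Prod.mk.injEq, decide_eq_decide] at h
    exact h.1
  have Uatt1 : ∀ p q r, p < q → q < r → r < n + 1 →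
      (att G W Λ (u p) (u q) (u r) ↔ att G W Λ (u 0) (u 1) (u 2)) := by
    intro p q r h1 h2 h3
    have h := extract (t := n+1) (p' := 0) (q' := 1) (r' := 2) (t' := 3)
      h1 h2 (by omega) (by omega) (by omega) (by omega) (by omega) (by omega)
    simp only [colorOf, Prod.mk.injEq, decide_eq_decide] at h
    exact h.2.1
  have Uatt2 : ∀ p q r, p < q → q < r → r < n + 1 →
      (att G W Λ (u q) (u p) (u r) ↔ att G W Λ (u 1) (u 0) (u 2)) := by
    intro p q r h1 h2 h3
    have h := extract (t := n+1) (p' := 0) (q' := 1) (r' := 2) (t' := 3)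
      h1 h2 (by omega) (by omega) (by omega) (by omega) (by omega) (by omega)
    simp only [colorOf, Prod.mk.injEq, decide_eq_decide] at h
    exact h.2.2.1
  have Uatt3 : ∀ p q r, p < q → q < r → r < n + 1 →
      (att G W Λ (u r) (u p) (u q) ↔ att G W Λ (u 2) (u 0) (u 1)) := by
    intro p q r h1 h2 h3
    have h := extract (t := n+1) (p' := 0) (q' := 1) (r' := 2) (t' := 3)
      h1 h2 (by omega) (by omega) (by omega) (by omega) (by omega) (by omega)
    simp only [colorOf, Prod.mk.injEq, decide_eq_decide] at h
    exact h.2.2.2.1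
  have Ucnf1 : ∀ p q r t, p < q → q < r → r < t → t < n + 2 →
      (cnf G W Λ (u p) (u q) (u r) (u t) ↔ cnf G W Λ (u 0) (u 1) (u 2) (u 3)) := by
    intro p q r t h1 h2 h3 h4
    have h := extract (p' := 0) (q' := 1) (r' := 2) (t' := 3)
      h1 h2 h3 h4 (by omega) (by omega) (by omega) (by omega)
    simp only [colorOf, Prod.mk.injEq, decide_eq_decide] at h
    exact h.2.2.2.2.1
  have Ucnf2 : ∀ p q r t, p < q → q < r → r < t → t < n + 2 →
      (cnf G W Λ (u p) (u r) (u q) (u t) ↔ cnf G W Λ (u 0) (u 2) (u 1) (u 3)) := by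
    intro p q r t h1 h2 h3 h4
    have h := extract (p' := 0) (q' := 1) (r' := 2) (t' := 3)
      h1 h2 h3 h4 (by omega) (by omega) (by omega) (by omega)
    simp only [colorOf, Prod.mk.injEq, decide_eq_decide] at h
    exact h.2.2.2.2.2.1
  have Ucnf3 : ∀ p q r t, p < q → q < r → r < t → t < n + 2 →
      (cnf G W Λ (u p) (u t) (u q) (u r) ↔ cnf G W Λ (u 0) (u 3) (u 1) (u 2)) := by
    intro p q r t h1 h2 h3 h4
    have h := extract (p' := 0) (q' := 1) (r' := 2) (t' := 3)
      h1 h2 h3 h4 (by omega) (by omega) (by omega) (by omega)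
    simp only [colorOf, Prod.mk.injEq, decide_eq_decide] at h
    exact h.2.2.2.2.2.2.1
  have Ucnf4 : ∀ p q r, p < q → q < r → r < n + 1 →
      (cnf G W Λ (u p) (u q) (u p) (u r) ↔ cnf G W Λ (u 0) (u 1) (u 0) (u 2)) := by
    intro p q r h1 h2 h3
    have h := extract (t := n+1) (p' := 0) (q' := 1) (r' := 2) (t' := 3)
      h1 h2 (by omega) (by omega) (by omega) (by omega) (by omega) (by omega)
    simp only [colorOf, Prod.mk.injEq, decide_eq_decide] at h
    exact h.2.2.2.2.2.2.2.1
  have Ucnf5 : ∀ p q r, p < q → q < r → r < n + 1 →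
      (cnf G W Λ (u p) (u q) (u q) (u r) ↔ cnf G W Λ (u 0) (u 1) (u 1) (u 2)) := by
    intro p q r h1 h2 h3
    have h := extract (t := n+1) (p' := 0) (q' := 1) (r' := 2) (t' := 3)
      h1 h2 (by omega) (by omega) (by omega) (by omega) (by omega) (by omega)
    simp only [colorOf, Prod.mk.injEq, decide_eq_decide] at h
    exact h.2.2.2.2.2.2.2.2.1
  have Ucnf6 : ∀ p q r, p < q → q < r → r < n + 1 →
      (cnf G W Λ (u p) (u r) (u q) (u r) ↔ cnf G W Λ (u 0) (u 2) (u 1) (u 2)) := by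
    intro p q r h1 h2 h3
    have h := extract (t := n+1) (p' := 0) (q' := 1) (r' := 2) (t' := 3)
      h1 h2 (by omega) (by omega) (by omega) (by omega) (by omega) (by omega)
    simp only [colorOf, Prod.mk.injEq, decide_eq_decide] at h
    exact h.2.2.2.2.2.2.2.2.2
  have hpairne : ∀ {p q : ℕ}, p < n+2 → q < n+2 → p ≠ q → u p ≠ u q := by
    intro p q hp hq hne he; exact hne (uinj _ _ hp hq he)
  have mkA : ∀ σ τ₁ τ₂ : ℕ → ℕ,
      (∀ i, i < a → σ i < n) →
      (∀ t, t < b → τ₁ t < n ∧ τ₂ t < n) →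
      (∀ i j, i < a → j < a → σ i = σ j → i = j) →
      (∀ i t, i < a → t < b → σ i ≠ τ₁ t ∧ σ i ≠ τ₂ t) →
      (∀ t, t < b → τ₁ t ≠ τ₂ t) →
      (∀ t t', t < b → t' < b → t ≠ t' →
        τ₁ t ≠ τ₁ t' ∧ τ₁ t ≠ τ₂ t' ∧ τ₂ t ≠ τ₁ t' ∧ τ₂ t ≠ τ₂ t') →
      (∀ i t, i < a → t < b → att G W Λ (u (σ i)) (u (τ₁ t)) (u (τ₂ t))) →
      (∃ A : Finset V, A ⊆ W ∧ A.card = a ∧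
        ∃ 𝓑 : Finset (Finset V), 𝓑.card = b ∧
          (∀ B ∈ 𝓑, B.card = 2 ∧ B ⊆ W \ A) ∧
          (∀ B ∈ 𝓑, ∀ B' ∈ 𝓑, B ≠ B' → Disjoint B B') ∧
          (∀ x ∈ A, ∀ B ∈ 𝓑, ∀ y z (hy : y ∈ W) (hz : z ∈ W) (hyz : y ≠ z),
            B = {y, z} → ∃ v ∈ walkVerts G (Λ y z hy hz hyz), G.Adj x v)) := by
    intro σ τ₁ τ₂ hσn hτn hσinj hcross hττ hdisj hatt
    refine ⟨(Finset.range a).image (fun i => u (σ i)), ?_, ?_,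
      (Finset.range b).image (fun t => ({u (τ₁ t), u (τ₂ t)} : Finset V)), ?_, ?_, ?_, ?_⟩
    · intro x hx
      obtain ⟨i, hi, rfl⟩ := Finset.mem_image.mp hx
      exact umem _ (by have := hσn i (Finset.mem_range.mp hi); omega)
    · rw [Finset.card_image_of_injOn, Finset.card_range]
      intro i hi j hj hij
      simp only [Finset.mem_coe, Finset.mem_range] at hi hj
      exact hσinj _ _ hi hj
        (uinj _ _ (by have := hσn i hi; omega) (by have := hσn j hj; omega) hij)
    · rw [Finset.card_image_of_injOn, Finset.card_range]
      intro t ht t' ht' hpq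
      simp only [Finset.mem_coe, Finset.mem_range] at ht ht'
      by_contra hne
      obtain ⟨hτ1, hτ2⟩ := hτn t ht
      obtain ⟨hτ1', hτ2'⟩ := hτn t' ht'
      rcases pairEq (hpairne (by omega) (by omega) (hττ t ht)) hpq with ⟨h1, _⟩ | ⟨h1, _⟩
      · exact (hdisj t t' ht ht' hne).1 (uinj _ _ (by omega) (by omega) h1)
      · exact (hdisj t t' ht ht' hne).2.1 (uinj _ _ (by omega) (by omega) h1)
    · intro B hB
      obtain ⟨t, ht, rfl⟩ := Finset.mem_image.mp hB
      have ht := Finset.mem_range.mp ht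
      obtain ⟨hτ1, hτ2⟩ := hτn t ht
      refine ⟨Finset.card_pair (hpairne (by omega) (by omega) (hττ t ht)), ?_⟩
      intro x hx
      have hxval : x = u (τ₁ t) ∨ x = u (τ₂ t) := by
        simpa using hx
      have hxW : x ∈ W := by
        rcases hxval with h | h
        · subst h; exact umem _ (by omega)
        · subst h; exact umem _ (by omega)
      rw [Finset.mem_sdiff]
      refine ⟨hxW, fun hxA => ?_⟩
      obtain ⟨i, hi, hix⟩ := Finset.mem_image.mp hxA
      have hi := Finset.mem_range.mp hi
      rcases hxval with h | h
      · rw [h] at hix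
        exact (hcross i t hi ht).1
          (uinj _ _ (by have := hσn i hi; omega) (by omega) hix)
      · rw [h] at hix
        exact (hcross i t hi ht).2
          (uinj _ _ (by have := hσn i hi; omega) (by omega) hix)
    · intro B hB B' hB' hne
      obtain ⟨t, ht, rfl⟩ := Finset.mem_image.mp hB
      obtain ⟨t', ht', rfl⟩ := Finset.mem_image.mp hB'
      have ht := Finset.mem_range.mp ht
      have ht' := Finset.mem_range.mp ht'
      have htt' : t ≠ t' := by rintro rfl; exact hne rfl
      obtain ⟨hτ1, hτ2⟩ := hτn t ht
      obtain ⟨hτ1', hτ2'⟩ := hτn t' ht'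
      obtain ⟨d1, d2, d3, d4⟩ := hdisj t t' ht ht' htt'
      rw [Finset.disjoint_left]
      intro x hx hx'
      have hxval : x = u (τ₁ t) ∨ x = u (τ₂ t) := by simpa using hx
      have hxval' : x = u (τ₁ t') ∨ x = u (τ₂ t') := by simpa using hx'
      rcases hxval with h | h <;> rcases hxval' with h' | h' <;> rw [h] at h'
      · exact d1 (uinj _ _ (by omega) (by omega) h')
      · exact d2 (uinj _ _ (by omega) (by omega) h')
      · exact d3 (uinj _ _ (by omega) (by omega) h')
      · exact d4 (uinj _ _ (by omega) (by omega) h')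
    · intro x hxA B hB y z hy hz hyz hByz
      obtain ⟨i, hi, rfl⟩ := Finset.mem_image.mp hxA
      obtain ⟨t, ht, rfl⟩ := Finset.mem_image.mp hB
      have hi := Finset.mem_range.mp hi
      have ht := Finset.mem_range.mp ht
      obtain ⟨hτ1, hτ2⟩ := hτn t ht
      have hattxt := hatt i t hi ht
      have hfin : att G W Λ (u (σ i)) y z := by
        rcases pairEq (hpairne (by omega) (by omega) (hττ t ht)) hByz with ⟨h1, h2⟩ | ⟨h1, h2⟩
        · rw [← h1, ← h2]; exact hattxt
        · rw [← h2, ← h1]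
          exact (att_symm G W Λ hweb _ _ _).mpr hattxt
      obtain ⟨v, hv, hadj⟩ := (att_def G W Λ _ _ _).mp hfin
      rw [pathSet_eq G W Λ hy hz hyz] at hv
      exact ⟨v, hv, hadj⟩
  by_cases hE : G.Adj (u 0) (u 1)
  · left
    refine mkA (fun i => i) (fun t => a + 2*t) (fun t => a + 2*t + 1)
      (fun i hi => by show i < n; omega)
      (fun t ht => by constructor <;> · beta_reduce; omega)
      (fun i j hi hj h => h)
      (fun i t hi ht => by constructor <;> · beta_reduce; omega)
      (fun t ht => by beta_reduce; omega)
      (fun t t' ht ht' hne => by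
        refine ⟨?_, ?_, ?_, ?_⟩ <;> · beta_reduce; omega)
      ?_
    intro i t hi ht
    beta_reduce
    refine ⟨u (a + 2*t), mem_pathSet_left G W Λ (umem _ (by omega)) (umem _ (by omega))
      (hpairne (by omega) (by omega) (by omega)), ?_⟩
    exact (Uadj i (a + 2*t) (by omega) (by omega)).mpr hE
  by_cases hA1 : att G W Λ (u 0) (u 1) (u 2)
  · left
    refine mkA (fun i => i) (fun t => a + 2*t) (fun t => a + 2*t + 1)
      (fun i hi => by show i < n; omega)
      (fun t ht => by constructor <;> · beta_reduce; omega)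
      (fun i j hi hj h => h)
      (fun i t hi ht => by constructor <;> · beta_reduce; omega)
      (fun t ht => by beta_reduce; omega)
      (fun t t' ht ht' hne => by
        refine ⟨?_, ?_, ?_, ?_⟩ <;> · beta_reduce; omega)
      ?_
    intro i t hi ht
    beta_reduce
    exact (Uatt1 i (a + 2*t) (a + 2*t + 1) (by omega) (by omega) (by omega)).mpr hA1
  by_cases hA2 : att G W Λ (u 1) (u 0) (u 2)
  · left
    refine mkA (fun i => b + i) (fun t => t) (fun t => a + b + t)
      (fun i hi => by show b + i < n; omega)
      (fun t ht => by constructor <;> · beta_reduce; omega)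
      (fun i j hi hj h => by beta_reduce at h; omega)
      (fun i t hi ht => by constructor <;> · beta_reduce; omega)
      (fun t ht => by beta_reduce; omega)
      (fun t t' ht ht' hne => by
        refine ⟨?_, ?_, ?_, ?_⟩ <;> · beta_reduce; omega)
      ?_
    intro i t hi ht
    beta_reduce
    exact (Uatt2 t (b + i) (a + b + t) (by omega) (by omega) (by omega)).mpr hA2
  by_cases hA3 : att G W Λ (u 2) (u 0) (u 1)
  · left
    refine mkA (fun i => 2*b + i) (fun t => 2*t) (fun t => 2*t + 1)
      (fun i hi => by show 2*b + i < n; omega)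
      (fun t ht => by constructor <;> · beta_reduce; omega)
      (fun i j hi hj h => by beta_reduce at h; omega)
      (fun i t hi ht => by constructor <;> · beta_reduce; omega)
      (fun t ht => by beta_reduce; omega)
      (fun t t' ht ht' hne => by
        refine ⟨?_, ?_, ?_, ?_⟩ <;> · beta_reduce; omega)
      ?_
    intro i t hi ht
    beta_reduce
    exact (Uatt3 (2*t) (2*t + 1) (2*b + i) (by omega) (by omega) (by omega)).mpr hA3
  have mkB : ∀ τ₁ τ₂ : ℕ → ℕ,
      (∀ t, t < 2*c → τ₁ t < n ∧ τ₂ t < n ∧ τ₁ t ≠ τ₂ t) →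
      (∀ t t', t < 2*c → t' < 2*c → t ≠ t' →
        ¬(τ₁ t = τ₁ t' ∧ τ₂ t = τ₂ t') ∧ ¬(τ₁ t = τ₂ t' ∧ τ₂ t = τ₁ t')) →
      (∀ t t', t < c → c ≤ t' → t' < 2*c →
        cnf G W Λ (u (τ₁ t)) (u (τ₂ t)) (u (τ₁ t')) (u (τ₂ t'))) →
      (∃ 𝓒 𝓒' : Finset (Finset V), Disjoint 𝓒 𝓒' ∧ 𝓒.card = c ∧ 𝓒'.card = c ∧
        (∀ C ∈ 𝓒 ∪ 𝓒', C.card = 2 ∧ C ⊆ W) ∧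
        (∀ C ∈ 𝓒, ∀ C' ∈ 𝓒',
          ∀ x y x' y' (hx : x ∈ W) (hy : y ∈ W) (hx' : x' ∈ W) (hy' : y' ∈ W)
            (hxy : x ≠ y) (hxy' : x' ≠ y'), C = {x, y} → C' = {x', y'} →
            ¬ Anticomplete G (walkInterior G (Λ x y hx hy hxy))
                (walkInterior G (Λ x' y' hx' hy' hxy')))) := by
    intro τ₁ τ₂ hbd hdisj hcross
    have key : ∀ t t', t < 2*c → t' < 2*c → t ≠ t' →
        ({u (τ₁ t), u (τ₂ t)} : Finset V) ≠ {u (τ₁ t'), u (τ₂ t')} := by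
      intro t t' ht ht' hne heq
      obtain ⟨b1, b2, b3⟩ := hbd t ht
      obtain ⟨b1', b2', b3'⟩ := hbd t' ht'
      rcases pairEq (hpairne (by omega) (by omega) b3) heq with ⟨h1, h2⟩ | ⟨h1, h2⟩
      · exact (hdisj t t' ht ht' hne).1
          ⟨uinj _ _ (by omega) (by omega) h1, uinj _ _ (by omega) (by omega) h2⟩
      · exact (hdisj t t' ht ht' hne).2
          ⟨uinj _ _ (by omega) (by omega) h1, uinj _ _ (by omega) (by omega) h2⟩
    refine ⟨(Finset.range c).image (fun t => ({u (τ₁ t), u (τ₂ t)} : Finset V)),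
      (Finset.Ico c (2*c)).image (fun t => ({u (τ₁ t), u (τ₂ t)} : Finset V)),
      ?_, ?_, ?_, ?_, ?_⟩
    · rw [Finset.disjoint_left]
      intro B hB hB'
      obtain ⟨t, ht, rfl⟩ := Finset.mem_image.mp hB
      obtain ⟨t', ht', heq⟩ := Finset.mem_image.mp hB'
      rw [Finset.mem_range] at ht
      rw [Finset.mem_Ico] at ht'
      exact key t' t (by omega) (by omega) (by omega) heq
    · rw [Finset.card_image_of_injOn, Finset.card_range]
      intro t ht t' ht' h
      simp only [Finset.mem_coe, Finset.mem_range] at ht ht'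
      by_contra hne
      exact key t t' (by omega) (by omega) hne h
    · rw [Finset.card_image_of_injOn]
      · rw [Nat.card_Ico]; omega
      · intro t ht t' ht' h
        simp only [Finset.mem_coe, Finset.mem_Ico] at ht ht'
        by_contra hne
        exact key t t' (by omega) (by omega) hne h
    · intro C hC
      rw [Finset.mem_union] at hC
      have hex : ∃ t, t < 2*c ∧ C = {u (τ₁ t), u (τ₂ t)} := by
        rcases hC with h | h
        · obtain ⟨t, ht, rfl⟩ := Finset.mem_image.mp h
          exact ⟨t, by simp at ht; omega, rfl⟩
        · obtain ⟨t, ht, rfl⟩ := Finset.mem_image.mp h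
          exact ⟨t, by simp at ht; omega, rfl⟩
      obtain ⟨t, ht, rfl⟩ := hex
      obtain ⟨b1, b2, b3⟩ := hbd t ht
      refine ⟨Finset.card_pair (hpairne (by omega) (by omega) b3), ?_⟩
      intro x hx
      have hxval : x = u (τ₁ t) ∨ x = u (τ₂ t) := by simpa using hx
      rcases hxval with h | h
      · subst h; exact umem _ (by omega)
      · subst h; exact umem _ (by omega)
    · intro C hC C' hC' x y x' y' hx hy hx' hy' hxy hxy' hCxy hCxy'
      obtain ⟨t, ht, rfl⟩ := Finset.mem_image.mp hC
      obtain ⟨t', ht', rfl⟩ := Finset.mem_image.mp hC'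
      rw [Finset.mem_range] at ht
      rw [Finset.mem_Ico] at ht'
      obtain ⟨b1, b2, b3⟩ := hbd t (by omega)
      obtain ⟨b1', b2', b3'⟩ := hbd t' (by omega)
      have hc1 : cnf G W Λ x y x' y' := by
        have h0 := hcross t t' ht ht'.1 ht'.2
        have e1 : cnf G W Λ x y (u (τ₁ t')) (u (τ₂ t')) := by
          rcases pairEq (hpairne (by omega) (by omega) b3) hCxy with ⟨h1, h2⟩ | ⟨h1, h2⟩
          · rw [← h1, ← h2]; exact h0
          · rw [← h1, ← h2]; exact (cnf_swap₁ G W Λ hweb _ _ _ _).mpr h0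
        rcases pairEq (hpairne (by omega) (by omega) b3') hCxy' with ⟨h1, h2⟩ | ⟨h1, h2⟩
        · rw [← h1, ← h2]; exact e1
        · rw [← h1, ← h2]; exact (cnf_swap₂ G W Λ hweb _ _ _ _).mpr e1
      have hfin := (cnf_def G W Λ x y x' y').mp hc1
      rwa [intSet_eq G W Λ hx hy hxy, intSet_eq G W Λ hx' hy' hxy'] at hfin
  by_cases hC1 : cnf G W Λ (u 0) (u 1) (u 2) (u 3)
  · right; left
    refine mkB (fun t => 2*t) (fun t => 2*t + 1)
      (fun t ht => by refine ⟨?_, ?_, ?_⟩ <;> · beta_reduce; omega)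
      (fun t t' ht ht' hne => by
        constructor <;> · rintro ⟨h1, h2⟩; beta_reduce at h1 h2; omega)
      ?_
    intro t t' ht hct' ht'
    beta_reduce
    exact (Ucnf1 (2*t) (2*t+1) (2*t') (2*t'+1)
      (by omega) (by omega) (by omega) (by omega)).mpr hC1
  by_cases hC2 : cnf G W Λ (u 0) (u 2) (u 1) (u 3)
  · right; left
    refine mkB (fun t => t) (fun t => 2*c + t)
      (fun t ht => by refine ⟨?_, ?_, ?_⟩ <;> · beta_reduce; omega)
      (fun t t' ht ht' hne => by
        constructor <;> · rintro ⟨h1, h2⟩; beta_reduce at h1 h2; omega)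
      ?_
    intro t t' ht hct' ht'
    beta_reduce
    exact (Ucnf2 t t' (2*c + t) (2*c + t')
      (by omega) (by omega) (by omega) (by omega)).mpr hC2
  by_cases hC3 : cnf G W Λ (u 0) (u 3) (u 1) (u 2)
  · right; left
    refine mkB (fun t => t) (fun t => 4*c - 1 - t)
      (fun t ht => by refine ⟨?_, ?_, ?_⟩ <;> · beta_reduce; omega)
      (fun t t' ht ht' hne => by
        constructor <;> · rintro ⟨h1, h2⟩; beta_reduce at h1 h2; omega)
      ?_
    intro t t' ht hct' ht'
    beta_reduce
    exact (Ucnf3 t t' (4*c - 1 - t') (4*c - 1 - t)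
      (by omega) (by omega) (by omega) (by omega)).mpr hC3
  by_cases hC4 : cnf G W Λ (u 0) (u 1) (u 0) (u 2)
  · right; left
    refine mkB (fun _ => 0) (fun t => t + 1)
      (fun t ht => by refine ⟨?_, ?_, ?_⟩ <;> · beta_reduce; omega)
      (fun t t' ht ht' hne => by
        constructor <;> · rintro ⟨h1, h2⟩; beta_reduce at h1 h2; omega)
      ?_
    intro t t' ht hct' ht'
    beta_reduce
    exact (Ucnf4 0 (t+1) (t'+1) (by omega) (by omega) (by omega)).mpr hC4
  by_cases hC5 : cnf G W Λ (u 0) (u 1) (u 1) (u 2)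
  · right; left
    refine mkB (fun t => if t < c then t else c) (fun t => if t < c then c else t + 1)
      (fun t ht => by refine ⟨?_, ?_, ?_⟩ <;> · beta_reduce; split_ifs <;> omega)
      (fun t t' ht ht' hne => by
        constructor <;> · rintro ⟨h1, h2⟩; beta_reduce at h1 h2; split_ifs at h1 h2 <;> omega)
      ?_
    intro t t' ht hct' ht'
    beta_reduce
    rw [if_pos ht, if_pos ht, if_neg (show ¬ t' < c by omega), if_neg (show ¬ t' < c by omega)]
    exact (Ucnf5 t c (t'+1) ht (by omega) (by omega)).mpr hC5
  by_cases hC6 : cnf G W Λ (u 0) (u 2) (u 1) (u 2)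
  · right; left
    refine mkB (fun t => t) (fun _ => 2*c)
      (fun t ht => by refine ⟨?_, ?_, ?_⟩ <;> · beta_reduce; omega)
      (fun t t' ht ht' hne => by
        constructor <;> · rintro ⟨h1, h2⟩; beta_reduce at h1 h2; omega)
      ?_
    intro t t' ht hct' ht'
    beta_reduce
    exact (Ucnf6 t t' (2*c) (by omega) (by omega) (by omega)).mpr hC6
  right; right
  have NOATT : ∀ p q r, p < n → q < n → r < n → p ≠ q → p ≠ r → q ≠ r →
      ¬ att G W Λ (u p) (u q) (u r) := by
    intro p q r hp hq hr hpq hpr hqr hatt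
    have hatt' : ∀ q' r', q' < n → r' < n → q' < r' → p ≠ q' → p ≠ r' →
        att G W Λ (u p) (u q') (u r') → False := by
      intro q' r' hq' hr' hlt hpq' hpr' h
      rcases Nat.lt_trichotomy p q' with h1 | h1 | h1
      · exact hA1 ((Uatt1 p q' r' h1 hlt (by omega)).mp h)
      · omega
      · rcases Nat.lt_trichotomy p r' with h2 | h2 | h2
        · exact hA2 ((Uatt2 q' p r' h1 h2 (by omega)).mp h)
        · omega
        · exact hA3 ((Uatt3 q' r' p hlt h2 (by omega)).mp h)
    rcases Nat.lt_trichotomy q r with h | h | h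
    · exact hatt' q r hq hr h hpq hpr hatt
    · omega
    · exact hatt' r q hr hq h hpr hpq ((att_symm G W Λ hweb _ _ _).mp hatt)
  have NOCNF : ∀ p q p' q', p < n → q < n → p' < n → q' < n → p ≠ q → p' ≠ q' →
      ({p, q} : Finset ℕ) ≠ {p', q'} → ¬ cnf G W Λ (u p) (u q) (u p') (u q') := by
    have sortedCase : ∀ p q p' q', p < n → q < n → p' < n → q' < n → p < q → p' < q' →
        p ≤ p' → ({p, q} : Finset ℕ) ≠ {p', q'} →
        ¬ cnf G W Λ (u p) (u q) (u p') (u q') := by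
      intro p q p' q' hp hq hp' hq' hpq hpq' hle hne hcnf
      by_cases he : p = p'
      · subst he
        have hqq' : q ≠ q' := fun h => hne (by rw [h])
        rcases Nat.lt_trichotomy q q' with h | h | h
        · exact hC4 ((Ucnf4 p q q' hpq h (by omega)).mp hcnf)
        · omega
        · exact hC4 ((Ucnf4 p q' q hpq' h (by omega)).mp
            ((cnf_comm G W Λ _ _ _ _).mp hcnf))
      · have hlt : p < p' := lt_of_le_of_ne hle he
        by_cases h1 : q = p'
        · subst h1
          exact hC5 ((Ucnf5 p q q' hpq hpq' (by omega)).mp hcnf)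
        · by_cases h2 : q = q'
          · subst h2
            exact hC6 ((Ucnf6 p p' q hlt hpq' (by omega)).mp hcnf)
          · rcases Nat.lt_trichotomy q p' with h3 | h3 | h3
            · exact hC1 ((Ucnf1 p q p' q' hpq h3 hpq' (by omega)).mp hcnf)
            · exact absurd h3 h1
            · rcases Nat.lt_trichotomy q q' with h4 | h4 | h4
              · exact hC2 ((Ucnf2 p p' q q' hlt h3 h4 (by omega)).mp hcnf)
              · exact absurd h4 h2
              · exact hC3 ((Ucnf3 p p' q' q hlt hpq' h4 (by omega)).mp hcnf)
    intro p q p' q' hp hq hp' hq' hpq hpq' hne hcnf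
    obtain ⟨p1, q1, hlt1, hcase1, hcnf1⟩ : ∃ p1 q1, p1 < q1 ∧
        ((p1 = p ∧ q1 = q) ∨ (p1 = q ∧ q1 = p)) ∧
        cnf G W Λ (u p1) (u q1) (u p') (u q') := by
      rcases Nat.lt_trichotomy p q with h | h | h
      · exact ⟨p, q, h, Or.inl ⟨rfl, rfl⟩, hcnf⟩
      · omega
      · exact ⟨q, p, h, Or.inr ⟨rfl, rfl⟩, (cnf_swap₁ G W Λ hweb _ _ _ _).mp hcnf⟩
    obtain ⟨p2, q2, hlt2, hcase2, hcnf2⟩ : ∃ p2 q2, p2 < q2 ∧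
        ((p2 = p' ∧ q2 = q') ∨ (p2 = q' ∧ q2 = p')) ∧
        cnf G W Λ (u p1) (u q1) (u p2) (u q2) := by
      rcases Nat.lt_trichotomy p' q' with h | h | h
      · exact ⟨p', q', h, Or.inl ⟨rfl, rfl⟩, hcnf1⟩
      · omega
      · exact ⟨q', p', h, Or.inr ⟨rfl, rfl⟩, (cnf_swap₂ G W Λ hweb _ _ _ _).mp hcnf1⟩
    have hb1 : p1 < n ∧ q1 < n := by rcases hcase1 with ⟨h1, h2⟩ | ⟨h1, h2⟩ <;> omega
    have hb2 : p2 < n ∧ q2 < n := by rcases hcase2 with ⟨h1, h2⟩ | ⟨h1, h2⟩ <;> omega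
    have hset1 : ({p1, q1} : Finset ℕ) = {p, q} := by
      rcases hcase1 with ⟨h1, h2⟩ | ⟨h1, h2⟩ <;> subst h1 <;> subst h2 <;>
        first | rfl | exact Finset.pair_comm _ _
    have hset2 : ({p2, q2} : Finset ℕ) = {p', q'} := by
      rcases hcase2 with ⟨h1, h2⟩ | ⟨h1, h2⟩ <;> subst h1 <;> subst h2 <;>
        first | rfl | exact Finset.pair_comm _ _
    have hne12 : ({p1, q1} : Finset ℕ) ≠ {p2, q2} := by rw [hset1, hset2]; exact hne
    rcases Nat.le_total p1 p2 with hle | hle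
    · exact sortedCase p1 q1 p2 q2 hb1.1 hb1.2 hb2.1 hb2.2 hlt1 hlt2 hle hne12 hcnf2
    · exact sortedCase p2 q2 p1 q1 hb2.1 hb2.2 hb1.1 hb1.2 hlt2 hlt1 hle hne12.symm
        ((cnf_comm G W Λ _ _ _ _).mp hcnf2)
  refine ⟨(Finset.range s).image (fun t => u t), ?_, ?_, ?_, ?_, ?_⟩
  · intro x hx
    obtain ⟨t, ht, rfl⟩ := Finset.mem_image.mp hx
    exact umem _ (by simp at ht; omega)
  · rw [Finset.card_image_of_injOn, Finset.card_range]
    intro t ht t' ht' h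
    simp only [Finset.mem_coe, Finset.mem_range] at ht ht'
    exact uinj _ _ (by omega) (by omega) h
  · intro x hx y hy hadj
    rw [Finset.mem_coe] at hx hy
    obtain ⟨t, ht, rfl⟩ := Finset.mem_image.mp hx
    obtain ⟨t', ht', rfl⟩ := Finset.mem_image.mp hy
    rw [Finset.mem_range] at ht ht'
    rcases Nat.lt_trichotomy t t' with h | h | h
    · exact hE ((Uadj t t' h (by omega)).mp hadj)
    · subst h; exact G.loopless.irrefl _ hadj
    · exact hE ((Uadj t' t h (by omega)).mp hadj.symm)
  · intro x hxS y hyS z hzS hxy hxz hy hz hyz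
    obtain ⟨tx, htx, rfl⟩ := Finset.mem_image.mp hxS
    obtain ⟨ty, hty, rfl⟩ := Finset.mem_image.mp hyS
    obtain ⟨tz, htz, rfl⟩ := Finset.mem_image.mp hzS
    rw [Finset.mem_range] at htx hty htz
    intro x' hx' v hv hadj
    have hx'eq : x' = u tx := Set.eq_of_mem_singleton hx'
    subst hx'eq
    have hv' : v ∈ pathSet G W Λ (u ty) (u tz) := by
      rw [pathSet_eq G W Λ hy hz hyz]
      exact hv.1
    exact NOATT tx ty tz (by omega) (by omega) (by omega)
      (fun h => hxy (by rw [h])) (fun h => hxz (by rw [h])) (fun h => hyz (by rw [h]))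
      ⟨v, hv', hadj⟩
  · intro x hxS y hyS x' hx'S y' hy'S hx hy hx' hy' hxy hxy' hneq
    obtain ⟨tp, htp, rfl⟩ := Finset.mem_image.mp hxS
    obtain ⟨tq, htq, rfl⟩ := Finset.mem_image.mp hyS
    obtain ⟨tp', htp', rfl⟩ := Finset.mem_image.mp hx'S
    obtain ⟨tq', htq', rfl⟩ := Finset.mem_image.mp hy'S
    rw [Finset.mem_range] at htp htq htp' htq'
    have hidx : ({tp, tq} : Finset ℕ) ≠ {tp', tq'} := by
      intro h
      apply hneq
      rcases pairEq (show tp ≠ tq from fun h' => hxy (by rw [h'])) h with ⟨h1, h2⟩ | ⟨h1, h2⟩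
      · rw [h1, h2]
      · rw [h1, h2]; exact Set.pair_comm _ _
    have hcnf := NOCNF tp tq tp' tq' (by omega) (by omega) (by omega) (by omega)
      (fun h => hxy (by rw [h])) (fun h => hxy' (by rw [h])) hidx
    rw [cnf_def, intSet_eq G W Λ hx hy hxy, intSet_eq G W Λ hx' hy' hxy'] at hcnf
    exact not_not.mp hcnf
end

section
/- For all a, b, s ∈ ℕ⁺, there exists τ = τ(a,b,s) ∈ ℕ⁺ with the following property. Let G be a graph and let (W,Λ) be a τ-web in G. Then one of the following holds: (a) there exist A ⊆ W with |A| = a and a collection 𝓑 of pairwise disjoint 2-subsets of W \ A with |𝓑| = b such that for every x ∈ A and every {y,z} ∈ 𝓑, x has a neighbor in Λ_{y,z}; or (b) there exists S ⊆ W with |S| = s such that S is a stable set in G and for all three vertices x, y, z ∈ S the vertex x is anticomplete to Λ*_{y,z}. -/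
/-!
Common definitions: anticomplete sets, stable sets, induced paths,
and webs, following the paper's terminology.
-/

variable {V : Type} {α : Type}

section RamseyAux

lemma pigeon_fiber {α : Type} [Fintype α] [DecidableEq α] [Nonempty α]
    (T : Finset ℕ) (c : ℕ → α) (n : ℕ)
    (h : Fintype.card α * n ≤ T.card) :
    ∃ i : α, n ≤ (T.filter (fun x => c x = i)).card := by
  obtain ⟨i, _, hi⟩ := Finset.exists_le_card_fiber_of_mul_le_card_of_maps_to
    (fun a _ => Finset.mem_univ (c a)) Finset.univ_nonempty (by simpa using h)
  exact ⟨i, hi⟩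

lemma minhom2 {α : Type} [Fintype α] [DecidableEq α] [Nonempty α] (m : ℕ) :
    ∃ N : ℕ, ∀ (c : ℕ → ℕ → α) (T : Finset ℕ), N ≤ T.card →
      ∃ (S : Finset ℕ) (d : ℕ → α), S ⊆ T ∧ m ≤ S.card ∧
        ∀ x ∈ S, ∀ y ∈ S, x < y → c x y = d x := by
  induction m with
  | zero =>
    exact ⟨0, fun c T _ => ⟨∅, fun x => c x x, Finset.empty_subset _, Nat.zero_le _,
      by simp⟩⟩
  | succ m ih =>
    obtain ⟨N, hN⟩ := ih
    refine ⟨Fintype.card α * N + 1, fun c T hT => ?_⟩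
    have hTne : T.Nonempty := Finset.card_pos.mp (by omega)
    set v := T.min' hTne with hv
    have hvT : v ∈ T := T.min'_mem hTne
    have hT' : Fintype.card α * N ≤ (T.erase v).card := by
      rw [Finset.card_erase_of_mem hvT]; omega
    obtain ⟨i, hi⟩ := pigeon_fiber (T.erase v) (c v) N hT'
    obtain ⟨S', d', hS'sub, hS'card, hS'⟩ := hN c _ hi
    have hS'A : ∀ x ∈ S', x ∈ T.erase v ∧ c v x = i := by
      intro x hx
      have := hS'sub hx
      simp only [Finset.mem_filter] at this
      exact this
    refine ⟨insert v S', fun x => if x = v then i else d' x, ?_, ?_, ?_⟩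
    · intro x hx
      rcases Finset.mem_insert.mp hx with h | h
      · exact h ▸ hvT
      · exact Finset.mem_of_mem_erase (hS'A x h).1
    · have hvS' : v ∉ S' := fun h => (Finset.notMem_erase v T) (hS'A v h).1
      rw [Finset.card_insert_of_notMem hvS']; omega
    · intro x hx y hy hxy
      rcases Finset.mem_insert.mp hx with h | h
      · subst h
        have hyS' : y ∈ S' := by
          rcases Finset.mem_insert.mp hy with h' | h'
          · omega
          · exact h'
        simp only [if_pos rfl]
        exact (hS'A y hyS').2
      · have hxv : x ≠ v := by
          have : v ≤ x := T.min'_le x (Finset.mem_of_mem_erase (hS'A x h).1)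
          have hx' := (hS'A x h).1
          intro he; exact (Finset.notMem_erase v T) (he ▸ hx')
        have hyS' : y ∈ S' := by
          rcases Finset.mem_insert.mp hy with h' | h'
          · exfalso
            have : v ≤ x := T.min'_le x (Finset.mem_of_mem_erase (hS'A x h).1)
            omega
          · exact h'
        simp only [if_neg hxv]
        exact hS' x h y hyS' hxy

lemma ramsey2 {α : Type} [Fintype α] [DecidableEq α] [Nonempty α] (n : ℕ) :
    ∃ N : ℕ, ∀ (c : ℕ → ℕ → α) (T : Finset ℕ), N ≤ T.card →
      ∃ (S : Finset ℕ) (i : α), S ⊆ T ∧ n ≤ S.card ∧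
        ∀ x ∈ S, ∀ y ∈ S, x < y → c x y = i := by
  obtain ⟨N, hN⟩ := minhom2 (α := α) (Fintype.card α * n)
  refine ⟨N, fun c T hT => ?_⟩
  obtain ⟨S, d, hsub, hcard, hmh⟩ := hN c T hT
  obtain ⟨i, hi⟩ := pigeon_fiber S d n hcard
  refine ⟨S.filter (fun x => d x = i), i, fun x hx => hsub (Finset.mem_filter.mp hx).1,
    hi, ?_⟩
  intro x hx y hy hxy
  obtain ⟨hxS, hdx⟩ := Finset.mem_filter.mp hx
  obtain ⟨hyS, _⟩ := Finset.mem_filter.mp hy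
  rw [hmh x hxS y hyS hxy, hdx]

lemma minhom3 {α : Type} [Fintype α] [DecidableEq α] [Nonempty α] (m : ℕ) :
    ∃ N : ℕ, ∀ (c : ℕ → ℕ → ℕ → α) (T : Finset ℕ), N ≤ T.card →
      ∃ (S : Finset ℕ) (d : ℕ → α), S ⊆ T ∧ m ≤ S.card ∧
        ∀ x ∈ S, ∀ y ∈ S, ∀ z ∈ S, x < y → y < z → c x y z = d x := by
  induction m with
  | zero =>
    exact ⟨0, fun c T _ => ⟨∅, fun x => c x x x, Finset.empty_subset _, Nat.zero_le _,
      by simp⟩⟩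
  | succ m ih =>
    obtain ⟨N, hN⟩ := ih
    obtain ⟨R, hR⟩ := ramsey2 (α := α) N
    refine ⟨R + 1, fun c T hT => ?_⟩
    have hTne : T.Nonempty := Finset.card_pos.mp (by omega)
    set v := T.min' hTne with hv
    have hvT : v ∈ T := T.min'_mem hTne
    have hT' : R ≤ (T.erase v).card := by
      rw [Finset.card_erase_of_mem hvT]; omega
    obtain ⟨A, i, hAsub, hAcard, hAmono⟩ := hR (fun y z => c v y z) _ hT'
    obtain ⟨S', d', hS'sub, hS'card, hS'⟩ := hN c A hAcard
    have hS'A : ∀ x ∈ S', x ∈ T.erase v := fun x hx => hAsub (hS'sub hx)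
    refine ⟨insert v S', fun x => if x = v then i else d' x, ?_, ?_, ?_⟩
    · intro x hx
      rcases Finset.mem_insert.mp hx with h | h
      · exact h ▸ hvT
      · exact Finset.mem_of_mem_erase (hS'A x h)
    · have hvS' : v ∉ S' := fun h => (Finset.notMem_erase v T) (hS'A v h)
      rw [Finset.card_insert_of_notMem hvS']; omega
    · intro x hx y hy z hz hxy hyz
      have hmem : ∀ w ∈ insert v S', w ≠ v → w ∈ S' := by
        intro w hw hwv
        rcases Finset.mem_insert.mp hw with h | h
        · exact absurd h hwv
        · exact h
      rcases Finset.mem_insert.mp hx with h | h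
      · subst h
        have hy' : y ∈ S' := hmem y hy (by omega)
        have hz' : z ∈ S' := hmem z hz (by omega)
        simp only [if_pos rfl]
        exact hAmono y (hS'sub hy') z (hS'sub hz') hyz
      · have hxv : x ≠ v := by
          have : v ≤ x := T.min'_le x (Finset.mem_of_mem_erase (hS'A x h))
          intro he; exact (Finset.notMem_erase v T) (he ▸ hS'A x h)
        have hvlex : v ≤ x := T.min'_le x (Finset.mem_of_mem_erase (hS'A x h))
        have hy' : y ∈ S' := hmem y hy (by omega)
        have hz' : z ∈ S' := hmem z hz (by omega)
        simp only [if_neg hxv]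
        exact hS' x h y hy' z hz' hxy hyz

lemma ramsey3 {α : Type} [Fintype α] [DecidableEq α] [Nonempty α] (n : ℕ) :
    ∃ N : ℕ, ∀ (c : ℕ → ℕ → ℕ → α) (T : Finset ℕ), N ≤ T.card →
      ∃ (S : Finset ℕ) (i : α), S ⊆ T ∧ n ≤ S.card ∧
        ∀ x ∈ S, ∀ y ∈ S, ∀ z ∈ S, x < y → y < z → c x y z = i := by
  obtain ⟨N, hN⟩ := minhom3 (α := α) (Fintype.card α * n)
  refine ⟨N, fun c T hT => ?_⟩
  obtain ⟨S, d, hsub, hcard, hmh⟩ := hN c T hT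
  obtain ⟨i, hi⟩ := pigeon_fiber S d n hcard
  refine ⟨S.filter (fun x => d x = i), i, fun x hx => hsub (Finset.mem_filter.mp hx).1,
    hi, ?_⟩
  intro x hx y hy z hz hxy hyz
  obtain ⟨hxS, hdx⟩ := Finset.mem_filter.mp hx
  obtain ⟨hyS, _⟩ := Finset.mem_filter.mp hy
  obtain ⟨hzS, _⟩ := Finset.mem_filter.mp hz
  rw [hmh x hxS y hyS z hzS hxy hyz, hdx]

end RamseyAux

/-- **Lemma 2.2.** For all `a, b, s ∈ ℕ⁺` there is `τ = τ(a,b,s) ∈ ℕ⁺` such that for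
every graph `G` and every `τ`-web `(W, Λ)` in `G`, one of the following holds:
(a) there are `A ⊆ W` with `|A| = a` and a collection `𝓑` of `b` pairwise disjoint
2-subsets of `W \ A` such that every `x ∈ A` has a neighbor in `Λ_{y,z}` for every
`{y,z} ∈ 𝓑`; (b) there is an `s`-subset `S ⊆ W` which is a stable set and such that
every `x ∈ S` is anticomplete to `Λ*_{y,z}` for all three vertices `x, y, z ∈ S`. -/
theorem statement_2 (a b s : ℕ) (ha : 0 < a) (hb : 0 < b) (hs : 0 < s) :
    ∃ τ : ℕ, 0 < τ ∧
      ∀ (V : Type) [Fintype V] [DecidableEq V] (G : SimpleGraph V) (W : Finset V)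
        (Λ : ∀ x y : V, x ∈ W → y ∈ W → x ≠ y → G.Walk x y),
        IsWeb G W Λ → W.card = τ →
        -- (a)
        (∃ A : Finset V, A ⊆ W ∧ A.card = a ∧
          ∃ 𝓑 : Finset (Finset V), 𝓑.card = b ∧
            (∀ B ∈ 𝓑, B.card = 2 ∧ B ⊆ W \ A) ∧
            (∀ B ∈ 𝓑, ∀ B' ∈ 𝓑, B ≠ B' → Disjoint B B') ∧
            (∀ x ∈ A, ∀ B ∈ 𝓑, ∀ y z (hy : y ∈ W) (hz : z ∈ W) (hyz : y ≠ z),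
              B = {y, z} → ∃ v ∈ walkVerts G (Λ y z hy hz hyz), G.Adj x v)) ∨
        -- (b)
        (∃ S : Finset V, S ⊆ W ∧ S.card = s ∧
          StableSet G ↑S ∧
          (∀ x ∈ S, ∀ y ∈ S, ∀ z ∈ S, x ≠ y → x ≠ z →
            ∀ (hy : y ∈ W) (hz : z ∈ W) (hyz : y ≠ z),
              Anticomplete G {x} (walkInterior G (Λ y z hy hz hyz)))) := by
  classical
  obtain ⟨N, hN⟩ := ramsey3 (α := Prop × Prop × Prop) (a + 2*b + s + 3)
  refine ⟨max N 1, lt_of_lt_of_le one_pos (le_max_right _ _), ?_⟩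
  intro V _ _ G W Λ hWeb hcard
  haveI hVne : Nonempty V := by
    obtain ⟨v, -⟩ := Finset.card_pos.mp (show 0 < W.card by
      rw [hcard]; exact lt_of_lt_of_le one_pos (le_max_right _ _))
    exact ⟨v⟩
  set f : V → ℕ := fun v => ((Fintype.equivFin V) v : ℕ) with hfdef
  have hfinj : Function.Injective f := fun u v h =>
    (Fintype.equivFin V).injective (Fin.val_injective h)
  set g : ℕ → V := Function.invFun f with hgdef
  have hgf : ∀ v, g (f v) = v := Function.leftInverse_invFun hfinj
  set T : Finset ℕ := W.image f with hTdef
  have hTcard : T.card = W.card := Finset.card_image_of_injective _ hfinj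
  -- the key property
  set P : V → V → V → Prop := fun u v w => ∃ (hv : v ∈ W) (hw : w ∈ W) (hvw : v ≠ w),
    ∃ p ∈ walkVerts G (Λ v w hv hw hvw), G.Adj u p with hPdef
  have hverts : ∀ v w (hv : v ∈ W) (hw : w ∈ W) (hvw : v ≠ w) (hwv : w ≠ v),
      walkVerts G (Λ w v hw hv hwv) = walkVerts G (Λ v w hv hw hvw) := by
    intro v w hv hw hvw hwv
    rw [show Λ w v hw hv hwv = (Λ v w hv hw hvw).reverse from hWeb.symm v w hv hw hvw]
    ext p
    simp [walkVerts, SimpleGraph.Walk.support_reverse, List.mem_reverse]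
  have hPsymm : ∀ u v w, P u v w → P u w v := by
    rintro u v w ⟨hv, hw, hvw, p, hp, hadj⟩
    refine ⟨hw, hv, hvw.symm, p, ?_, hadj⟩
    rw [hverts v w hv hw hvw hvw.symm]
    exact hp
  have hPuse : ∀ u v w (hv : v ∈ W) (hw : w ∈ W) (hvw : v ≠ w), P u v w →
      ∃ p ∈ walkVerts G (Λ v w hv hw hvw), G.Adj u p := by
    rintro u v w hv hw hvw ⟨hv', hw', hvw', p, hp, hadj⟩
    exact ⟨p, hp, hadj⟩
  have hPmk : ∀ u v w (hv : v ∈ W) (hw : w ∈ W) (hvw : v ≠ w) (p : V),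
      p ∈ walkVerts G (Λ v w hv hw hvw) → G.Adj u p → P u v w := by
    intro u v w hv hw hvw p hp hadj
    exact ⟨hv, hw, hvw, p, hp, hadj⟩
  obtain ⟨S₀, i, hS₀T, hS₀card, hmono⟩ :=
    hN (fun x y z => (P (g x) (g y) (g z), P (g y) (g x) (g z), P (g z) (g x) (g y))) T
      (by rw [hTcard, hcard]; exact le_max_left _ _)
  have hg : ∀ x ∈ S₀, g x ∈ W ∧ f (g x) = x := by
    intro x hx
    obtain ⟨v, hvW, rfl⟩ := Finset.mem_image.mp (hS₀T hx)
    rw [hgf]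
    exact ⟨hvW, rfl⟩
  set l : List ℕ := S₀.sort (· ≤ ·) with hldef
  have hlen : a + 2*b + s + 3 ≤ l.length := by
    rw [hldef, Finset.length_sort]; exact hS₀card
  set e : ℕ → ℕ := fun idx => l.getD idx 0 with hedef
  have he_get : ∀ idx (h : idx < l.length), e idx = l.get ⟨idx, h⟩ := by
    intro idx h; exact List.getD_eq_get l 0 ⟨idx, h⟩
  have he_mem : ∀ idx, idx < l.length → e idx ∈ S₀ := by
    intro idx h
    rw [he_get idx h]
    exact (Finset.mem_sort (· ≤ ·)).mp (List.get_mem l ⟨idx, h⟩)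
  have he_lt : ∀ idx idx', idx < idx' → idx' < l.length → e idx < e idx' := by
    intro idx idx' hlt h'
    rw [he_get idx (lt_trans hlt h'), he_get idx' h']
    exact (Finset.sortedLT_sort S₀).strictMono_get (by exact hlt)
  set u : ℕ → V := fun idx => g (e idx) with hudef
  have hu_W : ∀ idx, idx < l.length → u idx ∈ W := fun idx h => (hg _ (he_mem idx h)).1
  have hf_u : ∀ idx, idx < l.length → f (u idx) = e idx := fun idx h => (hg _ (he_mem idx h)).2
  have hu_inj : ∀ idx idx', idx < l.length → idx' < l.length → u idx = u idx' → idx = idx' := by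
    intro idx idx' h h' heq
    by_contra hne
    have he_ne : e idx ≠ e idx' := by
      rcases Nat.lt_or_ge idx idx' with hc | hc
      · exact Nat.ne_of_lt (he_lt _ _ hc h')
      · exact (Nat.ne_of_lt (he_lt _ _ (by omega) h)).symm
    have := congrArg f heq
    rw [hf_u _ h, hf_u _ h'] at this
    exact he_ne this
  obtain ⟨p1, p2, p3⟩ := i
  have key : ∀ i1 i2 i3, i1 < i2 → i2 < i3 → i3 < l.length →
      (P (u i1) (u i2) (u i3) = p1 ∧ P (u i2) (u i1) (u i3) = p2 ∧
        P (u i3) (u i1) (u i2) = p3) := by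
    intro i1 i2 i3 h12 h23 h3
    have h := hmono (e i1) (he_mem _ (by omega)) (e i2) (he_mem _ (by omega))
      (e i3) (he_mem _ h3) (he_lt _ _ h12 (by omega)) (he_lt _ _ h23 h3)
    simp only [Prod.mk.injEq] at h
    exact ⟨h.1, h.2.1, h.2.2⟩
  -- builder for outcome (a)
  have build : ∀ (θ σ1 σ2 : ℕ → ℕ),
      (∀ j, j < a → θ j < l.length) →
      (∀ k, k < b → σ1 k < l.length ∧ σ2 k < l.length) →
      (∀ j j', j < a → j' < a → θ j = θ j' → j = j') →
      (∀ j k, j < a → k < b → θ j ≠ σ1 k ∧ θ j ≠ σ2 k) →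
      (∀ k, k < b → σ1 k ≠ σ2 k) →
      (∀ k k', k < b → k' < b → k ≠ k' →
        σ1 k ≠ σ1 k' ∧ σ1 k ≠ σ2 k' ∧ σ2 k ≠ σ1 k' ∧ σ2 k ≠ σ2 k') →
      (∀ j k, j < a → k < b → P (u (θ j)) (u (σ1 k)) (u (σ2 k))) →
      (∃ A : Finset V, A ⊆ W ∧ A.card = a ∧
          ∃ 𝓑 : Finset (Finset V), 𝓑.card = b ∧
            (∀ B ∈ 𝓑, B.card = 2 ∧ B ⊆ W \ A) ∧
            (∀ B ∈ 𝓑, ∀ B' ∈ 𝓑, B ≠ B' → Disjoint B B') ∧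
            (∀ x ∈ A, ∀ B ∈ 𝓑, ∀ y z (hy : y ∈ W) (hz : z ∈ W) (hyz : y ≠ z),
              B = {y, z} → ∃ v ∈ walkVerts G (Λ y z hy hz hyz), G.Adj x v)) := by
    intro θ σ1 σ2 hθl hσl hθinj hcross hσne hσdisj hnb
    set A : Finset V := (Finset.range a).image (fun j => u (θ j)) with hAdef
    set 𝓑 : Finset (Finset V) :=
      (Finset.range b).image (fun k => ({u (σ1 k), u (σ2 k)} : Finset V)) with h𝓑def
    have hAmem : ∀ x, x ∈ A ↔ ∃ j, j < a ∧ x = u (θ j) := by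
      intro x
      simp only [hAdef, Finset.mem_image, Finset.mem_range]
      constructor
      · rintro ⟨j, hj, rfl⟩; exact ⟨j, hj, rfl⟩
      · rintro ⟨j, hj, rfl⟩; exact ⟨j, hj, rfl⟩
    have h𝓑mem : ∀ B, B ∈ 𝓑 ↔ ∃ k, k < b ∧ B = {u (σ1 k), u (σ2 k)} := by
      intro B
      simp only [h𝓑def, Finset.mem_image, Finset.mem_range]
      constructor
      · rintro ⟨k, hk, rfl⟩; exact ⟨k, hk, rfl⟩
      · rintro ⟨k, hk, rfl⟩; exact ⟨k, hk, rfl⟩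
    refine ⟨A, ?_, ?_, 𝓑, ?_, ?_, ?_, ?_⟩
    · intro x hx
      obtain ⟨j, hj, rfl⟩ := (hAmem x).mp hx
      exact hu_W _ (hθl j hj)
    · rw [hAdef, Finset.card_image_of_injOn, Finset.card_range]
      intro j hj j' hj' heq
      simp only [Finset.mem_coe, Finset.mem_range] at hj hj'
      exact hθinj j j' hj hj' (hu_inj _ _ (hθl j hj) (hθl j' hj') heq)
    · rw [h𝓑def, Finset.card_image_of_injOn, Finset.card_range]
      intro k hk k' hk' heq
      simp only [Finset.mem_coe, Finset.mem_range] at hk hk'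
      by_contra hne
      have heq' : ({u (σ1 k), u (σ2 k)} : Finset V) = {u (σ1 k'), u (σ2 k')} := heq
      have h1 : u (σ1 k) ∈ ({u (σ1 k'), u (σ2 k')} : Finset V) := by
        rw [← heq']; exact Finset.mem_insert_self _ _
      rcases Finset.mem_insert.mp h1 with h | h
      · exact (hσdisj k k' hk hk' hne).1
          (hu_inj _ _ (hσl k hk).1 (hσl k' hk').1 h)
      · exact (hσdisj k k' hk hk' hne).2.1
          (hu_inj _ _ (hσl k hk).1 (hσl k' hk').2 (Finset.mem_singleton.mp h))
    · intro B hB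
      obtain ⟨k, hk, rfl⟩ := (h𝓑mem B).mp hB
      constructor
      · exact Finset.card_pair (fun heq =>
          hσne k hk (hu_inj _ _ (hσl k hk).1 (hσl k hk).2 heq))
      · intro x hx
        rw [Finset.mem_sdiff]
        have hxcases := Finset.mem_insert.mp hx
        constructor
        · rcases hxcases with h | h
          · exact h ▸ hu_W _ (hσl k hk).1
          · exact (Finset.mem_singleton.mp h) ▸ hu_W _ (hσl k hk).2
        · intro hxA
          obtain ⟨j, hj, rfl⟩ := (hAmem x).mp hxA
          rcases hxcases with h | h
          · exact (hcross j k hj hk).1 (hu_inj _ _ (hθl j hj) (hσl k hk).1 h)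
          · exact (hcross j k hj hk).2 (hu_inj _ _ (hθl j hj) (hσl k hk).2
              (Finset.mem_singleton.mp h))
    · intro B hB B' hB' hne
      obtain ⟨k, hk, rfl⟩ := (h𝓑mem B).mp hB
      obtain ⟨k', hk', rfl⟩ := (h𝓑mem B').mp hB'
      have hkk' : k ≠ k' := by rintro rfl; exact hne rfl
      rw [Finset.disjoint_left]
      intro x hx hx'
      have hd := hσdisj k k' hk hk' hkk'
      rcases Finset.mem_insert.mp hx with h | h <;>
        rcases Finset.mem_insert.mp hx' with h' | h'
      · exact hd.1 (hu_inj _ _ (hσl k hk).1 (hσl k' hk').1 (h ▸ h' ▸ rfl))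
      · exact hd.2.1 (hu_inj _ _ (hσl k hk).1 (hσl k' hk').2
          (h ▸ (Finset.mem_singleton.mp h') ▸ rfl))
      · exact hd.2.2.1 (hu_inj _ _ (hσl k hk).2 (hσl k' hk').1
          ((Finset.mem_singleton.mp h) ▸ h' ▸ rfl))
      · exact hd.2.2.2 (hu_inj _ _ (hσl k hk).2 (hσl k' hk').2
          ((Finset.mem_singleton.mp h) ▸ (Finset.mem_singleton.mp h') ▸ rfl))
    · intro x hx B hB y z hy hz hyz hByz
      obtain ⟨j, hj, rfl⟩ := (hAmem x).mp hx
      obtain ⟨k, hk, hBk⟩ := (h𝓑mem B).mp hB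
      have hP := hnb j k hj hk
      have hyB : y ∈ B := hByz ▸ Finset.mem_insert_self _ _
      have hzB : z ∈ B := hByz ▸ Finset.mem_insert.mpr (Or.inr (Finset.mem_singleton_self _))
      rw [hBk] at hyB hzB
      rcases Finset.mem_insert.mp hyB with h1 | h1 <;>
        rcases Finset.mem_insert.mp hzB with h2 | h2
      · exact absurd (h1.trans h2.symm) hyz  -- wrong: h2 could be in insert; fix below
      · subst h1
        rw [Finset.mem_singleton] at h2
        subst h2
        exact hPuse _ _ _ hy hz hyz hP
      · rw [Finset.mem_singleton] at h1
        subst h1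
        subst h2
        exact hPuse _ _ _ hy hz hyz (hPsymm _ _ _ hP)
      · rw [Finset.mem_singleton] at h1 h2
        exact absurd (h1.trans h2.symm) hyz
  by_cases hp1 : p1
  · left
    refine build (fun j => j) (fun k => a + 2*k) (fun k => a + 2*k + 1)
      (fun j hj => by omega) (fun k hk => by omega) (fun j j' _ _ h => by omega)
      (fun j k hj hk => by omega) (fun k hk => by omega)
      (fun k k' _ _ h => by omega) ?_
    intro j k hj hk
    have := (key j (a + 2*k) (a + 2*k + 1) (by omega) (by omega) (by omega)).1
    rw [this]; exact hp1
  by_cases hp2 : p2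
  · left
    refine build (fun j => b + j) (fun k => k) (fun k => a + b + k)
      (fun j hj => by omega) (fun k hk => by omega)
      (fun j j' _ _ h => by have h' : b + j = b + j' := h; omega)
      (fun j k hj hk => by omega) (fun k hk => by omega)
      (fun k k' _ _ h => by omega) ?_
    intro j k hj hk
    have := (key k (b + j) (a + b + k) (by omega) (by omega) (by omega)).2.1
    rw [this]; exact hp2
  by_cases hp3 : p3
  · left
    refine build (fun j => 2*b + j) (fun k => 2*k) (fun k => 2*k + 1)
      (fun j hj => by omega) (fun k hk => by omega)
      (fun j j' _ _ h => by have h' : 2*b + j = 2*b + j' := h; omega)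
      (fun j k hj hk => by omega) (fun k hk => by omega)
      (fun k k' _ _ h => by omega) ?_
    intro j k hj hk
    have := (key (2*k) (2*k + 1) (2*b + j) (by omega) (by omega) (by omega)).2.2
    rw [this]; exact hp3
  -- outcome (b)
  right
  have hnP : ∀ i1 i2 i3, i1 < l.length → i2 < l.length → i3 < l.length →
      i1 ≠ i2 → i1 ≠ i3 → i2 ≠ i3 → ¬ P (u i1) (u i2) (u i3) := by
    intro i1 i2 i3 h1 h2 h3 h12 h13 h23 hP
    rcases Nat.lt_trichotomy i1 i2 with ha1 | ha1 | ha1 <;>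
      rcases Nat.lt_trichotomy i1 i3 with ha2 | ha2 | ha2 <;>
      rcases Nat.lt_trichotomy i2 i3 with ha3 | ha3 | ha3 <;>
      first
      | omega
      | (exact hp1 ((key i1 i2 i3 ha1 ha3 h3).1 ▸ hP))
      | (exact hp1 ((key i1 i3 i2 ha2 (by omega) h2).1 ▸ hPsymm _ _ _ hP))
      | (exact hp2 ((key i2 i1 i3 (by omega) ha2 h3).2.1 ▸ hP))
      | (exact hp2 ((key i3 i1 i2 (by omega) (by omega) h2).2.1 ▸ hPsymm _ _ _ hP))
      | (exact hp3 ((key i2 i3 i1 ha3 (by omega) h1).2.2 ▸ hP))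
      | (exact hp3 ((key i3 i2 i1 (by omega) (by omega) h1).2.2 ▸ hPsymm _ _ _ hP))
  set S : Finset V := (Finset.range s).image (fun j => u j) with hSdef
  have hSmem : ∀ x, x ∈ S ↔ ∃ j, j < s ∧ x = u j := by
    intro x
    simp only [hSdef, Finset.mem_image, Finset.mem_range]
    constructor
    · rintro ⟨j, hj, rfl⟩; exact ⟨j, hj, rfl⟩
    · rintro ⟨j, hj, rfl⟩; exact ⟨j, hj, rfl⟩
  have hsl : ∀ j, j < s → j < l.length := by intro j hj; omega
  have hnadj : ∀ j j', j < l.length → j' < l.length → j ≠ j' → ¬ G.Adj (u j) (u j') := by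
    intro j j' hjl hj'l hne hadj
    obtain ⟨m, hm, hmj, hmj'⟩ : ∃ m, m < l.length ∧ m ≠ j ∧ m ≠ j' := by
      by_cases h0 : j ≠ 0 ∧ j' ≠ 0
      · exact ⟨0, by omega, by omega, by omega⟩
      · by_cases h1 : j ≠ 1 ∧ j' ≠ 1
        · exact ⟨1, by omega, by omega, by omega⟩
        · exact ⟨2, by omega, by omega, by omega⟩
    refine hnP j j' m hjl hj'l hm hne (fun h => hmj h.symm) (fun h => hmj' h.symm) ?_
    refine hPmk _ _ _ (hu_W j' hj'l) (hu_W m hm)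
      (fun h => hmj' (hu_inj _ _ hj'l hm h).symm) (u j') ?_ hadj
    exact SimpleGraph.Walk.start_mem_support _
  refine ⟨S, ?_, ?_, ?_, ?_⟩
  · intro x hx
    obtain ⟨j, hj, rfl⟩ := (hSmem x).mp hx
    exact hu_W _ (hsl j hj)
  · rw [hSdef, Finset.card_image_of_injOn, Finset.card_range]
    intro j hj j' hj' heq
    simp only [Finset.mem_coe, Finset.mem_range] at hj hj'
    exact hu_inj _ _ (hsl j hj) (hsl j' hj') heq
  · intro x hx y hy hadj
    rw [Finset.mem_coe] at hx hy
    obtain ⟨j, hj, rfl⟩ := (hSmem x).mp hx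
    obtain ⟨j', hj', rfl⟩ := (hSmem y).mp hy
    by_cases hjj' : j = j'
    · subst hjj'; exact G.irrefl hadj
    · exact hnadj j j' (hsl j hj) (hsl j' hj') hjj' hadj
  · intro x hx y hy z hz hxy hxz hy' hz' hyz
    intro x' hx' q hq hadj
    rw [Set.mem_singleton_iff] at hx'
    rw [hx'] at hadj
    obtain ⟨jx, hjx, hxu⟩ := (hSmem x).mp hx
    rw [hxu] at hadj
    obtain ⟨jy, hjy, hyu⟩ := (hSmem y).mp hy
    obtain ⟨jz, hjz, hzu⟩ := (hSmem z).mp hz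
    have hq' : q ∈ walkVerts G (Λ y z hy' hz' hyz) := hq.1
    have hP : P (u jx) y z := hPmk _ _ _ hy' hz' hyz q hq' hadj
    rw [hyu, hzu] at hP
    refine hnP jx jy jz (hsl _ hjx) (hsl _ hjy) (hsl _ hjz) ?_ ?_ ?_ hP
    · intro h; exact hxy (by rw [hxu, hyu, h])
    · intro h; exact hxz (by rw [hxu, hzu, h])
    · intro h; exact hyz (by rw [hyu, hzu, h])
end

section
/- For all c, s ∈ ℕ⁺, there exists σ = σ(c,s) ∈ ℕ⁺ with the following property. Let G be a graph and let (W,Λ) be a σ-web in G. Then one of the following holds: (a) there exist disjoint subsets 𝓒 and 𝓒' of the set of 2-subsets of W, with |𝓒| = |𝓒'| = c, such that for every {x,y} ∈ 𝓒 and every {x',y'} ∈ 𝓒', the sets Λ*_{x,y} and Λ*_{x',y'} are not anticomplete in G; or (b) there exists S ⊆ W with |S| = s such that for all distinct 2-subsets {x,y}, {x',y'} of S, the sets Λ*_{x,y} and Λ*_{x',y'} are anticomplete in G. -/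
/-!
Common definitions: anticomplete sets, stable sets, induced paths,
and webs, following the paper's terminology.
-/

variable {V : Type} {α : Type}

namespace Statement3Aux

open Finset

theorem myRamsey (κ : Type) [Fintype κ] [DecidableEq κ] [Nonempty κ] (k : ℕ) :
    ∀ n : ℕ, ∃ N : ℕ, ∀ (C : Finset ℕ → κ) (V : Finset ℕ), N ≤ V.card →
      ∃ U : Finset ℕ, U ⊆ V ∧ U.card = n ∧ ∃ c0 : κ, ∀ A : Finset ℕ, A ⊆ U → A.card = k →
        C A = c0 := by
  induction k with
  | zero =>
    intro n
    refine ⟨n, fun C V hV => ?_⟩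
    obtain ⟨U, hUV, hU⟩ := Finset.exists_subset_card_eq hV
    exact ⟨U, hUV, hU, C ∅, fun A _ hA => by rw [Finset.card_eq_zero.1 hA]⟩
  | succ k ih =>
    choose Nk hNk using ih
    have pre : ∀ m : ℕ, ∃ M : ℕ, ∀ (C : Finset ℕ → κ) (V : Finset ℕ), M ≤ V.card →
        ∃ T : Finset ℕ, T ⊆ V ∧ T.card = m ∧ ∃ f : ℕ → κ,
          ∀ x ∈ T, ∀ A : Finset ℕ, A ⊆ T → A.card = k → (∀ y ∈ A, x < y) →
            C (insert x A) = f x := by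
      intro m
      induction m with
      | zero =>
        exact ⟨0, fun C V _ => ⟨∅, empty_subset _, card_empty, fun _ => C ∅,
          fun x hx => absurd hx (notMem_empty x)⟩⟩
      | succ m ihm =>
        obtain ⟨M, hM⟩ := ihm
        refine ⟨Nk M + 1, fun C V hV => ?_⟩
        have hne : V.Nonempty := card_pos.1 (lt_of_lt_of_le (Nat.succ_pos _) hV)
        set a := V.min' hne with ha
        have haV : a ∈ V := V.min'_mem hne
        have hcard' : Nk M ≤ (V.erase a).card := by
          rw [card_erase_of_mem haV]; omega
        obtain ⟨U, hUV, hUcard, c0, hc0⟩ := hNk M (fun S => C (insert a S)) (V.erase a) hcard'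
        obtain ⟨T', hT'U, hT'card, f', hf'⟩ := hM C U (le_of_eq hUcard.symm)
        have haT' : a ∉ T' := fun h => (mem_erase.1 (hUV (hT'U h))).1 rfl
        refine ⟨insert a T', ?_, ?_, Function.update f' a c0, ?_⟩
        · intro z hz
          rcases mem_insert.1 hz with rfl | hz
          · exact haV
          · exact (erase_subset _ _) (hUV (hT'U hz))
        · rw [card_insert_of_notMem haT', hT'card]
        · intro x hx A hA hAcard hlt
          rcases mem_insert.1 hx with rfl | hx
          · have hAT' : A ⊆ T' := by
              intro y hy
              rcases mem_insert.1 (hA hy) with rfl | h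
              · exact absurd (hlt a hy) (lt_irrefl _)
              · exact h
            rw [Function.update_self]
            exact hc0 A (hAT'.trans hT'U) hAcard
          · have hxa : x ≠ a := fun h => haT' (h ▸ hx)
            have hax : a < x := lt_of_le_of_ne (V.min'_le x ((erase_subset _ _) (hUV (hT'U hx))))
              (Ne.symm hxa)
            have hAT' : A ⊆ T' := by
              intro y hy
              rcases mem_insert.1 (hA hy) with rfl | h
              · exact absurd (hax.trans (hlt a hy)) (lt_irrefl _)
              · exact h
            rw [Function.update_of_ne hxa]
            exact hf' x hx A hAT' hAcard hlt
    intro n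
    obtain ⟨M, hM⟩ := pre (Fintype.card κ * n)
    refine ⟨M, fun C V hV => ?_⟩
    obtain ⟨T, hTV, hTcard, f, hf⟩ := hM C V hV
    obtain ⟨c0, -, hfib⟩ := exists_le_card_fiber_of_mul_le_card_of_maps_to
      (f := f) (s := T) (t := (univ : Finset κ)) (fun a _ => mem_univ _) univ_nonempty
      (by rw [card_univ, hTcard])
    obtain ⟨U, hUfib, hUcard⟩ := Finset.exists_subset_card_eq hfib
    have hUT : U ⊆ T := hUfib.trans (filter_subset _ _)
    refine ⟨U, hUT.trans hTV, hUcard, c0, fun A hAU hAcard => ?_⟩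
    have hAne : A.Nonempty := card_pos.1 (by rw [hAcard]; exact Nat.succ_pos _)
    set x := A.min' hAne with hx
    have hxA : x ∈ A := A.min'_mem hAne
    have hfx : f x = c0 := (mem_filter.1 (hUfib (hAU hxA))).2
    have h1 : C (insert x (A.erase x)) = f x := by
      refine hf x (hUT (hAU hxA)) (A.erase x) (((erase_subset _ _).trans hAU).trans hUT) ?_ ?_
      · rw [card_erase_of_mem hxA, hAcard]; omega
      · intro y hy
        exact lt_of_le_of_ne (A.min'_le y ((erase_subset _ _) hy)) (Ne.symm (mem_erase.1 hy).1)
    rw [insert_erase hxA] at h1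
    rw [h1, hfx]

/-- sorted list of a strictly increasing quadruple -/
lemma sort_quad {α : Type} [LinearOrder α] {a b c d : α} (hab : a < b) (hbc : b < c)
    (hcd : c < d) : ({a, b, c, d} : Finset α).sort (· ≤ ·) = [a, b, c, d] := by
  have hnd : ([a, b, c, d] : List α).Nodup := by
    simp [List.nodup_cons, hab.ne, hbc.ne, hcd.ne, (hab.trans hbc).ne, (hbc.trans hcd).ne,
      (hab.trans (hbc.trans hcd)).ne]
  have h := (List.toFinset_sort (α := α) (· ≤ ·) hnd).2 ?_
  · simpa using h
  · simp [List.pairwise_cons, hab.le, hbc.le, hcd.le, (hab.trans hbc).le, (hbc.trans hcd).le,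
      (hab.trans (hbc.trans hcd)).le]

def nthL (A : Finset ℕ) (i : ℕ) : ℕ := (A.sort (· ≤ ·)).getD i 0

lemma pair_eq_pair' {β : Type} [DecidableEq β] {x y u v : β} (huv : u ≠ v)
    (h : ({x, y} : Finset β) = {u, v}) : (x = u ∧ y = v) ∨ (x = v ∧ y = u) := by
  have hx : x ∈ ({u, v} : Finset β) := h ▸ mem_insert_self x {y}
  have hy : y ∈ ({u, v} : Finset β) := h ▸ mem_insert_of_mem (mem_singleton_self y)
  have hu : u ∈ ({x, y} : Finset β) := h.symm ▸ mem_insert_self u {v}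
  have hv : v ∈ ({x, y} : Finset β) := h.symm ▸ mem_insert_of_mem (mem_singleton_self v)
  simp only [mem_insert, mem_singleton] at hx hy hu hv
  rcases hx with rfl | rfl
  · rcases hy with rfl | rfl
    · rcases hv with rfl | rfl
      · exact absurd rfl huv
      · exact absurd rfl huv
    · exact Or.inl ⟨rfl, rfl⟩
  · rcases hy with rfl | rfl
    · exact Or.inr ⟨rfl, rfl⟩
    · rcases hu with rfl | rfl
      · exact absurd rfl huv
      · exact absurd rfl huv

lemma block_inj {c a b r r' : ℕ} (hr : r < c) (hr' : r' < c)
    (h : c * a + r = c * b + r') : a = b ∧ r = r' := by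
  have hc : 0 < c := Nat.pos_of_ne_zero (by omega)
  have h1 : r + c * a = r' + c * b := by omega
  have h2 : (r + c * a) / c = (r' + c * b) / c := by rw [h1]
  rw [Nat.add_mul_div_left _ _ hc, Nat.add_mul_div_left _ _ hc,
    Nat.div_eq_of_lt hr, Nat.div_eq_of_lt hr'] at h2
  have hab : a = b := by omega
  subst hab
  exact ⟨rfl, by omega⟩

def HAdjP {V : Type} (G : SimpleGraph V) (W : Finset V)
    (Λ : ∀ x y : V, x ∈ W → y ∈ W → x ≠ y → G.Walk x y) (x y x' y' : V) : Prop :=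
  ∃ (hx : x ∈ W) (hy : y ∈ W) (hx' : x' ∈ W) (hy' : y' ∈ W) (hxy : x ≠ y) (hxy' : x' ≠ y'),
    ¬ Anticomplete G (walkInterior G (Λ x y hx hy hxy)) (walkInterior G (Λ x' y' hx' hy' hxy'))

lemma interior_comm {V : Type} {G : SimpleGraph V} {W : Finset V}
    {Λ : ∀ x y : V, x ∈ W → y ∈ W → x ≠ y → G.Walk x y} (hweb : IsWeb G W Λ)
    (x y : V) (hx : x ∈ W) (hy : y ∈ W) (hxy : x ≠ y) :
    walkInterior G (Λ y x hy hx hxy.symm) = walkInterior G (Λ x y hx hy hxy) := by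
  rw [hweb.symm x y hx hy hxy]
  unfold walkInterior
  ext v
  simp [SimpleGraph.Walk.support_reverse, Set.pair_comm (α := V) y x, or_comm]

lemma HAdjP_swap_left {V : Type} {G : SimpleGraph V} {W : Finset V}
    {Λ : ∀ x y : V, x ∈ W → y ∈ W → x ≠ y → G.Walk x y} (hweb : IsWeb G W Λ)
    {x y x' y' : V} (h : HAdjP G W Λ x y x' y') : HAdjP G W Λ y x x' y' := by
  obtain ⟨hx, hy, hx', hy', hxy, hxy', hA⟩ := h
  refine ⟨hy, hx, hx', hy', hxy.symm, hxy', fun hAc => hA ?_⟩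
  rwa [interior_comm hweb x y hx hy hxy] at hAc

lemma HAdjP_swap_right {V : Type} {G : SimpleGraph V} {W : Finset V}
    {Λ : ∀ x y : V, x ∈ W → y ∈ W → x ≠ y → G.Walk x y} (hweb : IsWeb G W Λ)
    {x y x' y' : V} (h : HAdjP G W Λ x y x' y') : HAdjP G W Λ x y y' x' := by
  obtain ⟨hx, hy, hx', hy', hxy, hxy', hA⟩ := h
  refine ⟨hx, hy, hy', hx', hxy, hxy'.symm, fun hAc => hA ?_⟩
  rwa [interior_comm hweb x' y' hx' hy' hxy'] at hAc

lemma fin4_slots : ∀ i j k l : Fin 4, i ≠ j → k ≠ l →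
    ({i, j} : Finset (Fin 4)) ≠ {k, l} → ((i ≠ k ∧ i ≠ l) ∨ (j ≠ k ∧ j ≠ l)) := by
  decide

end Statement3Aux

open Finset Statement3Aux

/-- **Lemma 2.3.** For all `c, s ∈ ℕ⁺` there is `σ = σ(c,s) ∈ ℕ⁺` such that for every
graph `G` and every `σ`-web `(W, Λ)` in `G`, one of the following holds:
(a) there are disjoint collections `𝓒, 𝓒'` of 2-subsets of `W`, each of size `c`, such
that `Λ*_{x,y}` and `Λ*_{x',y'}` are not anticomplete for every `{x,y} ∈ 𝓒` and
`{x',y'} ∈ 𝓒'`; (b) there is an `s`-subset `S ⊆ W` such that `Λ*_{x,y}` and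
`Λ*_{x',y'}` are anticomplete for all distinct 2-subsets `{x,y}, {x',y'}` of `S`. -/
theorem statement_3 (c s : ℕ) (hc : 0 < c) (hs : 0 < s) :
    ∃ σ : ℕ, 0 < σ ∧
      ∀ (V : Type) [Fintype V] [DecidableEq V] (G : SimpleGraph V) (W : Finset V)
        (Λ : ∀ x y : V, x ∈ W → y ∈ W → x ≠ y → G.Walk x y),
        IsWeb G W Λ → W.card = σ →
        -- (a)
        (∃ 𝓒 𝓒' : Finset (Finset V), Disjoint 𝓒 𝓒' ∧ 𝓒.card = c ∧ 𝓒'.card = c ∧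
          (∀ C ∈ 𝓒 ∪ 𝓒', C.card = 2 ∧ C ⊆ W) ∧
          (∀ C ∈ 𝓒, ∀ C' ∈ 𝓒',
            ∀ x y x' y' (hx : x ∈ W) (hy : y ∈ W) (hx' : x' ∈ W) (hy' : y' ∈ W)
              (hxy : x ≠ y) (hxy' : x' ≠ y'), C = {x, y} → C' = {x', y'} →
              ¬ Anticomplete G (walkInterior G (Λ x y hx hy hxy))
                  (walkInterior G (Λ x' y' hx' hy' hxy')))) ∨
        -- (b)
        (∃ S : Finset V, S ⊆ W ∧ S.card = s ∧
          (∀ x ∈ S, ∀ y ∈ S, ∀ x' ∈ S, ∀ y' ∈ S,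
            ∀ (hx : x ∈ W) (hy : y ∈ W) (hx' : x' ∈ W) (hy' : y' ∈ W)
              (hxy : x ≠ y) (hxy' : x' ≠ y'), ({x, y} : Set V) ≠ {x', y'} →
              Anticomplete G (walkInterior G (Λ x y hx hy hxy))
                (walkInterior G (Λ x' y' hx' hy' hxy')))) := by
  classical
  set n := s + 4 * c with hn
  obtain ⟨N, hN⟩ := myRamsey (Fin 4 → Fin 4 → Fin 4 → Fin 4 → Bool) 4 n
  have hσpos : 0 < max N 1 := lt_of_lt_of_le one_pos (le_max_right N 1)
  refine ⟨max N 1, hσpos, ?_⟩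
  intro V _ _ G W Λ hweb hWcard
  -- enumeration of W
  have e : Fin (max N 1) ≃ {x // x ∈ W} := (W.equivFin.trans (finCongr hWcard)).symm
  set v0 : ℕ → V := fun i => if h : i < max N 1 then (e ⟨i, h⟩ : V) else (e ⟨0, hσpos⟩ : V)
    with hv0def
  have hv0W : ∀ i, v0 i ∈ W := by
    intro i
    rw [hv0def]
    dsimp only
    split
    · exact (e _).2
    · exact (e _).2
  have hv0inj : ∀ i j, i < max N 1 → j < max N 1 → v0 i = v0 j → i = j := by
    intro i j hi hj h
    rw [hv0def] at h
    dsimp only at h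
    rw [dif_pos hi, dif_pos hj] at h
    have h2 := e.injective (Subtype.coe_injective h)
    exact congrArg Fin.val h2
  obtain ⟨U, hUr, hUcard, cstar, hhom⟩ := hN
    (fun A i j k l => decide (HAdjP G W Λ (v0 (nthL A i)) (v0 (nthL A j)) (v0 (nthL A k))
      (v0 (nthL A l))))
    (Finset.range (max N 1)) (by rw [Finset.card_range]; exact le_max_left _ _)
  set u : Fin n ↪o ℕ := U.orderEmbOfFin hUcard with hudef
  have humem : ∀ t, u t ∈ U := fun t => Finset.orderEmbOfFin_mem U hUcard t
  have hult : ∀ t : Fin n, u t < max N 1 := fun t => Finset.mem_range.1 (hUr (humem t))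
  set w : Fin n → V := fun t => v0 (u t) with hwdef
  have hwW : ∀ t, w t ∈ W := fun t => hv0W _
  have hwinj : Function.Injective w := fun t t' h =>
    u.injective (hv0inj _ _ (hult t) (hult t') h)
  -- key homogeneity fact
  have key : ∀ p : Fin 4 → Fin n, StrictMono p → ∀ i j k l : Fin 4,
      (cstar i j k l = true ↔ HAdjP G W Λ (w (p i)) (w (p j)) (w (p k)) (w (p l))) := by
    intro p hp i j k l
    have h01 : u (p 0) < u (p 1) := u.strictMono (hp (by decide))
    have h12 : u (p 1) < u (p 2) := u.strictMono (hp (by decide))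
    have h23 : u (p 2) < u (p 3) := u.strictMono (hp (by decide))
    have hsort := sort_quad h01 h12 h23
    have hAcard : ({u (p 0), u (p 1), u (p 2), u (p 3)} : Finset ℕ).card = 4 := by
      have hl := Finset.length_sort (α := ℕ) (· ≤ ·)
        (s := ({u (p 0), u (p 1), u (p 2), u (p 3)} : Finset ℕ))
      rw [hsort] at hl
      simpa using hl.symm
    have hAU : ({u (p 0), u (p 1), u (p 2), u (p 3)} : Finset ℕ) ⊆ U := by
      intro z hz
      simp only [Finset.mem_insert, Finset.mem_singleton] at hz
      rcases hz with rfl | rfl | rfl | rfl <;> exact humem _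
    have hCA := hhom _ hAU hAcard
    have hnth : ∀ t : Fin 4,
        nthL ({u (p 0), u (p 1), u (p 2), u (p 3)} : Finset ℕ) t = u (p t) := by
      intro t
      fin_cases t <;> simp [nthL, hsort]
    have hc2 := congrFun (congrFun (congrFun (congrFun hCA i) j) k) l
    rw [hnth i, hnth j, hnth k, hnth l] at hc2
    rw [← hc2]
    exact ⟨fun h => of_decide_eq_true h, fun h => decide_eq_true h⟩
  by_cases hEx : ∃ i j k l : Fin 4, i ≠ j ∧ k ≠ l ∧ ({i, j} : Finset (Fin 4)) ≠ {k, l} ∧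
      cstar i j k l = true
  · -- outcome (a)
    obtain ⟨i, j, k, l, hij, hkl, hijkl, htrue⟩ := hEx
    left
    have hblkb : ∀ (t : Fin 4) (r : Fin c), c * t.val + r.val < n := by
      intro t r
      have ht : t.val < 4 := t.isLt
      have hr : r.val < c := r.isLt
      have h1 : c * t.val + r.val < c * (t.val + 1) := by
        have : c * (t.val + 1) = c * t.val + c := by ring
        omega
      have h2 : c * (t.val + 1) ≤ c * 4 := Nat.mul_le_mul_left c (by omega)
      have h3 : c * 4 ≤ n := by omega
      omega
    set blk : Fin 4 → Fin c → Fin n := fun t r => ⟨c * t.val + r.val, hblkb t r⟩ with hblkdef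
    have hblkinj : ∀ t t' r r', blk t r = blk t' r' → t = t' ∧ r = r' := by
      intro t t' r r' h
      have hval : c * t.val + r.val = c * t'.val + r'.val := congrArg Fin.val h
      obtain ⟨h1, h2⟩ := block_inj r.isLt r'.isLt hval
      exact ⟨Fin.ext h1, Fin.ext h2⟩
    have hblkmono : ∀ (t t' : Fin 4) (r r' : Fin c), t < t' → blk t r < blk t' r' := by
      intro t t' r r' htt
      rw [Fin.lt_def]
      show c * t.val + r.val < c * t'.val + r'.val
      have h1 : c * (t.val + 1) = c * t.val + c := by ring
      have h2 : c * (t.val + 1) ≤ c * t'.val := Nat.mul_le_mul_left c (by omega)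
      have hr : r.val < c := r.isLt
      omega
    have hwblk : ∀ (t t' : Fin 4) (r r' : Fin c), w (blk t r) = w (blk t' r') →
        t = t' ∧ r = r' := fun t t' r r' h => hblkinj t t' r r' (hwinj h)
    set ee : Fin 4 → Fin c → Fin c := fun t r => if t = k ∨ t = l then ⟨0, hc⟩ else r
      with heedef
    set ef : Fin 4 → Fin c → Fin c := fun t r => if t = i ∨ t = j then ⟨0, hc⟩ else r
      with hefdef
    set eP : Fin c → Finset V := fun m => {w (blk i (ee i m)), w (blk j (ee j m))} with hePdef
    set fP : Fin c → Finset V := fun m => {w (blk k (ef k m)), w (blk l (ef l m))} with hfPdef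
    -- the cross-adjacency
    have hcross : ∀ m m' : Fin c, HAdjP G W Λ (w (blk i (ee i m))) (w (blk j (ee j m)))
        (w (blk k (ef k m'))) (w (blk l (ef l m'))) := by
      intro m m'
      set p : Fin 4 → Fin n := fun t => blk t (if t = k ∨ t = l then ef t m' else ee t m)
        with hpdef
      have hpmono : StrictMono p := fun t t' htt => hblkmono _ _ _ _ htt
      have hpi : p i = blk i (ee i m) := by
        rw [hpdef]
        dsimp only
        by_cases hik : i = k ∨ i = l
        · rw [if_pos hik]
          have h1 : ef i m' = ⟨0, hc⟩ := by rw [hefdef]; exact if_pos (Or.inl rfl)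
          have h2 : ee i m = ⟨0, hc⟩ := by rw [heedef]; exact if_pos hik
          rw [h1, h2]
        · rw [if_neg hik]
      have hpj : p j = blk j (ee j m) := by
        rw [hpdef]
        dsimp only
        by_cases hjk : j = k ∨ j = l
        · rw [if_pos hjk]
          have h1 : ef j m' = ⟨0, hc⟩ := by rw [hefdef]; exact if_pos (Or.inr rfl)
          have h2 : ee j m = ⟨0, hc⟩ := by rw [heedef]; exact if_pos hjk
          rw [h1, h2]
        · rw [if_neg hjk]
      have hpk : p k = blk k (ef k m') := by
        rw [hpdef]
        dsimp only
        rw [if_pos (Or.inl rfl)]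
      have hpl : p l = blk l (ef l m') := by
        rw [hpdef]
        dsimp only
        rw [if_pos (Or.inr rfl)]
      have h := (key p hpmono i j k l).1 htrue
      rwa [hpi, hpj, hpk, hpl] at h
    -- a slot in {i,j} not in {k,l}, or in {j} ...
    have hs0 := fin4_slots i j k l hij hkl hijkl
    -- distinctness facts
    have heP_ne_fP : ∀ m m', eP m ≠ fP m' := by
      intro m m' hEq
      rcases hs0 with ⟨h1, h2⟩ | ⟨h1, h2⟩
      · have hmem : w (blk i (ee i m)) ∈ fP m' := hEq ▸ mem_insert_self _ _
        rw [hfPdef] at hmem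
        simp only [mem_insert, mem_singleton] at hmem
        rcases hmem with h | h
        · exact h1 (hwblk _ _ _ _ h).1
        · exact h2 (hwblk _ _ _ _ h).1
      · have hmem : w (blk j (ee j m)) ∈ fP m' := hEq ▸ mem_insert_of_mem (mem_singleton_self _)
        rw [hfPdef] at hmem
        simp only [mem_insert, mem_singleton] at hmem
        rcases hmem with h | h
        · exact h1 (hwblk _ _ _ _ h).1
        · exact h2 (hwblk _ _ _ _ h).1
    have hePinj : Function.Injective eP := by
      intro m m' hEq
      rcases hs0 with ⟨h1, h2⟩ | ⟨h1, h2⟩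
      · have hee : ∀ r, ee i r = r := by
          intro r; rw [heedef]; exact if_neg (by tauto)
        have hmem : w (blk i (ee i m)) ∈ eP m' := hEq ▸ mem_insert_self _ _
        rw [hePdef] at hmem
        simp only [mem_insert, mem_singleton] at hmem
        rcases hmem with h | h
        · have := (hwblk _ _ _ _ h).2
          rwa [hee, hee] at this
        · exact absurd (hwblk _ _ _ _ h).1 hij
      · have hee : ∀ r, ee j r = r := by
          intro r; rw [heedef]; exact if_neg (by tauto)
        have hmem : w (blk j (ee j m)) ∈ eP m' := hEq ▸ mem_insert_of_mem (mem_singleton_self _)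
        rw [hePdef] at hmem
        simp only [mem_insert, mem_singleton] at hmem
        rcases hmem with h | h
        · exact absurd (hwblk _ _ _ _ h).1 (Ne.symm hij)
        · have := (hwblk _ _ _ _ h).2
          rwa [hee, hee] at this
    have hfPinj : Function.Injective fP := by
      intro m m' hEq
      have hs0' : (k ≠ i ∧ k ≠ j) ∨ (l ≠ i ∧ l ≠ j) :=
        fin4_slots k l i j hkl hij (fun h => hijkl h.symm)
      rcases hs0' with ⟨h1, h2⟩ | ⟨h1, h2⟩
      · have hef : ∀ r, ef k r = r := by
          intro r; rw [hefdef]; exact if_neg (by tauto)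
        have hmem : w (blk k (ef k m)) ∈ fP m' := hEq ▸ mem_insert_self _ _
        rw [hfPdef] at hmem
        simp only [mem_insert, mem_singleton] at hmem
        rcases hmem with h | h
        · have := (hwblk _ _ _ _ h).2
          rwa [hef, hef] at this
        · exact absurd (hwblk _ _ _ _ h).1 hkl
      · have hef : ∀ r, ef l r = r := by
          intro r; rw [hefdef]; exact if_neg (by tauto)
        have hmem : w (blk l (ef l m)) ∈ fP m' := hEq ▸ mem_insert_of_mem (mem_singleton_self _)
        rw [hfPdef] at hmem
        simp only [mem_insert, mem_singleton] at hmem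
        rcases hmem with h | h
        · exact absurd (hwblk _ _ _ _ h).1 (Ne.symm hkl)
        · have := (hwblk _ _ _ _ h).2
          rwa [hef, hef] at this
    have heP2 : ∀ m, w (blk i (ee i m)) ≠ w (blk j (ee j m)) :=
      fun m h => hij (hwblk _ _ _ _ h).1
    have hfP2 : ∀ m, w (blk k (ef k m)) ≠ w (blk l (ef l m)) :=
      fun m h => hkl (hwblk _ _ _ _ h).1
    refine ⟨Finset.image eP univ, Finset.image fP univ, ?_, ?_, ?_, ?_, ?_⟩
    · rw [Finset.disjoint_left]
      intro C hC hC'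
      obtain ⟨m, -, rfl⟩ := Finset.mem_image.1 hC
      obtain ⟨m', -, hEq⟩ := Finset.mem_image.1 hC'
      exact heP_ne_fP m m' hEq.symm
    · rw [Finset.card_image_of_injective _ hePinj, card_univ, Fintype.card_fin]
    · rw [Finset.card_image_of_injective _ hfPinj, card_univ, Fintype.card_fin]
    · intro C hC
      rcases Finset.mem_union.1 hC with h | h
      · obtain ⟨m, -, rfl⟩ := Finset.mem_image.1 h
        refine ⟨?_, ?_⟩
        · rw [hePdef]; exact Finset.card_pair (heP2 m)
        · rw [hePdef]
          intro z hz
          simp only [mem_insert, mem_singleton] at hz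
          rcases hz with rfl | rfl <;> exact hwW _
      · obtain ⟨m, -, rfl⟩ := Finset.mem_image.1 h
        refine ⟨?_, ?_⟩
        · rw [hfPdef]; exact Finset.card_pair (hfP2 m)
        · rw [hfPdef]
          intro z hz
          simp only [mem_insert, mem_singleton] at hz
          rcases hz with rfl | rfl <;> exact hwW _
    · intro C hC C' hC' x y x' y' hx hy hx' hy' hxy hxy' hCxy hC'xy
      obtain ⟨m, -, rfl⟩ := Finset.mem_image.1 hC
      obtain ⟨m', -, rfl⟩ := Finset.mem_image.1 hC'
      have hP := hcross m m'
      have hor1 := pair_eq_pair' (heP2 m) (hCxy.symm : ({x, y} : Finset V) = eP m)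
      have hor2 := pair_eq_pair' (hfP2 m') (hC'xy.symm : ({x', y'} : Finset V) = fP m')
      have hP1 : HAdjP G W Λ x y (w (blk k (ef k m'))) (w (blk l (ef l m'))) := by
        rcases hor1 with ⟨rfl, rfl⟩ | ⟨rfl, rfl⟩
        · exact hP
        · exact HAdjP_swap_left hweb hP
      have hP2 : HAdjP G W Λ x y x' y' := by
        rcases hor2 with ⟨rfl, rfl⟩ | ⟨rfl, rfl⟩
        · exact hP1
        · exact HAdjP_swap_right hweb hP1
      obtain ⟨hx2, hy2, hx'2, hy'2, hxy2, hxy'2, hA⟩ := hP2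
      exact hA
  · -- outcome (b)
    push_neg at hEx
    right
    have hsn : ∀ t : Fin s, (t : ℕ) < n := fun t => by have := t.isLt; omega
    set q : Fin s → Fin n := fun t => ⟨t.val, hsn t⟩ with hqdef
    have hq_inj : Function.Injective (fun t => w (q t)) := by
      intro t t' h
      have h2 := hwinj h
      have h3 : (q t).val = (q t').val := congrArg Fin.val h2
      exact Fin.ext h3
    refine ⟨Finset.image (fun t => w (q t)) univ, ?_, ?_, ?_⟩
    · intro z hz
      obtain ⟨t, -, rfl⟩ := Finset.mem_image.1 hz
      exact hwW _
    · rw [Finset.card_image_of_injective _ hq_inj, card_univ, Fintype.card_fin]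
    · intro x hxS y hyS x' hx'S y' hy'S hx hy hx' hy' hxy hxy' hne
      obtain ⟨ta, -, rfl⟩ := Finset.mem_image.1 hxS
      obtain ⟨tb, -, rfl⟩ := Finset.mem_image.1 hyS
      obtain ⟨ta', -, rfl⟩ := Finset.mem_image.1 hx'S
      obtain ⟨tb', -, rfl⟩ := Finset.mem_image.1 hy'S
      have hab : q ta ≠ q tb := fun h => hxy (congrArg w h)
      have ha'b' : q ta' ≠ q tb' := fun h => hxy' (congrArg w h)
      have hpairne : ({q ta, q tb} : Finset (Fin n)) ≠ {q ta', q tb'} := by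
        intro hEq
        rcases pair_eq_pair' ha'b' hEq with ⟨h1, h2⟩ | ⟨h1, h2⟩
        · exact hne (by rw [h1, h2])
        · exact hne (by rw [h1, h2, Set.pair_comm])
      set T0 : Finset (Fin n) := {q ta, q tb, q ta', q tb'} with hT0def
      have hT0card : T0.card ≤ 4 := by
        refine le_trans (card_insert_le _ _) (Nat.succ_le_succ ?_)
        refine le_trans (card_insert_le _ _) (Nat.succ_le_succ ?_)
        refine le_trans (card_insert_le _ _) (Nat.succ_le_succ ?_)
        simp
      obtain ⟨T, hT0T, hTcard⟩ := Finset.exists_superset_card_eq hT0card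
        (by rw [Fintype.card_fin]; omega)
      set φ : Fin 4 ↪o Fin n := T.orderEmbOfFin hTcard with hφdef
      have hsurj : ∀ z ∈ T, ∃ t : Fin 4, φ t = z := by
        intro z hz
        have h2 : z ∈ Set.range ⇑φ := by
          rw [hφdef, Finset.range_orderEmbOfFin]
          exact Finset.mem_coe.2 hz
        exact h2
      obtain ⟨ia, hia⟩ := hsurj (q ta) (hT0T (by simp [hT0def]))
      obtain ⟨ib, hib⟩ := hsurj (q tb) (hT0T (by simp [hT0def]))
      obtain ⟨ia', hia'⟩ := hsurj (q ta') (hT0T (by simp [hT0def]))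
      obtain ⟨ib', hib'⟩ := hsurj (q tb') (hT0T (by simp [hT0def]))
      have hiaib : ia ≠ ib := fun h => hab (by rw [← hia, ← hib, h])
      have hia'ib' : ia' ≠ ib' := fun h => ha'b' (by rw [← hia', ← hib', h])
      have hIJKL : ({ia, ib} : Finset (Fin 4)) ≠ {ia', ib'} := by
        intro hEq
        apply hpairne
        have h2 := congrArg (Finset.image ⇑φ) hEq
        rwa [Finset.image_insert, Finset.image_singleton, Finset.image_insert,
          Finset.image_singleton, hia, hib, hia', hib'] at h2
      have hkey := key φ φ.strictMono ia ib ia' ib'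
      rw [hia, hib, hia', hib'] at hkey
      have hnP : ¬ HAdjP G W Λ (w (q ta)) (w (q tb)) (w (q ta')) (w (q tb')) := by
        intro hP
        exact hEx ia ib ia' ib' hiaib hia'ib' hIJKL (hkey.2 hP)
      by_contra hA
      exact hnP ⟨hx, hy, hx', hy', hxy, hxy', hA⟩
end
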